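/- arXiv:1901.03983 — 9 statements merged into one kernel-verified Lean document; each statement's English description precedes it below -/
import Mathlib

section
/- Let m ≥ 1 and 0 ≤ i ≤ m−1 be integers, and let c_i = Σ_{j=0}^{i} 2^j · C(m+1, j) · (−1)^{i−j} · C(m+i−j, i−j) be the integer coefficient of x^i in the power series ((1+2x)/(1+x))^{m+1}. If i + α(m) ≥ m, then 2^{i+α(m)−m} divides c_i. (Equivalently, the 2-adic valuation of c_i is at least i + α(m) − m whenever c_i ≠ 0.) -/
private lemma alpha_two_mul_add_one (n : ℕ) :
    (Nat.digits 2 (2 * n + 1)).sum = (Nat.digits 2 n).sum + 1 := by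
  rw [Nat.digits_def' (by norm_num : 1 < 2) (by omega)]
  have h1 : (2 * n + 1) % 2 = 1 := by omega
  have h2 : (2 * n + 1) / 2 = n := by omega
  rw [h1, h2, List.sum_cons]
  omega

private lemma alpha_two_mul (n : ℕ) :
    (Nat.digits 2 (2 * n)).sum = (Nat.digits 2 n).sum := by
  rcases Nat.eq_zero_or_pos n with h | h
  · simp [h]
  · rw [Nat.digits_def' (by norm_num : 1 < 2) (by omega)]
    have h1 : (2 * n) % 2 = 0 := by omega
    have h2 : (2 * n) / 2 = n := by omega
    rw [h1, h2, List.sum_cons]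
    omega

private lemma alpha_succ_le : ∀ n : ℕ,
    (Nat.digits 2 (n + 1)).sum ≤ (Nat.digits 2 n).sum + 1 := by
  intro n
  induction n using Nat.strong_induction_on with
  | _ n ih =>
    rcases Nat.even_or_odd n with ⟨k, hk⟩ | ⟨k, hk⟩
    · have hn : n = 2 * k := by omega
      subst hn
      rw [alpha_two_mul_add_one, alpha_two_mul]
    · subst hk
      have h1 : 2 * k + 1 + 1 = 2 * (k + 1) := by ring
      rw [h1, alpha_two_mul, alpha_two_mul_add_one]
      rcases Nat.eq_zero_or_pos k with h | h
      · simp [h]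
      · have := ih k (by omega)
        omega

private lemma claimB : ∀ d t : ℕ,
    (Nat.digits 2 (2 * t + 1 + d)).sum ≤ (Nat.digits 2 t).sum + 1 + d := by
  intro d
  induction d with
  | zero => intro t; rw [Nat.add_zero, alpha_two_mul_add_one]
  | succ d ih =>
    intro t
    have h1 : 2 * t + 1 + (d + 1) = (2 * t + 1 + d) + 1 := by ring
    rw [h1]
    have := alpha_succ_le (2 * t + 1 + d)
    have := ih t
    omega

private lemma claimA {m t : ℕ} (h : t < m) :
    (Nat.digits 2 (m + t)).sum + t ≤ m + (Nat.digits 2 t).sum := by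
  have h1 : m + t = 2 * t + 1 + (m - t - 1) := by omega
  have := claimB (m - t - 1) t
  rw [h1]
  omega

/-- Proposition 4.5: the 2-adic divisibility of the coefficient of `x^i` in
`((1+2x)/(1+x))^(m+1)`. Here `α(m) = (Nat.digits 2 m).sum` is the number of
ones in the binary expansion of `m`. -/
theorem stmt_0 (m i : ℕ) (hm : 1 ≤ m) (hi : i ≤ m - 1)
    (h : m ≤ i + (Nat.digits 2 m).sum) :
    (2 : ℤ) ^ (i + (Nat.digits 2 m).sum - m) ∣
      ∑ j ∈ Finset.range (i + 1),
        (2 : ℤ) ^ j * ((m + 1).choose j : ℤ) * (-1) ^ (i - j) *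
          ((m + i - j).choose (i - j) : ℤ) := by
  haveI : Fact (Nat.Prime 2) := ⟨Nat.prime_two⟩
  apply Finset.dvd_sum
  intro j hj
  simp only [Finset.mem_range] at hj
  have hji : j ≤ i := by omega
  set t := i - j with ht
  have hti : m + i - j = m + t := by omega
  rw [hti]
  have hv2 := sub_one_mul_padicValNat_choose_eq_sub_sum_digits' (p := 2) (k := t) (n := m)
  norm_num at hv2
  have hA := claimA (m := m) (t := t) (by omega)
  have h1 := Nat.digit_sum_le 2 t
  have h2 := Nat.digit_sum_le 2 m
  have hkey : i + (Nat.digits 2 m).sum - m ≤ j + padicValNat 2 ((m + t).choose t) := by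
    omega
  have hd1 : (2 : ℤ) ^ padicValNat 2 ((m + t).choose t) ∣ ((m + t).choose t : ℤ) := by
    exact_mod_cast Int.natCast_dvd_natCast.mpr pow_padicValNat_dvd
  calc (2 : ℤ) ^ (i + (Nat.digits 2 m).sum - m)
      ∣ (2 : ℤ) ^ (j + padicValNat 2 ((m + t).choose t)) := pow_dvd_pow _ hkey
    _ ∣ 2 ^ j * ((m + 1).choose j : ℤ) * (-1) ^ (i - j) * ((m + t).choose t : ℤ) := by
        rw [pow_add]
        exact mul_dvd_mul
          ((dvd_mul_right _ _).trans (dvd_mul_right _ _)) hd1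
end

section
/- For all integers m ≥ 0 and i ≥ 1, Σ_{j=0}^{i} 2^j · C(m+1, j) · (−1)^{i−j} · C(m+i−j, i−j) = (−1)^i · Σ_{j=0}^{i} (−1)^j · C(m+1, j) · C(i−1, i−j). (The left side is the coefficient of x^i in ((1+2x)/(1+x))^{m+1}; the right side is (−1)^i times the coefficient of x^i in (1−x)^{m+1}(1+x)^{i−1}.) -/
open Finset

/-- Convolution of `(1+x)^p` with truncated `(1+x)^{-(q+1)}`:
`∑_t C(p,t)·(-1)^{k-t}·C(q+k-t, k-t) = (-1)^k C(q+k-p, k)` for `p ≤ q+1`. -/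
lemma lemL (q : ℕ) : ∀ p, p ≤ q + 1 → ∀ k : ℕ,
    ∑ t ∈ range (k + 1), (p.choose t : ℤ) * (-1) ^ (k - t) *
        ((q + k - t).choose (k - t) : ℤ)
      = (-1) ^ k * ((q + k - p).choose k : ℤ) := by
  intro p
  induction p with
  | zero =>
    intro _ k
    rw [Finset.sum_eq_single 0]
    · simp
    · intro t _ ht
      rcases Nat.exists_eq_succ_of_ne_zero ht with ⟨s, rfl⟩
      simp
    · intro h; simp at h
  | succ p ih =>
    intro hp k
    have hpq : p ≤ q := by omega
    obtain ⟨d, rfl⟩ := Nat.exists_eq_add_of_le hpq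
    have ihq : p ≤ p + d + 1 := by omega
    cases k with
    | zero => simp
    | succ k =>
      rw [Finset.sum_range_succ' (fun t => ((p+1).choose t : ℤ) * (-1) ^ (k + 1 - t) *
          (((p + d) + (k+1) - t).choose (k + 1 - t) : ℤ))]
      have split : ∀ s ∈ range (k + 1),
          ((p+1).choose (s+1) : ℤ) * (-1) ^ (k + 1 - (s+1)) *
            (((p + d) + (k+1) - (s+1)).choose (k + 1 - (s+1)) : ℤ)
          = (p.choose (s+1) : ℤ) * (-1) ^ (k + 1 - (s+1)) *
              (((p + d) + (k+1) - (s+1)).choose (k + 1 - (s+1)) : ℤ)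
            + (p.choose s : ℤ) * (-1) ^ (k - s) *
              (((p + d) + k - s).choose (k - s) : ℤ) := by
        intro s hs
        have h1 : (p+1).choose (s+1) = p.choose s + p.choose (s+1) :=
          Nat.choose_succ_succ p s
        have h2 : k + 1 - (s + 1) = k - s := by omega
        have h3 : (p + d) + (k + 1) - (s + 1) = (p + d) + k - s := by omega
        rw [h1, h2, h3]
        push_cast
        ring
      rw [Finset.sum_congr rfl split]
      have e1 : ∑ s ∈ range (k + 1),
          (p.choose (s+1) : ℤ) * (-1) ^ (k + 1 - (s+1)) *
            (((p + d) + (k+1) - (s+1)).choose (k + 1 - (s+1)) : ℤ)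
          + ((p+1).choose 0 : ℤ) * (-1) ^ (k + 1 - 0) *
            (((p + d) + (k+1) - 0).choose (k + 1 - 0) : ℤ)
          = ∑ t ∈ range (k + 2), (p.choose t : ℤ) * (-1) ^ (k + 1 - t) *
            (((p + d) + (k+1) - t).choose (k + 1 - t) : ℤ) := by
        rw [Finset.sum_range_succ' (fun t => (p.choose t : ℤ) * (-1) ^ (k + 1 - t) *
            (((p + d) + (k+1) - t).choose (k + 1 - t) : ℤ))]
        simp
      -- rearrange: total = e1-sum + second sum
      have := ih ihq (k + 1)
      have ihk := ih ihq k
      have eq2 : ((p + d) + (k + 1) - p) = d + (k + 1) := by omega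
      have eq3 : ((p + d) + k - p) = d + k := by omega
      rw [eq2] at this
      rw [eq3] at ihk
      calc ∑ s ∈ range (k + 1),
            ((p.choose (s+1) : ℤ) * (-1) ^ (k + 1 - (s+1)) *
              (((p + d) + (k+1) - (s+1)).choose (k + 1 - (s+1)) : ℤ)
            + (p.choose s : ℤ) * (-1) ^ (k - s) *
              (((p + d) + k - s).choose (k - s) : ℤ))
          + ((p+1).choose 0 : ℤ) * (-1) ^ (k + 1 - 0) *
            (((p + d) + (k+1) - 0).choose (k + 1 - 0) : ℤ)
          = (∑ s ∈ range (k + 1),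
              (p.choose (s+1) : ℤ) * (-1) ^ (k + 1 - (s+1)) *
                (((p + d) + (k+1) - (s+1)).choose (k + 1 - (s+1)) : ℤ)
            + ((p+1).choose 0 : ℤ) * (-1) ^ (k + 1 - 0) *
              (((p + d) + (k+1) - 0).choose (k + 1 - 0) : ℤ))
            + ∑ s ∈ range (k + 1), (p.choose s : ℤ) * (-1) ^ (k - s) *
              (((p + d) + k - s).choose (k - s) : ℤ) := by
            rw [Finset.sum_add_distrib]; ring
        _ = (-1) ^ (k+1) * ((d + (k+1)).choose (k+1) : ℤ)
            + (-1) ^ k * ((d + k).choose k : ℤ) := by rw [e1, this, ihk]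
        _ = (-1) ^ (k + 1) * (((p + d) + (k+1) - (p+1)).choose (k+1) : ℤ) := by
            have eq4 : (p + d) + (k + 1) - (p + 1) = d + k := by omega
            have eq5 : (d + (k + 1)).choose (k + 1)
                = (d + k).choose k + (d + k).choose (k + 1) := by
              have : d + (k + 1) = (d + k) + 1 := by omega
              rw [this]; exact Nat.choose_succ_succ (d + k) k
            rw [eq4, eq5]
            push_cast
            ring
      -- close: the sum after sum_add_distrib matches calc start
      
/-- Gould-type expansion of `2^j C(n,j)`. -/
lemma gould (n j : ℕ) : (2 : ℤ) ^ j * (n.choose j : ℤ)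
    = ∑ l ∈ range (j + 1), (n.choose l : ℤ) * ((n - l).choose (j - l) : ℤ) := by
  have h2 : (2 : ℤ) ^ j = ∑ l ∈ range (j + 1), (j.choose l : ℤ) := by
    exact_mod_cast (Nat.sum_range_choose j).symm
  rw [h2, Finset.sum_mul]
  apply Finset.sum_congr rfl
  intro l hl
  have hlj : l ≤ j := by simpa using Nat.lt_succ_iff.mp (Finset.mem_range.mp hl)
  by_cases hjn : j ≤ n
  · have := Nat.choose_mul (n := n) hlj
    have : (n.choose j : ℤ) * (j.choose l : ℤ) = (n.choose l : ℤ) * ((n - l).choose (j - l) : ℤ) := by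
      exact_mod_cast congrArg (Nat.cast : ℕ → ℤ) this
    linear_combination this
  · have hnj : n < j := by omega
    rw [Nat.choose_eq_zero_of_lt hnj]
    by_cases hln : l ≤ n
    · have : n - l < j - l := by omega
      rw [Nat.choose_eq_zero_of_lt this]
      simp
    · rw [Nat.choose_eq_zero_of_lt (by omega : n < l)]
      simp

/-- The coefficient manipulation in the proof of Proposition 4.5:
the coefficient of `x^i` in `((1+2x)/(1+x))^(m+1)` equals `(-1)^i` times the
coefficient of `x^i` in `(1-x)^(m+1) (1+x)^(i-1)`. -/
theorem stmt_2 (m i : ℕ) (hi : 1 ≤ i) :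
    ∑ j ∈ Finset.range (i + 1),
        (2 : ℤ) ^ j * ((m + 1).choose j : ℤ) * (-1) ^ (i - j) *
          ((m + i - j).choose (i - j) : ℤ)
      = (-1) ^ i * ∑ j ∈ Finset.range (i + 1),
          (-1) ^ j * ((m + 1).choose j : ℤ) * ((i - 1).choose (i - j) : ℤ) := by
  -- Expand 2^j C(m+1,j) by Gould's identity
  have step1 : ∑ j ∈ range (i + 1),
      (2 : ℤ) ^ j * ((m + 1).choose j : ℤ) * (-1) ^ (i - j) *
        ((m + i - j).choose (i - j) : ℤ)
      = ∑ j ∈ range (i + 1), ∑ l ∈ range (j + 1),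
          ((m + 1).choose l : ℤ) * ((m + 1 - l).choose (j - l) : ℤ) * (-1) ^ (i - j) *
            ((m + i - j).choose (i - j) : ℤ) := by
    apply Finset.sum_congr rfl
    intro j _
    rw [show (2 : ℤ) ^ j * ((m + 1).choose j : ℤ) * (-1) ^ (i - j) *
          ((m + i - j).choose (i - j) : ℤ)
        = ((2 : ℤ) ^ j * ((m + 1).choose j : ℤ)) * ((-1) ^ (i - j) *
          ((m + i - j).choose (i - j) : ℤ)) by ring, gould (m+1) j, Finset.sum_mul]
    apply Finset.sum_congr rfl
    intro l _
    ring
  rw [step1]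
  -- Swap the order of summation
  have swap : ∑ j ∈ range (i + 1), ∑ l ∈ range (j + 1),
      ((m + 1).choose l : ℤ) * ((m + 1 - l).choose (j - l) : ℤ) * (-1) ^ (i - j) *
        ((m + i - j).choose (i - j) : ℤ)
      = ∑ l ∈ range (i + 1), ∑ j ∈ Finset.Ico l (i + 1),
          ((m + 1).choose l : ℤ) * ((m + 1 - l).choose (j - l) : ℤ) * (-1) ^ (i - j) *
            ((m + i - j).choose (i - j) : ℤ) := by
    have := Finset.sum_Ico_Ico_comm 0 (i + 1) (fun l j =>
      ((m + 1).choose l : ℤ) * ((m + 1 - l).choose (j - l) : ℤ) * (-1) ^ (i - j) *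
        ((m + i - j).choose (i - j) : ℤ))
    simp only [Finset.range_eq_Ico] at *
    rw [this]
  rw [swap]
  -- Evaluate the inner sum using lemL
  rw [Finset.mul_sum]
  apply Finset.sum_congr rfl
  intro l hl
  have hli : l ≤ i := by
    have := Finset.mem_range.mp hl; omega
  by_cases hlm : l ≤ m + 1
  · -- reindex inner sum: j = l + t
    have reindex : ∑ j ∈ Finset.Ico l (i + 1),
        ((m + 1).choose l : ℤ) * ((m + 1 - l).choose (j - l) : ℤ) * (-1) ^ (i - j) *
          ((m + i - j).choose (i - j) : ℤ)
        = ((m + 1).choose l : ℤ) * ∑ t ∈ range ((i - l) + 1),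
            ((m + 1 - l).choose t : ℤ) * (-1) ^ ((i - l) - t) *
              ((m + (i - l) - t).choose ((i - l) - t) : ℤ) := by
      rw [Finset.mul_sum]
      rw [show Finset.Ico l (i + 1) = Finset.Ico l (l + ((i - l) + 1)) by congr 1; omega]
      rw [Finset.sum_Ico_eq_sum_range]
      rw [show l + (i - l + 1) - l = i - l + 1 from by omega]
      apply Finset.sum_congr rfl
      intro t ht
      have htl : t ≤ i - l := by
        have := Finset.mem_range.mp ht; omega
      have e1 : l + t - l = t := by omega
      rw [e1]
      have e2 : i - (l + t) = (i - l) - t := by omega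
      have e3 : m + i - (l + t) = m + (i - l) - t := by omega
      rw [e2, e3]
      ring
    rw [reindex]
    have hp : m + 1 - l ≤ m + 1 := by omega
    rw [lemL m (m + 1 - l) hp (i - l)]
    have e4 : m + (i - l) - (m + 1 - l) = i - 1 := by omega
    rw [e4]
    have e5 : (-1 : ℤ) ^ (i - l) = (-1) ^ i * (-1) ^ l := by
      have : (-1 : ℤ) ^ (i - l) * (-1) ^ l = (-1) ^ i := by
        rw [← pow_add]; congr 1; omega
      have h2 : ((-1 : ℤ) ^ l) * ((-1 : ℤ) ^ l) = 1 := by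
        rw [← pow_add, ← two_mul, pow_mul]; norm_num
      calc (-1 : ℤ) ^ (i - l) = (-1 : ℤ) ^ (i - l) * (((-1 : ℤ) ^ l) * ((-1 : ℤ) ^ l)) := by
            rw [h2, mul_one]
        _ = ((-1 : ℤ) ^ (i - l) * (-1) ^ l) * (-1) ^ l := by ring
        _ = (-1) ^ i * (-1) ^ l := by rw [this]
    have e6 : i - l = i - (i - (i - l)) := by omega
    rw [e5]
    ring
  · -- l > m+1 : both sides vanish
    have hz : (m + 1).choose l = 0 := Nat.choose_eq_zero_of_lt (by omega)
    simp [hz]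
end

section
/- For every even integer m ≥ 2, the exponent of 2 in the binomial coefficient C(2m−2, m−2) equals α(m) − 1, where α(m) is the number of ones in the binary expansion of m. -/
lemma s2_double (n : ℕ) (hn : 0 < n) :
    (Nat.digits 2 (2 * n)).sum = (Nat.digits 2 n).sum := by
  rw [Nat.digits_def' (by norm_num) (by omega)]
  simp [Nat.mul_div_cancel_left n (by norm_num : 0 < 2), Nat.mul_mod_right]

lemma s2_pos (n : ℕ) (hn : 0 < n) : 0 < (Nat.digits 2 n).sum := by
  by_contra h
  push_neg at h
  have hz : (Nat.digits 2 n).sum = 0 := by omega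
  have hall : ∀ d ∈ Nat.digits 2 n, d = 0 := by
    intro d hd
    have := List.single_le_sum (by intro x _; exact Nat.zero_le x) d hd
    omega
  have hlast := Nat.getLast_digit_ne_zero 2 (by omega : n ≠ 0)
  have hne : Nat.digits 2 n ≠ [] := Nat.digits_ne_nil_iff_ne_zero.mpr (by omega)
  exact hlast (hall _ (List.getLast_mem hne))

lemma s2_pred (n : ℕ) (hn : 0 < n) :
    (Nat.digits 2 (n - 1)).sum + 1 = (Nat.digits 2 n).sum + padicValNat 2 n := by
  induction n using Nat.strong_induction_on with
  | _ n ih =>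
    rcases Nat.even_or_odd n with he | ho
    · obtain ⟨k, hk⟩ := he
      have hk1 : 0 < k := by omega
      have hn2 : n = 2 * k := by omega
      have hv : padicValNat 2 n = padicValNat 2 k + 1 := by
        rw [hn2, padicValNat.mul (by norm_num) (by omega), padicValNat.self (by norm_num)]
        omega
      have hodd : n - 1 = 2 * (k - 1) + 1 := by omega
      have hs1 : (Nat.digits 2 (n - 1)).sum = (Nat.digits 2 (k - 1)).sum + 1 := by
        rw [hodd, Nat.digits_def' (by norm_num) (by omega)]
        have h1 : (2 * (k - 1) + 1) % 2 = 1 := by omega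
        have h2 : (2 * (k - 1) + 1) / 2 = k - 1 := by omega
        rw [h1, h2]; simp [Nat.add_comm]
      have := ih k (by omega) hk1
      rw [hs1, hn2, s2_double k hk1, ← hn2, hv]
      omega
    · obtain ⟨k, hk⟩ := ho
      have hv : padicValNat 2 n = 0 := by
        rw [padicValNat.eq_zero_iff]
        right; right
        omega
      have hs : (Nat.digits 2 n).sum = (Nat.digits 2 k).sum + 1 := by
        rw [hk, Nat.digits_def' (by norm_num) (by omega)]
        have h1 : (2 * k + 1) % 2 = 1 := by omega
        have h2 : (2 * k + 1) / 2 = k := by omega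
        rw [h1, h2]; simp [Nat.add_comm]
      have hs2 : (Nat.digits 2 (n - 1)).sum = (Nat.digits 2 k).sum := by
        rcases Nat.eq_zero_or_pos k with h0 | hkp
        · subst h0; simp [hk]
        · have : n - 1 = 2 * k := by omega
          rw [this, s2_double k hkp]
      omega

/-- For even `m ≥ 2`, the exponent of 2 in `C(2m-2, m-2)` equals `α(m) - 1`,
where `α(m) = (Nat.digits 2 m).sum` is the number of ones in the binary
expansion of `m`. -/
theorem stmt_4 (m : ℕ) (hm : 2 ≤ m) (hme : Even m) :
    padicValNat 2 ((2 * m - 2).choose (m - 2)) = (Nat.digits 2 m).sum - 1 := by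
  obtain ⟨n, hn⟩ := hme
  have hn1 : 1 ≤ n := by omega
  have hm2n : m = 2 * n := by omega
  haveI : Fact (Nat.Prime 2) := ⟨Nat.prime_two⟩
  have hkummer := sub_one_mul_padicValNat_choose_eq_sub_sum_digits (p := 2)
    (k := m - 2) (n := 2 * m - 2) (by omega)
  have hsub : 2 * m - 2 - (m - 2) = m := by omega
  rw [hsub] at hkummer
  simp only [show (2:ℕ) - 1 = 1 from rfl, one_mul] at hkummer
  -- compute the digit sums
  have h1 : (Nat.digits 2 (2 * m - 2)).sum = (Nat.digits 2 (2 * n - 1)).sum := by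
    have : 2 * m - 2 = 2 * (2 * n - 1) := by omega
    rw [this, s2_double _ (by omega)]
  have h2 : (Nat.digits 2 (2 * n - 1)).sum + 1 =
      (Nat.digits 2 (2 * n)).sum + padicValNat 2 (2 * n) := s2_pred _ (by omega)
  have h3 : (Nat.digits 2 m).sum = (Nat.digits 2 n).sum := by
    rw [hm2n, s2_double _ hn1]
  have h2n : (Nat.digits 2 (2 * n)).sum = (Nat.digits 2 n).sum := s2_double _ hn1
  have hv2n : padicValNat 2 (2 * n) = padicValNat 2 n + 1 := by
    rw [padicValNat.mul (by norm_num) (by omega), padicValNat.self (by norm_num)]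
    omega
  have hpos : 0 < (Nat.digits 2 n).sum := s2_pos n hn1
  rcases Nat.eq_or_lt_of_le hm with h2m | h2m
  · -- m = 2
    have : m = 2 := by omega
    subst this
    norm_num
  · -- m ≥ 3, even so m ≥ 4, n ≥ 2
    have hn2 : 2 ≤ n := by omega
    have h4 : (Nat.digits 2 (m - 2)).sum = (Nat.digits 2 (n - 1)).sum := by
      have : m - 2 = 2 * (n - 1) := by omega
      rw [this, s2_double _ (by omega)]
    have h5 : (Nat.digits 2 (n - 1)).sum + 1 =
        (Nat.digits 2 n).sum + padicValNat 2 n := s2_pred _ (by omega)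
    omega
end

section
/- Let n ≥ 5 and 1 ≤ k ≤ n−1 be integers, and let ℓ = (ℓ₁,…,ℓₙ) be given by ℓᵢ = 1 for 1 ≤ i ≤ k, ℓᵢ = 2 for k < i ≤ n−1, and ℓₙ = 2n−k−5. Then for a subset S ⊆ {1,…,n−1}, the set S ∪ {n} is short (i.e. Σ_{i∈S∪{n}} ℓᵢ < Σ_{i∉S∪{n}} ℓᵢ) if and only if S = ∅ or S = {i} for some i with 1 ≤ i ≤ k. -/
/-- For the length vector `ℓ = (1,…,1,2,…,2,2n-k-5)` (with `k` ones), a subset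
`S ⊆ {1,…,n-1}` has `S ∪ {n}` short if and only if `S = ∅` or `S = {i}` with
`1 ≤ i ≤ k`; i.e. the subgees are exactly `∅` and `{1},…,{k}`. -/
theorem stmt_9 (n k : ℕ) (hn : 5 ≤ n) (hk1 : 1 ≤ k) (hk2 : k ≤ n - 1)
    (ℓ : ℕ → ℝ)
    (hℓ1 : ∀ i, 1 ≤ i → i ≤ k → ℓ i = 1)
    (hℓ2 : ∀ i, k < i → i ≤ n - 1 → ℓ i = 2)
    (hℓ3 : ℓ n = 2 * n - k - 5) :
    ∀ S ⊆ Finset.Icc 1 (n - 1),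
      (∑ i ∈ insert n S, ℓ i < ∑ i ∈ Finset.Icc 1 n \ insert n S, ℓ i ↔
        S = ∅ ∨ ∃ i, 1 ≤ i ∧ i ≤ k ∧ S = {i}) := by
  intro S hS
  have hnS : n ∉ S := by
    intro h
    have := Finset.mem_Icc.mp (hS h)
    omega
  -- total sum over Icc 1 (n-1)
  have hsplit : Finset.Icc 1 (n - 1) = Finset.Icc 1 k ∪ Finset.Ioc k (n - 1) := by
    ext i
    simp only [Finset.mem_Icc, Finset.mem_union, Finset.mem_Ioc]
    omega
  have hdisj : Disjoint (Finset.Icc 1 k) (Finset.Ioc k (n - 1)) := by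
    rw [Finset.disjoint_left]
    intro a ha hb
    simp only [Finset.mem_Icc, Finset.mem_Ioc] at ha hb
    omega
  have hsum1 : ∑ i ∈ Finset.Icc 1 k, ℓ i = k := by
    rw [Finset.sum_congr rfl fun i hi =>
      hℓ1 i (Finset.mem_Icc.mp hi).1 (Finset.mem_Icc.mp hi).2]
    simp [Nat.card_Icc]
  have hcast1 : ((n - 1 : ℕ) : ℝ) = (n : ℝ) - 1 := by
    rw [Nat.cast_sub (by omega)]; simp
  have hsum2 : ∑ i ∈ Finset.Ioc k (n - 1), ℓ i = 2 * ((n : ℝ) - 1 - k) := by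
    rw [Finset.sum_congr rfl fun i hi =>
      hℓ2 i (Finset.mem_Ioc.mp hi).1 (Finset.mem_Ioc.mp hi).2]
    rw [Finset.sum_const, Nat.card_Ioc, nsmul_eq_mul, Nat.cast_sub hk2, hcast1]
    ring
  have hsumIcc : ∑ i ∈ Finset.Icc 1 (n - 1), ℓ i
      = (k : ℝ) + 2 * ((n : ℝ) - 1 - k) := by
    rw [hsplit, Finset.sum_union hdisj, hsum1, hsum2]
  have hIccn : Finset.Icc 1 n = insert n (Finset.Icc 1 (n - 1)) := by
    ext i
    simp only [Finset.mem_Icc, Finset.mem_insert]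
    omega
  have hnIcc : n ∉ Finset.Icc 1 (n - 1) := by
    simp only [Finset.mem_Icc]; omega
  have hsumtot : ∑ i ∈ Finset.Icc 1 n, ℓ i
      = ℓ n + ((k : ℝ) + 2 * ((n : ℝ) - 1 - k)) := by
    rw [hIccn, Finset.sum_insert hnIcc, hsumIcc]
  have hsub : insert n S ⊆ Finset.Icc 1 n := by
    rw [hIccn]
    exact Finset.insert_subset_insert _ hS
  have hsd : ∑ i ∈ Finset.Icc 1 n \ insert n S, ℓ i
      = ∑ i ∈ Finset.Icc 1 n, ℓ i - ∑ i ∈ insert n S, ℓ i :=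
    Finset.sum_sdiff_eq_sub hsub
  have hins : ∑ i ∈ insert n S, ℓ i = ℓ n + ∑ i ∈ S, ℓ i :=
    Finset.sum_insert hnS
  have hkey : (∑ i ∈ insert n S, ℓ i < ∑ i ∈ Finset.Icc 1 n \ insert n S, ℓ i)
      ↔ ∑ i ∈ S, ℓ i < 3 / 2 := by
    rw [hsd, hsumtot, hins, hℓ3]
    constructor <;> intro h <;> linarith
  rw [hkey]
  constructor
  · intro h
    have hge : ∀ i ∈ S, (1 : ℝ) ≤ ℓ i := by
      intro i hi
      have hi' := Finset.mem_Icc.mp (hS hi)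
      rcases le_or_gt i k with hik | hik
      · rw [hℓ1 i hi'.1 hik]
      · rw [hℓ2 i hik hi'.2]; norm_num
    have hcard : (S.card : ℝ) ≤ ∑ i ∈ S, ℓ i := by
      calc (S.card : ℝ) = ∑ _i ∈ S, (1 : ℝ) := by simp
        _ ≤ ∑ i ∈ S, ℓ i := Finset.sum_le_sum hge
    have hc1 : S.card ≤ 1 := by
      by_contra hc
      push_neg at hc
      have : (2 : ℝ) ≤ (S.card : ℝ) := by exact_mod_cast hc
      linarith
    interval_cases h' : S.card
    · left; exact Finset.card_eq_zero.mp h'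
    · right
      obtain ⟨i, hi⟩ := Finset.card_eq_one.mp h'
      have hiS : i ∈ S := by rw [hi]; exact Finset.mem_singleton_self i
      have hi' := Finset.mem_Icc.mp (hS hiS)
      refine ⟨i, hi'.1, ?_, hi⟩
      by_contra hik
      push_neg at hik
      rw [hi, Finset.sum_singleton, hℓ2 i hik hi'.2] at h
      linarith
  · rintro (rfl | ⟨i, hi1, hi2, rfl⟩)
    · simp
    · rw [Finset.sum_singleton, hℓ1 i hi1 hi2]
      norm_num
end

section
/- Let n ≥ 6 and 2 ≤ k ≤ n−1 be integers, and let ℓ = (ℓ₁,…,ℓₙ) be given by ℓ₁ = 1/2, ℓᵢ = 1 for 2 ≤ i ≤ k, ℓᵢ = 2 for k < i ≤ n−1, and ℓₙ = 2n−k−6. Then for a subset S ⊆ {1,…,n−1}, the set S ∪ {n} is short (i.e. Σ_{i∈S∪{n}} ℓᵢ < Σ_{i∉S∪{n}} ℓᵢ) if and only if S is one of: ∅, {1}, {i} for some 2 ≤ i ≤ k, or {1, i} for some 2 ≤ i ≤ k; equivalently, if and only if S ⊆ {1, i} for some i with 1 ≤ i ≤ k. -/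
/-- For the length vector `ℓ = (1/2,1,…,1,2,…,2,2n-k-6)` (with `k-1` ones),
a subset `S ⊆ {1,…,n-1}` has `S ∪ {n}` short if and only if `S` is one of
`∅`, `{1}`, `{i}` (`2 ≤ i ≤ k`), or `{1,i}` (`2 ≤ i ≤ k`); equivalently, iff
`S ⊆ {1,i}` for some `1 ≤ i ≤ k`. -/
theorem stmt_11 (n k : ℕ) (hn : 6 ≤ n) (hk1 : 2 ≤ k) (hk2 : k ≤ n - 1)
    (ℓ : ℕ → ℝ)
    (hℓ0 : ℓ 1 = 1 / 2)
    (hℓ1 : ∀ i, 2 ≤ i → i ≤ k → ℓ i = 1)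
    (hℓ2 : ∀ i, k < i → i ≤ n - 1 → ℓ i = 2)
    (hℓ3 : ℓ n = 2 * n - k - 6) :
    ∀ S ⊆ Finset.Icc 1 (n - 1),
      ((∑ i ∈ insert n S, ℓ i < ∑ i ∈ Finset.Icc 1 n \ insert n S, ℓ i ↔
          S = ∅ ∨ S = {1} ∨ (∃ i, 2 ≤ i ∧ i ≤ k ∧ S = {i}) ∨
            (∃ i, 2 ≤ i ∧ i ≤ k ∧ S = {1, i})) ∧
        (∑ i ∈ insert n S, ℓ i < ∑ i ∈ Finset.Icc 1 n \ insert n S, ℓ i ↔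
          ∃ i, 1 ≤ i ∧ i ≤ k ∧ S ⊆ {1, i})) := by
  intro S hS
  have hkn : k + 1 ≤ n := by omega
  -- total sum
  have htot : ∑ i ∈ Finset.Icc 1 n, ℓ i = 4 * n - 2 * k - 17/2 := by
    have e0 : Finset.Icc 1 n = Finset.Ioc 0 n := by
      ext x; simp [Finset.mem_Icc, Finset.mem_Ioc]; omega
    rw [e0,
      ← Finset.sum_Ioc_consecutive ℓ (by omega : (0:ℕ) ≤ n - 1) (by omega : n - 1 ≤ n),
      ← Finset.sum_Ioc_consecutive ℓ (by omega : (0:ℕ) ≤ k) (by omega : k ≤ n - 1),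
      ← Finset.sum_Ioc_consecutive ℓ (by omega : (0:ℕ) ≤ 1) (by omega : 1 ≤ k)]
    have e1 : Finset.Ioc 0 1 = {1} := rfl
    have e2 : ∑ i ∈ Finset.Ioc 1 k, ℓ i = (k : ℝ) - 1 := by
      have h' : ∑ i ∈ Finset.Ioc 1 k, ℓ i = ∑ _i ∈ Finset.Ioc 1 k, (1:ℝ) :=
        Finset.sum_congr rfl (fun i hi => by rw [Finset.mem_Ioc] at hi; exact hℓ1 i (by omega) hi.2)
      rw [h', Finset.sum_const, Nat.card_Ioc, nsmul_eq_mul,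
        Nat.cast_sub (by omega : 1 ≤ k)]
      push_cast; ring
    have e3 : ∑ i ∈ Finset.Ioc k (n-1), ℓ i = 2 * ((n : ℝ) - 1 - k) := by
      have h' : ∑ i ∈ Finset.Ioc k (n-1), ℓ i = ∑ _i ∈ Finset.Ioc k (n-1), (2:ℝ) :=
        Finset.sum_congr rfl (fun i hi => by rw [Finset.mem_Ioc] at hi; exact hℓ2 i hi.1 hi.2)
      rw [h', Finset.sum_const, Nat.card_Ioc, nsmul_eq_mul,
        Nat.cast_sub (by omega : k ≤ n - 1), Nat.cast_sub (by omega : 1 ≤ n)]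
      push_cast; ring
    have e4 : Finset.Ioc (n-1) n = {n} := by
      ext x; simp [Finset.mem_Ioc]; omega
    rw [e1, e2, e3, e4, Finset.sum_singleton, Finset.sum_singleton, hℓ0, hℓ3]
    ring
  have hnS : n ∉ S := fun h => by
    have := hS h; rw [Finset.mem_Icc] at this; omega
  have hsub : insert n S ⊆ Finset.Icc 1 n := by
    intro x hx
    rcases Finset.mem_insert.mp hx with h | h
    · subst h; rw [Finset.mem_Icc]; omega
    · have := hS h; rw [Finset.mem_Icc] at this ⊢; omega
  -- key reduction
  have hkey : (∑ i ∈ insert n S, ℓ i < ∑ i ∈ Finset.Icc 1 n \ insert n S, ℓ i) ↔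
      ∑ i ∈ S, ℓ i < 7/4 := by
    rw [Finset.sum_sdiff_eq_sub hsub, htot, Finset.sum_insert hnS, hℓ3]
    constructor <;> intro h <;> linarith
  -- values on S
  have hval : ∀ i ∈ S, (i = 1 ∧ ℓ i = 1/2) ∨ (2 ≤ i ∧ i ≤ k ∧ ℓ i = 1) ∨ (k < i ∧ ℓ i = 2) := by
    intro i hi
    have hm := hS hi; rw [Finset.mem_Icc] at hm
    by_cases h1 : i = 1
    · exact Or.inl ⟨h1, by rw [h1, hℓ0]⟩
    · by_cases h2 : i ≤ k
      · exact Or.inr (Or.inl ⟨by omega, h2, hℓ1 i (by omega) h2⟩)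
      · exact Or.inr (Or.inr ⟨by omega, hℓ2 i (by omega) hm.2⟩)
  have hnn : ∀ i ∈ S, 0 ≤ ℓ i := by
    intro i hi
    rcases hval i hi with ⟨_, h⟩ | ⟨_, _, h⟩ | ⟨_, h⟩ <;> rw [h] <;> norm_num
  -- forward characterization
  have hfwd : ∑ i ∈ S, ℓ i < 7/4 →
      S = ∅ ∨ S = {1} ∨ (∃ i, 2 ≤ i ∧ i ≤ k ∧ S = {i}) ∨
        (∃ i, 2 ≤ i ∧ i ≤ k ∧ S = {1, i}) := by
    intro hs
    have hcard : (S.erase 1).card ≤ 1 := by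
      by_contra h
      have h2 : 1 < (S.erase 1).card := by omega
      obtain ⟨a, ha, b, hb, hab⟩ := Finset.one_lt_card.mp h2
      have haS := Finset.mem_of_mem_erase ha
      have hbS := Finset.mem_of_mem_erase hb
      have ha1 : a ≠ 1 := Finset.ne_of_mem_erase ha
      have hb1 : b ≠ 1 := Finset.ne_of_mem_erase hb
      have hla : 1 ≤ ℓ a := by
        rcases hval a haS with ⟨h, _⟩ | ⟨_, _, h⟩ | ⟨_, h⟩ <;> first | exact absurd h ha1 | simp [h]
      have hlb : 1 ≤ ℓ b := by
        rcases hval b hbS with ⟨h, _⟩ | ⟨_, _, h⟩ | ⟨_, h⟩ <;> first | exact absurd h hb1 | simp [h]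
      have hsub2 : ({a, b} : Finset ℕ) ⊆ S := by
        intro x hx; rcases Finset.mem_insert.mp hx with h | h
        · subst h; exact haS
        · rw [Finset.mem_singleton] at h; subst h; exact hbS
      have := Finset.sum_le_sum_of_subset_of_nonneg hsub2 (fun i hi _ => hnn i hi)
      rw [Finset.sum_pair hab] at this
      linarith
    rcases Nat.le_one_iff_eq_zero_or_eq_one.mp hcard with h | h
    · -- S ⊆ {1}
      have : S ⊆ {1} := by
        intro x hx
        by_contra hx1
        have : x ∈ S.erase 1 := Finset.mem_erase.mpr ⟨fun h => hx1 (Finset.mem_singleton.mpr h), hx⟩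
        rw [Finset.card_eq_zero.mp h] at this
        exact absurd this (Finset.notMem_empty x)
      rcases Finset.subset_singleton_iff.mp this with h | h
      · exact Or.inl h
      · exact Or.inr (Or.inl h)
    · obtain ⟨j, hj⟩ := Finset.card_eq_one.mp h
      have hjE : j ∈ S.erase 1 := by rw [hj]; exact Finset.mem_singleton_self j
      have hjS : j ∈ S := Finset.mem_of_mem_erase hjE
      have hj1 : j ≠ 1 := Finset.ne_of_mem_erase hjE
      have hjk : 2 ≤ j ∧ j ≤ k := by
        rcases hval j hjS with ⟨h', _⟩ | ⟨h1, h2, _⟩ | ⟨_, h'⟩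
        · exact absurd h' hj1
        · exact ⟨h1, h2⟩
        · exfalso
          have := Finset.single_le_sum (fun i hi => hnn i hi) hjS
          rw [h'] at this; linarith
      by_cases h1S : 1 ∈ S
      · refine Or.inr (Or.inr (Or.inr ⟨j, hjk.1, hjk.2, ?_⟩))
        rw [← Finset.insert_erase h1S, hj]
      · refine Or.inr (Or.inr (Or.inl ⟨j, hjk.1, hjk.2, ?_⟩))
        rw [← hj, Finset.erase_eq_self.mpr h1S]
  -- backward: each case has small sum
  have hbwd : (S = ∅ ∨ S = {1} ∨ (∃ i, 2 ≤ i ∧ i ≤ k ∧ S = {i}) ∨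
      (∃ i, 2 ≤ i ∧ i ≤ k ∧ S = {1, i})) → ∑ i ∈ S, ℓ i < 7/4 := by
    rintro (rfl | rfl | ⟨i, hi1, hi2, rfl⟩ | ⟨i, hi1, hi2, rfl⟩)
    · simp
    · rw [Finset.sum_singleton, hℓ0]; norm_num
    · rw [Finset.sum_singleton, hℓ1 i hi1 hi2]; norm_num
    · rw [Finset.sum_pair (by omega : (1:ℕ) ≠ i), hℓ0, hℓ1 i hi1 hi2]; norm_num
  constructor
  · rw [hkey]; exact ⟨hfwd, hbwd⟩
  · rw [hkey]
    constructor
    · intro hs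
      rcases hfwd hs with rfl | rfl | ⟨i, hi1, hi2, rfl⟩ | ⟨i, hi1, hi2, rfl⟩
      · exact ⟨1, le_rfl, by omega, Finset.empty_subset _⟩
      · exact ⟨1, le_rfl, by omega, by simp⟩
      · exact ⟨i, by omega, hi2, by simp⟩
      · exact ⟨i, by omega, hi2, subset_rfl⟩
    · rintro ⟨i, hi1, hi2, hSsub⟩
      have hli : 0 ≤ ℓ i := by
        by_cases h : i = 1
        · rw [h, hℓ0]; norm_num
        · rw [hℓ1 i (by omega) hi2]; norm_num
      have hsum12 : ∑ j ∈ ({1, i} : Finset ℕ), ℓ j ≤ 3/2 := by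
        by_cases h : i = 1
        · subst h; norm_num [hℓ0]
        · rw [Finset.sum_pair (by omega : (1:ℕ) ≠ i), hℓ0, hℓ1 i (by omega) hi2]
          norm_num
      have hnn12 : ∀ j ∈ ({1, i} : Finset ℕ), 0 ≤ ℓ j := by
        intro j hj
        rcases Finset.mem_insert.mp hj with h | h
        · rw [h, hℓ0]; norm_num
        · rw [Finset.mem_singleton.mp h]; exact hli
      have hle := Finset.sum_le_sum_of_subset_of_nonneg hSsub (fun j hj _ => hnn12 j hj)
      linarith
end

section
/- Let m ≥ 2 and k ≥ 1 be integers. Let A be the quotient of the polynomial ring ℤ[R, V₁,…,V_k] by the ideal generated by: (i) V_iV_j for all 1 ≤ i < j ≤ k; (ii) V_i² + RV_i for all 1 ≤ i ≤ k; and (iii) for each 1 ≤ i ≤ k, the element R^m + Σ_{1≤j≤k, j≠i} R^{m−1}V_j. Then A is a free abelian group with basis {1} ∪ {R^j : 1 ≤ j ≤ m−1} ∪ {V_i^j : 1 ≤ i ≤ k, 1 ≤ j ≤ m−1} ∪ {V_1^m}, and in A the following identities hold: V_1^m = V_2^m = ⋯ = V_k^m, R^m = (−1)^m (k−1) V_1^m,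 and R^{m+1} = 0 = V_i^{m+1} for all i. -/
open MvPolynomial

set_option synthInstance.maxHeartbeats 1000000
set_option maxHeartbeats 1000000

namespace Stmt12

variable (m k : ℕ)

abbrev B := {p : Fin (k + 1) × ℕ //
  (p.1 = 0 ∧ p.2 ≤ m - 1) ∨
  (1 ≤ (p.1 : ℕ) ∧ 1 ≤ p.2 ∧ p.2 ≤ m - 1) ∨
  ((p.1 : ℕ) = 1 ∧ p.2 = m)}

variable {k} in
lemma val_one (hk : 1 ≤ k) : ((1 : Fin (k + 1)) : ℕ) = 1 := by
  have h : (1 : ℕ) < k + 1 := by omega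
  simp [Fin.val_one', Nat.mod_eq_of_lt h]

variable {k} in
lemma ne_zero_of_le {x : Fin (k + 1)} (h : 1 ≤ (x : ℕ)) : x ≠ 0 := by
  intro he; subst he; simp at h

def eW (hk : 1 ≤ k) : B m k := ⟨((1 : Fin (k + 1)), m), Or.inr (Or.inr ⟨val_one hk, rfl⟩)⟩

noncomputable def W (hk : 1 ≤ k) (i : Fin (k + 1)) (hi : 1 ≤ (i : ℕ)) (d : ℕ) : B m k →₀ ℤ :=
  if h : 1 ≤ d ∧ d ≤ m - 1 then
    Finsupp.single ⟨(i, d), Or.inr (Or.inl ⟨hi, h.1, h.2⟩)⟩ 1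
  else if d = m then Finsupp.single (eW m k hk) 1
  else 0

lemma W_lt (hk : 1 ≤ k) (i : Fin (k + 1)) (hi : 1 ≤ (i : ℕ)) (d : ℕ) (h1 : 1 ≤ d)
    (h2 : d ≤ m - 1) :
    W m k hk i hi d = Finsupp.single ⟨(i, d), Or.inr (Or.inl ⟨hi, h1, h2⟩)⟩ 1 := by
  rw [W, dif_pos ⟨h1, h2⟩]

lemma W_m (hm : 2 ≤ m) (hk : 1 ≤ k) (i : Fin (k + 1)) (hi : 1 ≤ (i : ℕ)) :
    W m k hk i hi m = Finsupp.single (eW m k hk) 1 := by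
  rw [W, dif_neg (by omega), if_pos rfl]

lemma W_big (hk : 1 ≤ k) (i : Fin (k + 1)) (hi : 1 ≤ (i : ℕ)) (d : ℕ) (hd : m + 1 ≤ d) :
    W m k hk i hi d = 0 := by
  rw [W, dif_neg (by omega), if_neg (by omega)]

noncomputable def Rp (hk : 1 ≤ k) (a : ℕ) : B m k →₀ ℤ :=
  if h : a ≤ m - 1 then Finsupp.single ⟨((0 : Fin (k + 1)), a), Or.inl ⟨rfl, h⟩⟩ 1
  else if a = m then ((-1) ^ m * ((k : ℤ) - 1)) • Finsupp.single (eW m k hk) 1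
  else 0

lemma Rp_lt (hk : 1 ≤ k) (a : ℕ) (h : a ≤ m - 1) :
    Rp m k hk a = Finsupp.single ⟨((0 : Fin (k + 1)), a), Or.inl ⟨rfl, h⟩⟩ 1 := by
  rw [Rp, dif_pos h]

lemma Rp_m (hm : 2 ≤ m) (hk : 1 ≤ k) :
    Rp m k hk m = ((-1) ^ m * ((k : ℤ) - 1)) • Finsupp.single (eW m k hk) 1 := by
  rw [Rp, dif_neg (by omega), if_pos rfl]

lemma Rp_big (hk : 1 ≤ k) (a : ℕ) (ha : m + 1 ≤ a) : Rp m k hk a = 0 := by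
  rw [Rp, dif_neg (by omega), if_neg (by omega)]

def TwoV (μ : Fin (k + 1) →₀ ℕ) : Prop :=
  ∃ i j : Fin (k + 1), 1 ≤ (i : ℕ) ∧ 1 ≤ (j : ℕ) ∧ i ≠ j ∧ μ i ≠ 0 ∧ μ j ≠ 0

variable {k} in
lemma TwoV.mono {μ ν : Fin (k + 1) →₀ ℕ} (h : TwoV k μ) : TwoV k (μ + ν) := by
  obtain ⟨i, j, hi, hj, hij, hμi, hμj⟩ := h
  exact ⟨i, j, hi, hj, hij, by simp [Finsupp.add_apply]; omega, by simp [Finsupp.add_apply]; omega⟩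

variable {k} in
lemma not_twoV_oneV {i : Fin (k + 1)} (hi : 1 ≤ (i : ℕ)) (a b : ℕ) :
    ¬ TwoV k (Finsupp.single 0 a + Finsupp.single i b) := by
  rintro ⟨x, y, hx, hy, hxy, hμx, hμy⟩
  have hx0 : (0 : Fin (k + 1)) ≠ x := fun h => ne_zero_of_le hx h.symm
  have hy0 : (0 : Fin (k + 1)) ≠ y := fun h => ne_zero_of_le hy h.symm
  have hxi : x = i := by
    by_contra hne
    exact hμx (by simp [Finsupp.add_apply, Finsupp.single_eq_of_ne' hx0,
      Finsupp.single_eq_of_ne' (Ne.symm hne)])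
  have hyi : y = i := by
    by_contra hne
    exact hμy (by simp [Finsupp.add_apply, Finsupp.single_eq_of_ne' hy0,
      Finsupp.single_eq_of_ne' (Ne.symm hne)])
  exact hxy (hxi.trans hyi.symm)

variable {k} in
lemma not_twoV_R (a : ℕ) : ¬ TwoV k (Finsupp.single 0 a) := by
  rintro ⟨x, y, hx, hy, hxy, hμx, hμy⟩
  exact hμx (Finsupp.single_eq_of_ne' (fun h => ne_zero_of_le hx h.symm))

open scoped Classical in
noncomputable def NF (hk : 1 ≤ k) (μ : Fin (k + 1) →₀ ℕ) : B m k →₀ ℤ :=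
  if TwoV k μ then 0
  else if ∀ i : Fin (k + 1), 1 ≤ (i : ℕ) → μ i = 0 then Rp m k hk (μ 0)
  else ∑ i : Fin (k + 1), if hi : 1 ≤ (i : ℕ) ∧ μ i ≠ 0 then
    ((-1 : ℤ)) ^ (μ 0) • W m k hk i hi.1 (μ 0 + μ i) else 0

lemma NF_twoV (hk : 1 ≤ k) {μ : Fin (k + 1) →₀ ℕ} (h : TwoV k μ) : NF m k hk μ = 0 := by
  rw [NF, if_pos h]

lemma NF_R (hk : 1 ≤ k) (a : ℕ) : NF m k hk (Finsupp.single 0 a) = Rp m k hk a := by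
  rw [NF, if_neg (not_twoV_R a), if_pos, Finsupp.single_eq_same]
  intro i hi
  exact Finsupp.single_eq_of_ne' (fun h => ne_zero_of_le hi h.symm)

lemma NF_V (hk : 1 ≤ k) {i : Fin (k + 1)} (hi : 1 ≤ (i : ℕ)) (a b : ℕ) (hb : b ≠ 0) :
    NF m k hk (Finsupp.single 0 a + Finsupp.single i b)
      = (-1 : ℤ) ^ a • W m k hk i hi (a + b) := by
  have hi0 : (0 : Fin (k + 1)) ≠ i := fun h => ne_zero_of_le hi h.symm
  have hμ0 : (Finsupp.single 0 a + Finsupp.single i b : Fin (k + 1) →₀ ℕ) 0 = a := by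
    simp [Finsupp.add_apply, Finsupp.single_eq_of_ne' (Ne.symm hi0)]
  have hμi : (Finsupp.single 0 a + Finsupp.single i b : Fin (k + 1) →₀ ℕ) i = b := by
    simp [Finsupp.add_apply, Finsupp.single_eq_of_ne' hi0]
  rw [NF, if_neg (not_twoV_oneV hi a b), if_neg (fun h => hb (by rw [← hμi]; exact h i hi))]
  rw [Finset.sum_eq_single_of_mem i (Finset.mem_univ i)]
  · rw [dif_pos ⟨hi, by rw [hμi]; exact hb⟩]
    simp only [hμ0, hμi]
  · intro j _ hji
    rw [dif_neg]
    rintro ⟨hj1, hjv⟩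
    exact hjv (by simp [Finsupp.add_apply,
      Finsupp.single_eq_of_ne' (fun h => ne_zero_of_le hj1 h.symm),
      Finsupp.single_eq_of_ne' (Ne.symm hji)])

variable {k} in
lemma one_le_val_of_ne {j : Fin (k + 1)} (h : j ≠ 0) : 1 ≤ (j : ℕ) :=
  Nat.one_le_iff_ne_zero.mpr (fun hv => h (by apply Fin.ext; simp [hv]))

lemma classify (μ : Fin (k + 1) →₀ ℕ) :
    TwoV k μ ∨
    (∃ (i : Fin (k + 1)) (a b : ℕ), 1 ≤ (i : ℕ) ∧ b ≠ 0 ∧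
      μ = Finsupp.single 0 a + Finsupp.single i b) ∨
    (∃ a, μ = Finsupp.single 0 a) := by
  by_cases h2 : TwoV k μ
  · exact Or.inl h2
  by_cases h0 : ∀ i : Fin (k + 1), 1 ≤ (i : ℕ) → μ i = 0
  · refine Or.inr (Or.inr ⟨μ 0, ?_⟩)
    ext j
    rcases eq_or_ne j 0 with rfl | hj
    · simp
    · rw [h0 j (one_le_val_of_ne hj), Finsupp.single_eq_of_ne' (Ne.symm hj)]
  · push_neg at h0
    obtain ⟨i, hi1, hiv⟩ := h0
    have hi0 : (0 : Fin (k + 1)) ≠ i := fun h => ne_zero_of_le hi1 h.symm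
    refine Or.inr (Or.inl ⟨i, μ 0, μ i, hi1, hiv, ?_⟩)
    ext j
    rcases eq_or_ne j 0 with rfl | hj0
    · simp [Finsupp.single_eq_of_ne' hi0, Finsupp.single_eq_of_ne' hi0.symm]
    rcases eq_or_ne j i with rfl | hji
    · simp [Finsupp.single_eq_of_ne' hi0]
    · have hμj : μ j = 0 := by
        by_contra hc
        exact h2 ⟨i, j, hi1, one_le_val_of_ne hj0, fun h => hji (h.symm), hiv, hc⟩
      simp [hμj, Finsupp.single_eq_of_ne' (Ne.symm hj0), Finsupp.single_eq_of_ne' (Ne.symm hji)]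



noncomputable def phi (hk : 1 ≤ k) : MvPolynomial (Fin (k + 1)) ℤ →ₗ[ℤ] (B m k →₀ ℤ) :=
  (basisMonomials (Fin (k + 1)) ℤ).constr ℕ (NF m k hk)

lemma phi_monomial (hk : 1 ≤ k) (μ : Fin (k + 1) →₀ ℕ) :
    phi m k hk (monomial μ 1) = NF m k hk μ := by
  have h := (basisMonomials (Fin (k + 1)) ℤ).constr_basis ℕ (NF m k hk) μ
  simpa [phi, coe_basisMonomials] using h

lemma mono_mul (μ ν : Fin (k + 1) →₀ ℕ) :
    (monomial μ 1 : MvPolynomial (Fin (k + 1)) ℤ) * monomial ν 1 = monomial (μ + ν) 1 := by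
  rw [monomial_mul, mul_one]

lemma X_eq_mono (i : Fin (k + 1)) :
    (X i : MvPolynomial (Fin (k + 1)) ℤ) = monomial (Finsupp.single i 1) 1 := by
  rw [← pow_one (X i), X_pow_eq_monomial]

lemma phi_mul_g1 (hk : 1 ≤ k) (i j : Fin (k + 1)) (hi : 1 ≤ (i : ℕ)) (hij : (i : ℕ) < (j : ℕ))
    (μ : Fin (k + 1) →₀ ℕ) : phi m k hk (monomial μ 1 * (X i * X j)) = 0 := by
  have hj : 1 ≤ (j : ℕ) := by omega
  have hne : i ≠ j := fun h => by simp [h] at hij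
  rw [X_eq_mono, X_eq_mono, mono_mul, mono_mul, phi_monomial, NF_twoV]
  refine ⟨i, j, hi, hj, hne, ?_, ?_⟩
  · simp [Finsupp.add_apply, Finsupp.single_eq_of_ne hne.symm]
  · simp [Finsupp.add_apply, Finsupp.single_eq_of_ne hne]

lemma phi_mul_g2 (hm : 2 ≤ m) (hk : 1 ≤ k) (i : Fin (k + 1)) (hi : 1 ≤ (i : ℕ))
    (μ : Fin (k + 1) →₀ ℕ) : phi m k hk (monomial μ 1 * (X i ^ 2 + X 0 * X i)) = 0 := by
  have hi0 : (0 : Fin (k + 1)) ≠ i := fun h => ne_zero_of_le hi h.symm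
  have e1 : (monomial μ 1 : MvPolynomial (Fin (k + 1)) ℤ) * X i ^ 2
      = monomial (μ + Finsupp.single i 2) 1 := by
    rw [X_pow_eq_monomial, mono_mul]
  have e2 : (monomial μ 1 : MvPolynomial (Fin (k + 1)) ℤ) * (X 0 * X i)
      = monomial (μ + (Finsupp.single 0 1 + Finsupp.single i 1)) 1 := by
    rw [X_eq_mono, X_eq_mono, mono_mul, mono_mul]
  rw [mul_add, map_add, e1, e2, phi_monomial, phi_monomial]
  rcases classify k μ with h2 | ⟨i', a, b, hi', hb, rfl⟩ | ⟨a, rfl⟩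
  · rw [NF_twoV _ _ _ h2.mono, NF_twoV _ _ _ h2.mono, add_zero]
  · by_cases hii : i' = i
    · subst hii
      have r1 : (Finsupp.single 0 a + Finsupp.single i' b) + Finsupp.single i' 2
          = Finsupp.single 0 a + Finsupp.single i' (b + 2) := by
        simp only [Finsupp.single_add]; abel
      have r2 : (Finsupp.single 0 a + Finsupp.single i' b)
            + (Finsupp.single 0 1 + Finsupp.single i' 1)
          = Finsupp.single 0 (a + 1) + Finsupp.single i' (b + 1) := by
        simp only [Finsupp.single_add]; abel
      rw [r1, r2, NF_V _ _ _ hi' _ _ (by omega), NF_V _ _ _ hi' _ _ (by omega)]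
      have r3 : a + 1 + (b + 1) = a + (b + 2) := by omega
      have r4 : ((-1 : ℤ)) ^ (a + 1) = -(-1) ^ a := by ring
      rw [r3, r4, neg_smul, add_neg_cancel]
    · have h1 : TwoV k ((Finsupp.single 0 a + Finsupp.single i' b) + Finsupp.single i 2) := by
        refine ⟨i', i, hi', hi, hii, ?_, ?_⟩
        · simp [Finsupp.add_apply, Finsupp.single_eq_of_ne hi0.symm,
            Finsupp.single_eq_of_ne (fun h : i = i' => hii h.symm)]
          omega
        · simp [Finsupp.add_apply]
      have h2 : TwoV k ((Finsupp.single 0 a + Finsupp.single i' b)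
          + (Finsupp.single 0 1 + Finsupp.single i 1)) := by
        refine ⟨i', i, hi', hi, hii, ?_, ?_⟩
        · simp [Finsupp.add_apply, Finsupp.single_eq_of_ne hi0.symm,
            Finsupp.single_eq_of_ne (fun h : i = i' => hii h.symm),
            Finsupp.single_eq_of_ne (fun h : (0 : Fin (k+1)) = i' => ne_zero_of_le hi' h.symm)]
          omega
        · simp [Finsupp.add_apply]
      rw [NF_twoV _ _ _ h1, NF_twoV _ _ _ h2, add_zero]
  · have r2 : (Finsupp.single 0 a : Fin (k + 1) →₀ ℕ)
        + (Finsupp.single 0 1 + Finsupp.single i 1)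
        = Finsupp.single 0 (a + 1) + Finsupp.single i 1 := by
      simp only [Finsupp.single_add]; abel
    rw [r2, NF_V _ _ _ hi _ _ (by omega), NF_V _ _ _ hi _ _ (by omega)]
    have r3 : a + 1 + 1 = a + 2 := by omega
    have r4 : ((-1 : ℤ)) ^ (a + 1) = -(-1) ^ a := by ring
    rw [r3, r4, neg_smul, add_neg_cancel]


variable {k} in
lemma card_filter_ne (hk : 1 ≤ k) (i : Fin (k + 1)) (hi : 1 ≤ (i : ℕ)) :
    (Finset.univ.filter (fun j : Fin (k + 1) => 1 ≤ (j : ℕ) ∧ j ≠ i)).card = k - 1 := by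
  have h1 : (Finset.univ.filter (fun j : Fin (k + 1) => 1 ≤ (j : ℕ) ∧ j ≠ i))
      = (Finset.univ.filter (fun j : Fin (k + 1) => 1 ≤ (j : ℕ))).erase i := by
    ext x
    simp [Finset.mem_erase, and_comm]
  have h2 : (Finset.univ.filter (fun j : Fin (k + 1) => 1 ≤ (j : ℕ)))
      = Finset.univ.erase (0 : Fin (k + 1)) := by
    ext x
    simp only [Finset.mem_filter, Finset.mem_univ, true_and, Finset.mem_erase, and_true,
      Nat.one_le_iff_ne_zero, ne_eq, Fin.ext_iff, Fin.val_zero]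
  have h3 : (Finset.univ.erase (0 : Fin (k + 1))).card = k := by
    rw [Finset.card_erase_of_mem (Finset.mem_univ _)]
    simp
  rw [h1, h2, Finset.card_erase_of_mem, h3]
  rw [Finset.mem_erase]
  exact ⟨ne_zero_of_le hi, Finset.mem_univ _⟩

lemma phi_mul_g3 (hm : 2 ≤ m) (hk : 1 ≤ k) (i : Fin (k + 1)) (hi : 1 ≤ (i : ℕ))
    (μ : Fin (k + 1) →₀ ℕ) :
    phi m k hk (monomial μ 1 * (X 0 ^ m + ∑ j ∈ Finset.univ.filter
      (fun j : Fin (k + 1) => 1 ≤ (j : ℕ) ∧ j ≠ i), X 0 ^ (m - 1) * X j)) = 0 := by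
  have e0 : (monomial μ 1 : MvPolynomial (Fin (k + 1)) ℤ) * X 0 ^ m
      = monomial (μ + Finsupp.single 0 m) 1 := by rw [X_pow_eq_monomial, mono_mul]
  have ej : ∀ j : Fin (k + 1), (monomial μ 1 : MvPolynomial (Fin (k + 1)) ℤ)
      * (X 0 ^ (m - 1) * X j)
      = monomial (μ + (Finsupp.single 0 (m - 1) + Finsupp.single j 1)) 1 := by
    intro j
    rw [X_pow_eq_monomial, X_eq_mono, mono_mul, mono_mul]
  rw [mul_add, Finset.mul_sum, map_add, map_sum]
  rcases classify k μ with h2 | ⟨i', a, b, hi', hb, rfl⟩ | ⟨a, rfl⟩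
  · rw [e0, phi_monomial, NF_twoV _ _ _ h2.mono, Finset.sum_eq_zero, add_zero]
    intro j hj
    rw [ej, phi_monomial, NF_twoV _ _ _ h2.mono]
  · -- one-V case
    have r0 : (Finsupp.single 0 a + Finsupp.single i' b) + Finsupp.single 0 m
        = Finsupp.single 0 (a + m) + Finsupp.single i' b := by
      simp only [Finsupp.single_add]; abel
    rw [e0, phi_monomial, r0, NF_V _ _ _ hi' _ _ hb, W_big _ _ _ _ _ _ (by omega), smul_zero,
      Finset.sum_eq_zero, add_zero]
    intro j hj
    rw [Finset.mem_filter] at hj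
    obtain ⟨-, hj1, hji⟩ := hj
    rw [ej, phi_monomial]
    by_cases hji' : j = i'
    · subst hji'
      have r1 : (Finsupp.single 0 a + Finsupp.single j b)
          + (Finsupp.single 0 (m - 1) + Finsupp.single j 1)
          = Finsupp.single 0 (a + (m - 1)) + Finsupp.single j (b + 1) := by
        simp only [Finsupp.single_add]; abel
      rw [r1, NF_V _ _ _ hj1 _ _ (by omega), W_big _ _ _ _ _ _ (by omega), smul_zero]
    · refine NF_twoV _ _ _ ⟨i', j, hi', hj1, fun h => hji' h.symm, ?_, ?_⟩
      · have h0i' : (0 : Fin (k + 1)) ≠ i' := fun h => ne_zero_of_le hi' h.symm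
        simp [Finsupp.add_apply, Finsupp.single_eq_of_ne h0i'.symm,
          Finsupp.single_eq_of_ne (fun h : j = i' => hji' h)]
        omega
      · simp [Finsupp.add_apply]
  · -- pure R case
    have r0 : (Finsupp.single 0 a : Fin (k + 1) →₀ ℕ) + Finsupp.single 0 m
        = Finsupp.single 0 (a + m) := by rw [← Finsupp.single_add]
    have rj : ∀ j : Fin (k + 1), (Finsupp.single 0 a : Fin (k + 1) →₀ ℕ)
        + (Finsupp.single 0 (m - 1) + Finsupp.single j 1)
        = Finsupp.single 0 (a + (m - 1)) + Finsupp.single j 1 := by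
      intro j; simp only [Finsupp.single_add]; abel
    rw [e0, phi_monomial, r0, NF_R]
    by_cases ha : a = 0
    · subst ha
      rw [zero_add, Rp_m _ _ hm]
      have hterm : ∀ j ∈ Finset.univ.filter (fun j : Fin (k + 1) => 1 ≤ (j : ℕ) ∧ j ≠ i),
          phi m k hk (monomial (Finsupp.single 0 0) 1 * (X 0 ^ (m - 1) * X j))
          = ((-1 : ℤ)) ^ (m - 1) • Finsupp.single (eW m k hk) 1 := by
        intro j hj
        rw [Finset.mem_filter] at hj
        obtain ⟨-, hj1, -⟩ := hj
        rw [ej, phi_monomial, rj, NF_V _ _ _ hj1 _ _ (by omega)]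
        have : 0 + (m - 1) + 1 = m := by omega
        rw [this, W_m _ _ hm, Nat.zero_add]
      rw [Finset.sum_congr rfl hterm, Finset.sum_const, card_filter_ne hk i hi]
      rw [← Nat.cast_smul_eq_nsmul ℤ, smul_smul, ← add_smul]
      have hco : ((-1 : ℤ)) ^ m * ((k : ℤ) - 1) + ((k - 1 : ℕ) : ℤ) * (-1) ^ (m - 1) = 0 := by
        obtain ⟨n, rfl⟩ : ∃ n, m = n + 1 := ⟨m - 1, by omega⟩
        rw [Nat.add_sub_cancel, pow_succ]
        have hc : ((k - 1 : ℕ) : ℤ) = (k : ℤ) - 1 := by omega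
        rw [hc]; ring
      rw [hco, zero_smul]
    · rw [Rp_big _ _ _ _ (by omega), Finset.sum_eq_zero, add_zero]
      intro j hj
      rw [Finset.mem_filter] at hj
      obtain ⟨-, hj1, -⟩ := hj
      rw [ej, phi_monomial, rj, NF_V _ _ _ hj1 _ _ (by omega),
        W_big _ _ _ _ _ _ (by omega), smul_zero]


def Gens : Set (MvPolynomial (Fin (k + 1)) ℤ) :=
  {f | ∃ i j : Fin (k + 1), 1 ≤ (i : ℕ) ∧ (i : ℕ) < (j : ℕ) ∧ f = X i * X j} ∪
  {f | ∃ i : Fin (k + 1), 1 ≤ (i : ℕ) ∧ f = X i ^ 2 + X 0 * X i} ∪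
  {f | ∃ i : Fin (k + 1), 1 ≤ (i : ℕ) ∧
     f = X 0 ^ m + ∑ j ∈ Finset.univ.filter (fun j : Fin (k + 1) =>
       1 ≤ (j : ℕ) ∧ j ≠ i), X 0 ^ (m - 1) * X j}

lemma phi_mul_gen (hm : 2 ≤ m) (hk : 1 ≤ k) {g : MvPolynomial (Fin (k + 1)) ℤ}
    (hg : g ∈ Gens m k) (q : MvPolynomial (Fin (k + 1)) ℤ) : phi m k hk (q * g) = 0 := by
  have hL : (phi m k hk).comp (LinearMap.mulRight ℤ g) = 0 := by
    refine Module.Basis.ext (basisMonomials (Fin (k + 1)) ℤ) (fun μ => ?_)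
    have hb : (basisMonomials (Fin (k + 1)) ℤ) μ = monomial μ 1 := by
      rw [coe_basisMonomials]
    rw [hb, LinearMap.comp_apply, LinearMap.mulRight_apply, LinearMap.zero_apply]
    rcases hg with (⟨i, j, hi, hij, rfl⟩ | ⟨i, hi, rfl⟩) | ⟨i, hi, rfl⟩
    · exact phi_mul_g1 m k hk i j hi hij μ
    · exact phi_mul_g2 m k hm hk i hi μ
    · exact phi_mul_g3 m k hm hk i hi μ
  have := DFunLike.congr_fun hL q
  simpa using this

lemma phi_vanish (hm : 2 ≤ m) (hk : 1 ≤ k) {x : MvPolynomial (Fin (k + 1)) ℤ}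
    (hx : x ∈ Ideal.span (Gens m k)) : phi m k hk x = 0 := by
  have main : ∀ x ∈ Ideal.span (Gens m k), ∀ q, phi m k hk (q * x) = 0 := by
    intro x hx
    refine Submodule.span_induction ?_ ?_ ?_ ?_ hx
    · intro g hg q; exact phi_mul_gen m k hm hk hg q
    · intro q; rw [mul_zero, map_zero]
    · intro a b _ _ iha ihb q; rw [mul_add, map_add, iha, ihb, add_zero]
    · intro r a _ iha q
      rw [smul_eq_mul, ← mul_assoc]
      exact iha (q * r)
  simpa using main x hx 1

lemma phi_basis (hm : 2 ≤ m) (hk : 1 ≤ k) (p : B m k) :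
    phi m k hk (X p.1.1 ^ p.1.2) = Finsupp.single p 1 := by
  obtain ⟨⟨i, d⟩, hp⟩ := p
  rw [X_pow_eq_monomial, phi_monomial]
  rcases hp with ⟨h0, hd⟩ | ⟨h1, hd1, hd2⟩ | ⟨h1, hd⟩
  · simp only at h0 hd
    subst h0
    rw [NF_R, Rp_lt _ _ _ _ hd]
  · simp only at h1 hd1 hd2
    have e : (Finsupp.single i d : Fin (k + 1) →₀ ℕ)
        = Finsupp.single 0 0 + Finsupp.single i d := by
      rw [Finsupp.single_zero, zero_add]
    rw [e, NF_V _ _ _ h1 _ _ (by omega), pow_zero, one_smul, Nat.zero_add,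
      W_lt _ _ _ _ _ _ hd1 hd2]
  · simp only at h1 hd
    have hd' := hd.symm
    subst hd'
    have hi1 : i = 1 := by
      apply Fin.ext; rw [h1, val_one hk]
    subst hi1
    have e : (Finsupp.single (1 : Fin (k + 1)) m : Fin (k + 1) →₀ ℕ)
        = Finsupp.single 0 0 + Finsupp.single 1 m := by
      rw [Finsupp.single_zero, zero_add]
    rw [e, NF_V _ _ _ (by rw [val_one hk]) _ _ (by omega), pow_zero, one_smul, Nat.zero_add,
      W_m _ _ hm]
    rfl

set_option synthInstance.maxHeartbeats 1000000 in
lemma li (hm : 2 ≤ m) (hk : 1 ≤ k) : LinearIndependent ℤ (fun p : B m k =>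
    Ideal.Quotient.mk (Ideal.span (Gens m k)) (X p.1.1) ^ p.1.2) := by
  rw [linearIndependent_iff']
  intro s g hsum p hp
  set q : MvPolynomial (Fin (k + 1)) ℤ := ∑ p' ∈ s, g p' • (X p'.1.1 ^ p'.1.2) with hq
  have hmk : Ideal.Quotient.mk (Ideal.span (Gens m k)) q = 0 := by
    rw [hq, map_sum]
    simp only [map_zsmul, map_pow]
    exact hsum
  have hqI : q ∈ Ideal.span (Gens m k) := by
    rwa [Ideal.Quotient.eq_zero_iff_mem] at hmk
  have hφ := phi_vanish m k hm hk hqI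
  rw [hq, map_sum] at hφ
  simp only [map_zsmul, phi_basis m k hm hk] at hφ
  have hval := congrArg (fun f => f p) hφ
  simp only [Finsupp.coe_zero, Pi.zero_apply, Finsupp.coe_finset_sum, Finset.sum_apply,
    Finsupp.coe_smul, Pi.smul_apply, Finsupp.single_apply, smul_eq_mul, mul_ite, mul_one,
    mul_zero] at hval
  rwa [Finset.sum_ite_eq' s p g, if_pos hp] at hval


section Quot

local notation "mkq" => Ideal.Quotient.mk (Ideal.span (Gens m k))

lemma smul_cancel_neg_one_pow {M : Type*} [AddCommGroup M] [Module ℤ M] (n : ℕ) {x y : M}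
    (h : ((-1 : ℤ)) ^ n • x = ((-1 : ℤ)) ^ n • y) : x = y := by
  rcases neg_one_pow_eq_or ℤ n with h1 | h1 <;> rw [h1] at h <;>
    simpa [neg_smul, neg_inj] using h

lemma rel_mul {i j : Fin (k + 1)} (hi : 1 ≤ (i : ℕ)) (hj : 1 ≤ (j : ℕ)) (hij : i ≠ j) :
    mkq (X i) * mkq (X j) = 0 := by
  have hvij : (i : ℕ) ≠ (j : ℕ) := fun h => hij (Fin.ext h)
  rcases Nat.lt_or_ge (i : ℕ) (j : ℕ) with hlt | hge
  · rw [← map_mul, Ideal.Quotient.eq_zero_iff_mem]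
    exact Ideal.subset_span (Or.inl (Or.inl ⟨i, j, hi, hlt, rfl⟩))
  · have hlt : (j : ℕ) < (i : ℕ) := by omega
    rw [mul_comm, ← map_mul, Ideal.Quotient.eq_zero_iff_mem]
    exact Ideal.subset_span (Or.inl (Or.inl ⟨j, i, hj, hlt, rfl⟩))

lemma rel_sq {i : Fin (k + 1)} (hi : 1 ≤ (i : ℕ)) :
    mkq (X i) ^ 2 + mkq (X 0) * mkq (X i) = 0 := by
  have : mkq (X i ^ 2 + X 0 * X i) = 0 := by
    rw [Ideal.Quotient.eq_zero_iff_mem]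
    exact Ideal.subset_span (Or.inl (Or.inr ⟨i, hi, rfl⟩))
  simpa [map_add, map_mul, map_pow] using this

lemma rel_sum {i : Fin (k + 1)} (hi : 1 ≤ (i : ℕ)) :
    mkq (X 0) ^ m + ∑ j ∈ Finset.univ.filter (fun j : Fin (k + 1) => 1 ≤ (j : ℕ) ∧ j ≠ i),
      mkq (X 0) ^ (m - 1) * mkq (X j) = 0 := by
  have : mkq (X 0 ^ m + ∑ j ∈ Finset.univ.filter (fun j : Fin (k + 1) =>
      1 ≤ (j : ℕ) ∧ j ≠ i), X 0 ^ (m - 1) * X j) = 0 := by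
    rw [Ideal.Quotient.eq_zero_iff_mem]
    exact Ideal.subset_span (Or.inr ⟨i, hi, rfl⟩)
  simpa [map_add, map_sum, map_mul, map_pow] using this

lemma rXv {i : Fin (k + 1)} (hi : 1 ≤ (i : ℕ)) (b : ℕ) (hb : 1 ≤ b) :
    mkq (X 0) * mkq (X i) ^ b = -(mkq (X i) ^ (b + 1)) := by
  obtain ⟨c, rfl⟩ : ∃ c, b = c + 1 := ⟨b - 1, by omega⟩
  have h := rel_sq m k hi
  linear_combination (mkq (X i)) ^ c * h

lemma pow_mul_v {i : Fin (k + 1)} (hi : 1 ≤ (i : ℕ)) (a b : ℕ) (hb : 1 ≤ b) :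
    mkq (X 0) ^ a * mkq (X i) ^ b = ((-1 : ℤ)) ^ a • mkq (X i) ^ (a + b) := by
  induction a with
  | zero => simp
  | succ a ih =>
    have e : mkq (X 0) ^ (a + 1) * mkq (X i) ^ b
        = mkq (X 0) * (mkq (X 0) ^ a * mkq (X i) ^ b) := by ring
    rw [e, ih, mul_smul_comm, rXv m k hi (a + b) (by omega)]
    have hp : ((-1 : ℤ)) ^ (a + 1) = (-1) ^ a * (-1) := pow_succ _ _
    rw [hp, mul_smul, neg_one_smul, show a + 1 + b = a + b + 1 by omega, smul_neg]

lemma rm_v {i : Fin (k + 1)} (hi : 1 ≤ (i : ℕ)) : mkq (X 0) ^ m * mkq (X i) = 0 := by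
  have h := rel_sum m k hi
  have h2 := congrArg (fun z => z * mkq (X i)) h
  simp only [add_mul, Finset.sum_mul, zero_mul] at h2
  rw [Finset.sum_eq_zero, add_zero] at h2
  · exact h2
  · intro j hj
    rw [Finset.mem_filter] at hj
    obtain ⟨-, hj1, hji⟩ := hj
    rw [mul_assoc, rel_mul m k hj1 hi hji, mul_zero]

lemma v_pow_succ {i : Fin (k + 1)} (hi : 1 ≤ (i : ℕ)) : mkq (X i) ^ (m + 1) = 0 := by
  have h := pow_mul_v m k hi m 1 le_rfl
  rw [pow_one, rm_v m k hi] at h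
  exact smul_cancel_neg_one_pow m (by rw [← h, smul_zero])

lemma r_pow_succ (hm : 2 ≤ m) (hk : 1 ≤ k) : mkq (X 0) ^ (m + 1) = 0 := by
  have hi0 : (1 : ℕ) ≤ ((⟨1, by omega⟩ : Fin (k + 1)) : ℕ) := le_rfl
  have h := rel_sum m k hi0
  have h2 := congrArg (fun z => mkq (X 0) * z) h
  simp only [mul_add, Finset.mul_sum, mul_zero] at h2
  rw [Finset.sum_eq_zero, add_zero] at h2
  · rw [pow_succ, mul_comm]
    exact h2
  · intro j hj
    rw [Finset.mem_filter] at hj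
    obtain ⟨-, hj1, -⟩ := hj
    rw [← mul_assoc, ← pow_succ', show m - 1 + 1 = m by omega, rm_v m k hj1]

lemma v_pow_big {i : Fin (k + 1)} (hi : 1 ≤ (i : ℕ)) (d : ℕ) (hd : m + 1 ≤ d) :
    mkq (X i) ^ d = 0 := by
  rw [show d = (m + 1) + (d - (m + 1)) by omega, pow_add, v_pow_succ m k hi, zero_mul]

lemma r_pow_big (hm : 2 ≤ m) (hk : 1 ≤ k) (d : ℕ) (hd : m + 1 ≤ d) : mkq (X 0) ^ d = 0 := by
  rw [show d = (m + 1) + (d - (m + 1)) by omega, pow_add, r_pow_succ m k hm hk, zero_mul]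

lemma vm_eq (hm : 2 ≤ m) (hk : 1 ≤ k) {i : Fin (k + 1)} (hi : 1 ≤ (i : ℕ)) :
    mkq (X i) ^ m = mkq (X 1) ^ m := by
  have h1v : ((1 : Fin (k + 1)) : ℕ) = 1 := val_one hk
  by_cases h1 : i = 1
  · rw [h1]
  · set t := Finset.univ.filter (fun j : Fin (k + 1) => 1 ≤ (j : ℕ)) with ht
    have hf : ∀ i' : Fin (k + 1),
        Finset.univ.filter (fun j : Fin (k + 1) => 1 ≤ (j : ℕ) ∧ j ≠ i') = t.erase i' := by
      intro i'
      ext x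
      simp [ht, Finset.mem_erase, and_comm]
    set f : Fin (k + 1) → _ := fun j => mkq (X 0) ^ (m - 1) * mkq (X j) with hfdef
    have hmem : ∀ i' : Fin (k + 1), 1 ≤ (i' : ℕ) → i' ∈ t := by
      intro i' hi'
      simp [ht, hi']
    have hs1 := rel_sum m k (show 1 ≤ ((1 : Fin (k + 1)) : ℕ) by rw [h1v])
    have hsi := rel_sum m k hi
    rw [hf] at hs1 hsi
    have he1 := Finset.sum_erase_add t f (hmem 1 (by rw [h1v]))
    have hei := Finset.sum_erase_add t f (hmem i hi)
    have key : f 1 = f i := by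
      have e1 : ∑ j ∈ t.erase 1, f j = ∑ j ∈ t.erase i, f j := by
        have := hs1.trans hsi.symm
        exact add_left_cancel this
      have k1 : f 1 = ∑ j ∈ t, f j - ∑ j ∈ t.erase 1, f j := by rw [← he1]; ring
      have k2 : f i = ∑ j ∈ t, f j - ∑ j ∈ t.erase i, f j := by rw [← hei]; ring
      rw [k1, k2, e1]
    have key2 : mkq (X 0) ^ (m - 1) * mkq (X 1) ^ 1 = mkq (X 0) ^ (m - 1) * mkq (X i) ^ 1 := by
      simpa [hfdef, pow_one] using key
    rw [pow_mul_v m k (by rw [h1v]) (m - 1) 1 le_rfl, pow_mul_v m k hi (m - 1) 1 le_rfl] at key2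
    have := smul_cancel_neg_one_pow (m - 1) key2
    rw [show m - 1 + 1 = m by omega] at this
    exact this.symm

lemma rm_eq (hm : 2 ≤ m) (hk : 1 ≤ k) : mkq (X 0) ^ m
    = (((-1 : ℤ)) ^ m * ((k : ℤ) - 1)) • mkq (X 1) ^ m := by
  have h1v : ((1 : Fin (k + 1)) : ℕ) = 1 := val_one hk
  have hs1 := rel_sum m k (show 1 ≤ ((1 : Fin (k + 1)) : ℕ) by rw [h1v])
  have hterm : ∀ j ∈ Finset.univ.filter (fun j : Fin (k + 1) => 1 ≤ (j : ℕ) ∧ j ≠ 1),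
      mkq (X 0) ^ (m - 1) * mkq (X j)
      = ((-1 : ℤ)) ^ (m - 1) • mkq (X 1) ^ m := by
    intro j hj
    rw [Finset.mem_filter] at hj
    obtain ⟨-, hj1, -⟩ := hj
    have := pow_mul_v m k hj1 (m - 1) 1 le_rfl
    rw [pow_one] at this
    rw [this, show m - 1 + 1 = m by omega, vm_eq m k hm hk hj1]
  rw [Finset.sum_congr rfl hterm, Finset.sum_const, card_filter_ne hk 1 (by rw [h1v])] at hs1
  rw [← Nat.cast_smul_eq_nsmul ℤ, smul_smul] at hs1
  have hc : ((k - 1 : ℕ) : ℤ) = (k : ℤ) - 1 := by omega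
  have hco : ((k - 1 : ℕ) : ℤ) * (-1 : ℤ) ^ (m - 1) = -(((-1 : ℤ)) ^ m * ((k : ℤ) - 1)) := by
    obtain ⟨n, rfl⟩ : ∃ n, m = n + 1 := ⟨m - 1, by omega⟩
    rw [Nat.add_sub_cancel, hc, pow_succ]
    ring
  rw [hco, neg_smul, ← sub_eq_add_neg] at hs1
  exact sub_eq_zero.mp hs1


lemma mono_mem (hm : 2 ≤ m) (hk : 1 ≤ k) (μ : Fin (k + 1) →₀ ℕ) :
    mkq (monomial μ 1) ∈ Submodule.span ℤ
      (Set.range (fun p : B m k => mkq (X p.1.1) ^ p.1.2)) := by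
  rcases classify k μ with ⟨i, j, hi, hj, hij, hμi, hμj⟩ | ⟨i, a, b, hi, hb, rfl⟩ | ⟨a, rfl⟩
  · set ν : Fin (k + 1) →₀ ℕ := μ - Finsupp.single i 1 - Finsupp.single j 1 with hν
    have hμ : μ = ν + (Finsupp.single i 1 + Finsupp.single j 1) := by
      ext x
      have h1 : 1 ≤ μ i := Nat.one_le_iff_ne_zero.mpr hμi
      have h2 : 1 ≤ μ j := Nat.one_le_iff_ne_zero.mpr hμj
      rcases eq_or_ne x i with rfl | hxi
      · simp [hν, Finsupp.tsub_apply, Finsupp.add_apply, Finsupp.single_eq_same,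
          Finsupp.single_eq_of_ne' (Ne.symm hij)]
        omega
      · rcases eq_or_ne x j with rfl | hxj
        · simp [hν, Finsupp.tsub_apply, Finsupp.add_apply, Finsupp.single_eq_same,
            Finsupp.single_eq_of_ne' hij]
          omega
        · simp [hν, Finsupp.tsub_apply, Finsupp.add_apply,
            Finsupp.single_eq_of_ne' (Ne.symm hxi), Finsupp.single_eq_of_ne' (Ne.symm hxj)]
    rw [hμ]
    have e : monomial (ν + (Finsupp.single i 1 + Finsupp.single j 1)) (1 : ℤ)
        = monomial ν 1 * (X i * X j) := by
      rw [X_eq_mono, X_eq_mono, mono_mul, mono_mul]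
    rw [e, map_mul, map_mul, rel_mul m k hi hj hij, mul_zero]
    exact Submodule.zero_mem _
  · have e : monomial (Finsupp.single 0 a + Finsupp.single i b) (1 : ℤ)
        = X 0 ^ a * X i ^ b := by
      rw [X_pow_eq_monomial, X_pow_eq_monomial, monomial_mul, mul_one]
    rw [e, map_mul, map_pow, map_pow, pow_mul_v m k hi a b (by omega)]
    have hd : a + b ≤ m - 1 ∨ a + b = m ∨ m + 1 ≤ a + b := by omega
    rcases hd with hd | hd | hd
    · exact Submodule.smul_mem _ _ (Submodule.subset_span
        ⟨⟨(i, a + b), Or.inr (Or.inl ⟨hi, by omega, hd⟩)⟩, rfl⟩)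
    · rw [hd, vm_eq m k hm hk hi]
      exact Submodule.smul_mem _ _ (Submodule.subset_span
        ⟨⟨(1, m), Or.inr (Or.inr ⟨val_one hk, rfl⟩)⟩, rfl⟩)
    · rw [v_pow_big m k hi _ hd, smul_zero]
      exact Submodule.zero_mem _
  · rw [← X_pow_eq_monomial, map_pow]
    have hd : a ≤ m - 1 ∨ a = m ∨ m + 1 ≤ a := by omega
    rcases hd with hd | hd | hd
    · exact Submodule.subset_span ⟨⟨(0, a), Or.inl ⟨rfl, hd⟩⟩, rfl⟩
    · rw [hd, rm_eq m k hm hk]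
      exact Submodule.smul_mem _ _ (Submodule.subset_span
        ⟨⟨(1, m), Or.inr (Or.inr ⟨val_one hk, rfl⟩)⟩, rfl⟩)
    · rw [r_pow_big m k hm hk _ hd]
      exact Submodule.zero_mem _

lemma span_top (hm : 2 ≤ m) (hk : 1 ≤ k) :
    ⊤ ≤ Submodule.span ℤ (Set.range (fun p : B m k => mkq (X p.1.1) ^ p.1.2)) := by
  rintro x -
  obtain ⟨q, rfl⟩ := Ideal.Quotient.mk_surjective x
  rw [q.as_sum, map_sum]
  refine Submodule.sum_mem _ (fun μ hμ => ?_)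
  have e : monomial μ (coeff μ q) = (coeff μ q) • monomial μ (1 : ℤ) := by
    rw [smul_monomial, smul_eq_mul, mul_one]
  rw [e, map_zsmul]
  exact Submodule.smul_mem _ _ (mono_mem m k hm hk μ)

end Quot

end Stmt12


/-- Proposition 2.4: the cohomology ring `H*(N_{n,k})` of the polygon space with
genetic code `{{n,k}}`, where `m = n-3`.  Variables: `X 0 = R`, `X i = Vᵢ` for
`1 ≤ i ≤ k`.  The quotient `A` of `ℤ[R,V₁,…,V_k]` by the relations
`VᵢVⱼ = 0` (`i ≠ j`), `Vᵢ² + RVᵢ = 0`, and `R^m + ∑_{j≠i} R^{m-1}Vⱼ = 0`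
(`1 ≤ i ≤ k`) is free abelian with basis
`{1} ∪ {R^j : 1 ≤ j ≤ m-1} ∪ {Vᵢ^j : 1 ≤ i ≤ k, 1 ≤ j ≤ m-1} ∪ {V₁^m}`,
and in `A`: `V₁^m = ⋯ = V_k^m`, `R^m = (-1)^m (k-1) V₁^m`,
`R^{m+1} = 0 = Vᵢ^{m+1}`. -/
theorem stmt_12 (m k : ℕ) (hm : 2 ≤ m) (hk : 1 ≤ k)
    (I : Ideal (MvPolynomial (Fin (k + 1)) ℤ))
    (hI : I = Ideal.span
      ({f | ∃ i j : Fin (k + 1), 1 ≤ (i : ℕ) ∧ (i : ℕ) < (j : ℕ) ∧ f = X i * X j} ∪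
       {f | ∃ i : Fin (k + 1), 1 ≤ (i : ℕ) ∧ f = X i ^ 2 + X 0 * X i} ∪
       {f | ∃ i : Fin (k + 1), 1 ≤ (i : ℕ) ∧
          f = X 0 ^ m + ∑ j ∈ Finset.univ.filter (fun j : Fin (k + 1) =>
            1 ≤ (j : ℕ) ∧ j ≠ i), X 0 ^ (m - 1) * X j})) :
    (∃ b : Module.Basis
        {p : Fin (k + 1) × ℕ //
          (p.1 = 0 ∧ p.2 ≤ m - 1) ∨
          (1 ≤ (p.1 : ℕ) ∧ 1 ≤ p.2 ∧ p.2 ≤ m - 1) ∨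
          ((p.1 : ℕ) = 1 ∧ p.2 = m)} ℤ (MvPolynomial (Fin (k + 1)) ℤ ⧸ I),
      ∀ p, b p = Ideal.Quotient.mk I (X p.1.1) ^ p.1.2) ∧
    (∀ i : Fin (k + 1), 1 ≤ (i : ℕ) →
      Ideal.Quotient.mk I (X i) ^ m = Ideal.Quotient.mk I (X 1) ^ m) ∧
    Ideal.Quotient.mk I (X 0) ^ m =
      (-1) ^ m * ((k : MvPolynomial (Fin (k + 1)) ℤ ⧸ I) - 1) *
        Ideal.Quotient.mk I (X 1) ^ m ∧
    Ideal.Quotient.mk I (X 0) ^ (m + 1) = 0 ∧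
    ∀ i : Fin (k + 1), 1 ≤ (i : ℕ) → Ideal.Quotient.mk I (X i) ^ (m + 1) = 0 := by
  subst hI
  have hG : (Ideal.span
      ({f | ∃ i j : Fin (k + 1), 1 ≤ (i : ℕ) ∧ (i : ℕ) < (j : ℕ) ∧ f = X i * X j} ∪
       {f | ∃ i : Fin (k + 1), 1 ≤ (i : ℕ) ∧ f = X i ^ 2 + X 0 * X i} ∪
       {f | ∃ i : Fin (k + 1), 1 ≤ (i : ℕ) ∧
          f = X 0 ^ m + ∑ j ∈ Finset.univ.filter (fun j : Fin (k + 1) =>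
            1 ≤ (j : ℕ) ∧ j ≠ i), X 0 ^ (m - 1) * X j})) = Ideal.span (Stmt12.Gens m k) := rfl
  rw [hG]
  refine ⟨⟨Module.Basis.mk (Stmt12.li m k hm hk) (Stmt12.span_top m k hm hk),
      fun p => Module.Basis.mk_apply _ _ _⟩, ?_, ?_, ?_, ?_⟩
  · intro i hi
    exact Stmt12.vm_eq m k hm hk hi
  · have h := Stmt12.rm_eq m k hm hk
    rw [h, zsmul_eq_mul]
    push_cast
    ring
  · exact Stmt12.r_pow_succ m k hm hk
  · intro i hi
    exact Stmt12.v_pow_succ m k hi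
end

section
/- Let m ≥ 2 and k ≥ 1 be integers. Let B be the quotient of the polynomial ring ℤ[α₁,…,α_k, β] by the ideal generated by: (i) α_iα_j for all 1 ≤ i < j ≤ k; (ii) α_iβ + α_i²β + α_i² for all 1 ≤ i ≤ k (the polynomial form of α_iβ = −α_i²/(1+α_i)); (iii) α_i^m − α_1^m for all 2 ≤ i ≤ k; (iv) β^m − (−1)^m(k−1)α_1^m; (v) β^{m+1}; and (vi) α_1^{m+1}. Then B is a free abelian group with basis {1} ∪ {α_1^j : 1 ≤ j ≤ m} ∪ {α_i^j : 2 ≤ i ≤ k, 1 ≤ j ≤ m−1} ∪ {β^j : 1 ≤ j ≤ m−1}. -/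
open MvPolynomial Finsupp

namespace Stmt13

variable (m k : ℕ)

abbrev Idx := {p : Fin (k + 1) × ℕ //
  (p.1 = 0 ∧ p.2 ≤ m - 1) ∨
  ((p.1 : ℕ) = 1 ∧ 1 ≤ p.2 ∧ p.2 ≤ m) ∨
  (2 ≤ (p.1 : ℕ) ∧ 1 ≤ p.2 ∧ p.2 ≤ m - 1)}

noncomputable def b0 (j : ℕ) (h : j ≤ m - 1) : Idx m k := ⟨(0, j), Or.inl ⟨rfl, h⟩⟩

def bm (hm : 2 ≤ m) (hk : 1 ≤ k) : Idx m k :=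
  ⟨(⟨1, by omega⟩, m), Or.inr (Or.inl ⟨rfl, show 1 ≤ m by omega, le_rfl⟩)⟩

def bi (i : Fin (k + 1)) (hi : (i : ℕ) ≠ 0) (j : ℕ) (h1 : j ≠ 0) (h2 : j ≤ m - 1) :
    Idx m k := ⟨(i, j), by
  rcases Nat.lt_or_ge (i : ℕ) 2 with h | h
  · exact Or.inr (Or.inl ⟨show (i : ℕ) = 1 by omega, show 1 ≤ j by omega, show j ≤ m by omega⟩)
  · exact Or.inr (Or.inr ⟨show 2 ≤ (i : ℕ) from h, show 1 ≤ j by omega, show j ≤ m - 1 from h2⟩)⟩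

variable (hm : 2 ≤ m) (hk : 1 ≤ k)

noncomputable def el (i : Fin (k + 1)) (s : ℕ) : Idx m k →₀ ℤ :=
  if h0 : s = 0 then Finsupp.single (b0 m k 0 (by omega)) 1
  else if hi : (i : ℕ) = 0 then 0
  else if h1 : s ≤ m - 1 then Finsupp.single (bi m k i hi s h0 h1) 1
  else if h2 : s = m then Finsupp.single (bm m k hm hk) 1
  else 0

noncomputable def elb (b : ℕ) : Idx m k →₀ ℤ :=
  if h : b ≤ m - 1 then Finsupp.single (b0 m k b h) 1
  else if b = m then ((-1) ^ m * ((k : ℤ) - 1)) • Finsupp.single (bm m k hm hk) 1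
  else 0

noncomputable def F (i : Fin (k + 1)) (e b : ℕ) : Idx m k →₀ ℤ :=
  ∑ t ∈ Finset.range (m + 1),
    (((-1 : ℤ)) ^ (b + t) * ((b - 1 + t).choose t : ℤ)) • el m k hm hk i (e + b + t)

noncomputable def G (i : Fin (k + 1)) (e b : ℕ) : Idx m k →₀ ℤ :=
  if b = 0 then el m k hm hk i e else F m k hm hk i e b

def T (a : Fin (k + 1) →₀ ℕ) : Finset (Fin (k + 1)) :=
  Finset.univ.filter fun i => i ≠ 0 ∧ a i ≠ 0

noncomputable def nf (a : Fin (k + 1) →₀ ℕ) : Idx m k →₀ ℤ :=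
  if 2 ≤ (T k a).card then 0
  else if (T k a).card = 0 then elb m k hm hk (a 0)
  else ∑ i ∈ T k a, G m k hm hk i (a i) (a 0)

lemma mem_T {a : Fin (k + 1) →₀ ℕ} {i : Fin (k + 1)} :
    i ∈ T k a ↔ i ≠ 0 ∧ a i ≠ 0 := by simp [T]

lemma el_eq_zero (i : Fin (k + 1)) {s : ℕ} (hs : m < s) : el m k hm hk i s = 0 := by
  unfold el
  split_ifs <;> first | rfl | omega

lemma elb_eq_zero {b : ℕ} (hb : m < b) : elb m k hm hk b = 0 := by
  unfold elb
  split_ifs <;> first | rfl | omega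

lemma F_eq_zero (i : Fin (k + 1)) {e b : ℕ} (h : m < e + b) : F m k hm hk i e b = 0 := by
  unfold F
  refine Finset.sum_eq_zero fun t _ => ?_
  rw [el_eq_zero m k hm hk i (by omega), smul_zero]

lemma G_eq_zero (i : Fin (k + 1)) {e b : ℕ} (h : m < e + b) :
    G m k hm hk i e b = 0 := by
  unfold G
  split_ifs with hb
  · exact el_eq_zero m k hm hk i (by omega)
  · exact F_eq_zero m k hm hk i h

lemma nf_eq_zero_of_two {a : Fin (k + 1) →₀ ℕ} {i j : Fin (k + 1)} (hij : i ≠ j)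
    (hi0 : i ≠ 0) (hj0 : j ≠ 0) (hai : a i ≠ 0) (haj : a j ≠ 0) :
    nf m k hm hk a = 0 := by
  have h2 : 2 ≤ (T k a).card := by
    have hsub : ({i, j} : Finset (Fin (k + 1))) ⊆ T k a := by
      intro x hx
      rcases Finset.mem_insert.1 hx with rfl | hx
      · exact (mem_T k).2 ⟨hi0, hai⟩
      · rcases Finset.mem_singleton.1 hx with rfl
        exact (mem_T k).2 ⟨hj0, haj⟩
    calc 2 = ({i, j} : Finset (Fin (k + 1))).card := (Finset.card_pair hij).symm
      _ ≤ _ := Finset.card_le_card hsub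
  unfold nf
  rw [if_pos h2]

lemma decomp (a : Fin (k + 1) →₀ ℕ) (i : Fin (k + 1)) (hi : i ≠ 0)
    (h : ∀ j, j ≠ 0 → j ≠ i → a j = 0) :
    a = Finsupp.single 0 (a 0) + Finsupp.single i (a i) := by
  ext j
  rw [Finsupp.add_apply, Finsupp.single_apply, Finsupp.single_apply]
  by_cases hj0 : j = 0
  · subst hj0
    rw [if_pos rfl, if_neg (fun h' : i = 0 => hi h'), add_zero]
  · by_cases hji : j = i
    · subst hji
      rw [if_neg (fun h' : (0 : Fin (k + 1)) = j => hj0 h'.symm), if_pos rfl, zero_add]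
    · rw [h j hj0 hji, if_neg (fun h' : (0 : Fin (k + 1)) = j => hj0 h'.symm),
        if_neg (fun h' : i = j => hji h'.symm), add_zero]

lemma decomp0 (a : Fin (k + 1) →₀ ℕ) (h : ∀ j, j ≠ 0 → a j = 0) :
    a = Finsupp.single 0 (a 0) := by
  ext j
  rw [Finsupp.single_apply]
  by_cases hj0 : j = 0
  · subst hj0; rw [if_pos rfl]
  · rw [h j hj0, if_neg (fun h' : (0 : Fin (k + 1)) = j => hj0 h'.symm)]

lemma nf_single (i : Fin (k + 1)) (hi : i ≠ 0) {e : ℕ} (he : e ≠ 0) (b : ℕ) :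
    nf m k hm hk (Finsupp.single 0 b + Finsupp.single i e) = G m k hm hk i e b := by
  have hT : T k (Finsupp.single 0 b + Finsupp.single i e) = {i} := by
    ext j
    simp only [mem_T, Finset.mem_singleton, Finsupp.add_apply, Finsupp.single_apply]
    constructor
    · rintro ⟨hj0, hval⟩
      by_contra hji
      apply hval
      rw [if_neg (fun h' : (0 : Fin (k + 1)) = j => hj0 h'.symm),
        if_neg (fun h' : i = j => hji h'.symm), add_zero]
    · rintro rfl
      refine ⟨hi, ?_⟩
      rw [if_neg (fun h' : (0 : Fin (k + 1)) = j => hi h'.symm), if_pos rfl, zero_add]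
      exact he
  have hvi : (Finsupp.single (0 : Fin (k + 1)) b + Finsupp.single i e) i = e := by
    rw [Finsupp.add_apply, Finsupp.single_apply, Finsupp.single_apply,
      if_neg (fun h' : (0 : Fin (k + 1)) = i => hi h'.symm), if_pos rfl, zero_add]
  have hv0 : (Finsupp.single (0 : Fin (k + 1)) b + Finsupp.single i e) 0 = b := by
    rw [Finsupp.add_apply, Finsupp.single_apply, Finsupp.single_apply,
      if_pos rfl, if_neg hi, add_zero]
  unfold nf
  rw [hT]
  simp only [Finset.card_singleton]
  rw [if_neg (by omega), if_neg (by omega), Finset.sum_singleton, hvi, hv0]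

lemma nf_beta (b : ℕ) :
    nf m k hm hk (Finsupp.single 0 b) = elb m k hm hk b := by
  have hT : T k (Finsupp.single 0 b) = ∅ := by
    ext j
    simp only [mem_T, Finset.notMem_empty, iff_false, not_and]
    intro hj0
    rw [Finsupp.single_apply, if_neg (fun h' : (0 : Fin (k + 1)) = j => hj0 h'.symm)]
    exact fun h => h rfl
  unfold nf
  rw [hT]
  simp only [Finset.card_empty]
  norm_num

lemma sum_shift (v : ℕ → (Idx m k →₀ ℤ)) (hv : ∀ s, m < s → v s = 0) (c : ℕ → ℤ) (d : ℕ) :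
    ∑ t ∈ Finset.range (m + 1), c t • v (d + 1 + t)
      = ∑ t ∈ Finset.range (m + 1), (if t = 0 then 0 else c (t - 1)) • v (d + t) := by
  rw [Finset.sum_range_succ' (fun t => (if t = 0 then (0 : ℤ) else c (t - 1)) • v (d + t)) m]
  simp only [Nat.succ_ne_zero, if_false, Nat.add_sub_cancel, reduceIte, zero_smul, add_zero]
  rw [Finset.sum_range_succ, hv (d + 1 + m) (by omega), smul_zero, add_zero]
  exact Finset.sum_congr rfl fun t _ => by rw [show d + (t + 1) = d + 1 + t by omega]

lemma F_eq (i : Fin (k + 1)) (e b d : ℕ) (h : e + b = d) :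
    F m k hm hk i e b
      = ∑ t ∈ Finset.range (m + 1),
          (((-1 : ℤ)) ^ (b + t) * ((b - 1 + t).choose t : ℤ)) • el m k hm hk i (d + t) := by
  unfold F
  exact Finset.sum_congr rfl fun t _ => by rw [show e + b + t = d + t by omega]

lemma relF_succ (i : Fin (k + 1)) (e b : ℕ) :
    F m k hm hk i (e + 1) (b + 2) + F m k hm hk i (e + 2) (b + 2)
      + F m k hm hk i (e + 2) (b + 1) = 0 := by
  have hv : ∀ s, m < s → el m k hm hk i s = 0 := fun s hs => el_eq_zero m k hm hk i hs
  have h2 := sum_shift m k (el m k hm hk i) hv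
      (fun t => ((-1 : ℤ)) ^ (b + 2 + t) * ((b + 2 - 1 + t).choose t : ℤ)) (e + b + 3)
  rw [F_eq m k hm hk i (e + 1) (b + 2) (e + b + 3) (by omega),
    F_eq m k hm hk i (e + 2) (b + 2) (e + b + 3 + 1) (by omega),
    F_eq m k hm hk i (e + 2) (b + 1) (e + b + 3) (by omega), h2,
    ← Finset.sum_add_distrib, ← Finset.sum_add_distrib]
  refine Finset.sum_eq_zero fun t _ => ?_
  rw [← add_smul, ← add_smul]
  apply smul_eq_zero_of_left
  rcases t with _ | s
  · rw [if_pos rfl]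
    simp only [Nat.add_zero, Nat.choose_zero_right, Nat.cast_one, mul_one, add_zero]
    rw [show b + 2 = (b + 1) + 1 by omega, pow_succ]
    ring
  · rw [if_neg (Nat.succ_ne_zero s),
      show s + 1 - 1 = s by omega,
      show b + 2 + (s + 1) = (b + s + 2) + 1 by omega,
      show b + 2 - 1 + (s + 1) = (b + s + 1) + 1 by omega,
      show b + 2 + s = (b + s + 1) + 1 by omega,
      show b + 2 - 1 + s = b + s + 1 by omega,
      show b + 1 + (s + 1) = (b + s + 1) + 1 by omega,
      show b + 1 - 1 + (s + 1) = b + s + 1 by omega,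
      show b + s + 2 = (b + s + 1) + 1 by omega,
      Nat.choose_succ_succ (b + s + 1) s]
    push_cast
    simp only [pow_succ]
    ring

lemma relF0 (i : Fin (k + 1)) (e : ℕ) :
    F m k hm hk i (e + 1) 1 + F m k hm hk i (e + 2) 1 + el m k hm hk i (e + 2) = 0 := by
  have hv : ∀ s, m < s → el m k hm hk i s = 0 := fun s hs => el_eq_zero m k hm hk i hs
  have h2 := sum_shift m k (el m k hm hk i) hv
      (fun t => ((-1 : ℤ)) ^ (1 + t) * ((1 - 1 + t).choose t : ℤ)) (e + 2)
  have h3 : el m k hm hk i (e + 2)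
      = ∑ t ∈ Finset.range (m + 1), (if t = 0 then (1 : ℤ) else 0) • el m k hm hk i (e + 2 + t) := by
    rw [Finset.sum_eq_single 0 (fun t _ ht => by rw [if_neg ht, zero_smul])
      (fun h => absurd (Finset.mem_range.2 (by omega)) h)]
    simp
  rw [F_eq m k hm hk i (e + 1) 1 (e + 2) (by omega),
    F_eq m k hm hk i (e + 2) 1 (e + 2 + 1) (by omega), h2, h3,
    ← Finset.sum_add_distrib, ← Finset.sum_add_distrib]
  refine Finset.sum_eq_zero fun t _ => ?_
  rw [← add_smul, ← add_smul]
  apply smul_eq_zero_of_left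
  rcases t with _ | s
  · norm_num
  · rw [if_neg (Nat.succ_ne_zero s), if_neg (Nat.succ_ne_zero s),
      show s + 1 - 1 = s by omega,
      show 1 - 1 + (s + 1) = s + 1 by omega,
      show 1 - 1 + s = s by omega,
      Nat.choose_self, Nat.choose_self,
      show 1 + (s + 1) = (1 + s) + 1 by omega, pow_succ]
    push_cast
    ring

lemma relG (i : Fin (k + 1)) (e b : ℕ) :
    G m k hm hk i (e + 1) (b + 1) + G m k hm hk i (e + 2) (b + 1)
      + G m k hm hk i (e + 2) b = 0 := by
  unfold G
  rcases b with _ | b'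
  · norm_num
    exact relF0 m k hm hk i e
  · rw [if_neg (Nat.succ_ne_zero _), if_neg (Nat.succ_ne_zero _), if_neg (Nat.succ_ne_zero _)]
    exact relF_succ m k hm hk i e b'

lemma apply_add_single (a : Fin (k + 1) →₀ ℕ) (i j : Fin (k + 1)) (e : ℕ) :
    (a + Finsupp.single i e) j = a j + if i = j then e else 0 := by
  rw [Finsupp.add_apply, Finsupp.single_apply]

lemma shift_eq (a : Fin (k + 1) →₀ ℕ) (i : Fin (k + 1)) (hi : i ≠ 0)
    (hex : ∀ j, j ≠ 0 → j ≠ i → a j = 0) (e b : ℕ) :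
    a + Finsupp.single i e + Finsupp.single 0 b
      = Finsupp.single 0 (a 0 + b) + Finsupp.single i (a i + e) := by
  ext j
  simp only [Finsupp.add_apply, Finsupp.single_apply]
  by_cases hj0 : j = 0 <;> by_cases hji : j = i
  · exact absurd (hji.symm.trans hj0) hi
  · subst hj0
    rw [if_neg (fun h : i = 0 => hi h), if_pos rfl, if_pos rfl, if_neg (fun h : i = 0 => hi h)]
    omega
  · subst hji
    rw [if_pos rfl, if_neg (fun h : (0 : Fin (k + 1)) = j => hj0 h.symm),
      if_neg (fun h : (0 : Fin (k + 1)) = j => hj0 h.symm), if_pos rfl]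
    omega
  · rw [hex j hj0 hji, if_neg (fun h : i = j => hji h.symm),
      if_neg (fun h : (0 : Fin (k + 1)) = j => hj0 h.symm),
      if_neg (fun h : (0 : Fin (k + 1)) = j => hj0 h.symm),
      if_neg (fun h : i = j => hji h.symm)]
    omega

lemma shift_eq' (a : Fin (k + 1) →₀ ℕ) (i : Fin (k + 1)) (hi : i ≠ 0)
    (hex : ∀ j, j ≠ 0 → j ≠ i → a j = 0) (e : ℕ) :
    a + Finsupp.single i e = Finsupp.single 0 (a 0) + Finsupp.single i (a i + e) := by
  have h := shift_eq k a i hi hex e 0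
  rw [Finsupp.single_zero, add_zero, add_zero] at h
  exact h

lemma shift_eq0 (a : Fin (k + 1) →₀ ℕ) (i : Fin (k + 1)) (hi : i ≠ 0)
    (hex : ∀ j, j ≠ 0 → j ≠ i → a j = 0) (b : ℕ) :
    a + Finsupp.single 0 b = Finsupp.single 0 (a 0 + b) + Finsupp.single i (a i) := by
  have h := shift_eq k a i hi hex 0 b
  rw [Finsupp.single_zero, add_zero, add_zero] at h
  exact h

lemma el_m (i : Fin (k + 1)) (hi : (i : ℕ) ≠ 0) :
    el m k hm hk i m = Finsupp.single (bm m k hm hk) 1 := by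
  unfold el
  rw [dif_neg (by omega), dif_neg hi, dif_neg (by omega), dif_pos rfl]

lemma G_m_eq (i j : Fin (k + 1)) (hi : (i : ℕ) ≠ 0) (hj : (j : ℕ) ≠ 0) (b : ℕ) :
    G m k hm hk i m b = G m k hm hk j m b := by
  unfold G
  by_cases hb : b = 0
  · rw [if_pos hb, if_pos hb, el_m m k hm hk i hi, el_m m k hm hk j hj]
  · rw [if_neg hb, if_neg hb, F_eq_zero m k hm hk i (by omega), F_eq_zero m k hm hk j (by omega)]

lemma nf_relI (a : Fin (k + 1) →₀ ℕ) (i j : Fin (k + 1)) (hi : i ≠ 0) (hj : j ≠ 0)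
    (hij : i ≠ j) :
    nf m k hm hk (a + Finsupp.single i 1 + Finsupp.single j 1) = 0 := by
  refine nf_eq_zero_of_two m k hm hk hij hi hj ?_ ?_
  · rw [apply_add_single, apply_add_single, if_pos rfl, if_neg (fun h : j = i => hij h.symm)]
    omega
  · rw [apply_add_single, apply_add_single, if_neg hij, if_pos rfl]
    omega

lemma nf_relII (a : Fin (k + 1) →₀ ℕ) (i : Fin (k + 1)) (hi : i ≠ 0) :
    nf m k hm hk (a + Finsupp.single i 1 + Finsupp.single 0 1)
      + nf m k hm hk (a + Finsupp.single i 2 + Finsupp.single 0 1)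
      + nf m k hm hk (a + Finsupp.single i 2) = 0 := by
  by_cases hex : ∃ j, j ≠ 0 ∧ j ≠ i ∧ a j ≠ 0
  · obtain ⟨j, hj0, hji, hja⟩ := hex
    have hij : i ≠ j := fun h => hji h.symm
    have h1 : nf m k hm hk (a + Finsupp.single i 1 + Finsupp.single 0 1) = 0 := by
      refine nf_eq_zero_of_two m k hm hk hij hi hj0 ?_ ?_
      · rw [apply_add_single, apply_add_single, if_pos rfl,
          if_neg (fun h : (0 : Fin (k + 1)) = i => hi h.symm)]
        omega
      · rw [apply_add_single, apply_add_single, if_neg hij,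
          if_neg (fun h : (0 : Fin (k + 1)) = j => hj0 h.symm)]
        omega
    have h2 : nf m k hm hk (a + Finsupp.single i 2 + Finsupp.single 0 1) = 0 := by
      refine nf_eq_zero_of_two m k hm hk hij hi hj0 ?_ ?_
      · rw [apply_add_single, apply_add_single, if_pos rfl,
          if_neg (fun h : (0 : Fin (k + 1)) = i => hi h.symm)]
        omega
      · rw [apply_add_single, apply_add_single, if_neg hij,
          if_neg (fun h : (0 : Fin (k + 1)) = j => hj0 h.symm)]
        omega
    have h3 : nf m k hm hk (a + Finsupp.single i 2) = 0 := by
      refine nf_eq_zero_of_two m k hm hk hij hi hj0 ?_ ?_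
      · rw [apply_add_single, if_pos rfl]
        omega
      · rw [apply_add_single, if_neg hij]
        omega
    rw [h1, h2, h3]
    simp
  · push_neg at hex
    rw [shift_eq k a i hi hex 1 1, shift_eq k a i hi hex 2 1, shift_eq' k a i hi hex 2,
      nf_single m k hm hk i hi (by omega) (a 0 + 1),
      nf_single m k hm hk i hi (by omega) (a 0 + 1),
      nf_single m k hm hk i hi (by omega) (a 0)]
    exact relG m k hm hk i (a i) (a 0)

lemma val1 (hk' : 1 ≤ k) : ((1 : Fin (k + 1)) : ℕ) = 1 := by
  rw [Fin.val_one']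
  exact Nat.mod_eq_of_lt (by omega)

lemma one_ne_zero' (hk' : 1 ≤ k) : (1 : Fin (k + 1)) ≠ 0 :=
  Fin.ne_of_val_ne (by rw [val1 k hk', Fin.val_zero]; omega)

lemma nf_relIII (a : Fin (k + 1) →₀ ℕ) (i : Fin (k + 1)) (hi2 : 2 ≤ (i : ℕ)) :
    nf m k hm hk (a + Finsupp.single i m) = nf m k hm hk (a + Finsupp.single 1 m) := by
  have hi0 : i ≠ 0 := Fin.ne_of_val_ne (by rw [Fin.val_zero]; omega)
  have h10 : (1 : Fin (k + 1)) ≠ 0 := one_ne_zero' k hk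
  have hi1 : i ≠ 1 := Fin.ne_of_val_ne (by rw [val1 k hk]; omega)
  by_cases hex : ∃ j, j ≠ 0 ∧ j ≠ i ∧ j ≠ 1 ∧ a j ≠ 0
  · obtain ⟨j, hj0, hji, hj1, hja⟩ := hex
    have hL : nf m k hm hk (a + Finsupp.single i m) = 0 := by
      refine nf_eq_zero_of_two m k hm hk (show j ≠ i from hji) hj0 hi0 ?_ ?_
      · rw [apply_add_single, if_neg (fun h : i = j => hji h.symm)]
        omega
      · rw [apply_add_single, if_pos rfl]
        omega
    have hR : nf m k hm hk (a + Finsupp.single 1 m) = 0 := by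
      refine nf_eq_zero_of_two m k hm hk (show j ≠ (1 : Fin (k + 1)) from hj1) hj0 h10 ?_ ?_
      · rw [apply_add_single, if_neg (fun h : (1 : Fin (k + 1)) = j => hj1 h.symm)]
        omega
      · rw [apply_add_single, if_pos rfl]
        omega
    rw [hL, hR]
  · push_neg at hex
    by_cases hai : a i = 0 <;> by_cases ha1 : a 1 = 0
    · have hz : ∀ j, j ≠ 0 → a j = 0 := fun j hj => by
        by_cases h1 : j = i
        · exact h1 ▸ hai
        · by_cases h2 : j = 1
          · exact h2 ▸ ha1
          · exact hex j hj h1 h2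
      have hdi : a + Finsupp.single i m = Finsupp.single 0 (a 0) + Finsupp.single i m := by
        have := shift_eq' k a i hi0 (fun j hj _ => hz j hj) m
        rw [hai] at this
        simpa using this
      have hd1 : a + Finsupp.single 1 m = Finsupp.single 0 (a 0) + Finsupp.single 1 m := by
        have := shift_eq' k a 1 h10 (fun j hj _ => hz j hj) m
        rw [ha1] at this
        simpa using this
      rw [hdi, hd1, nf_single m k hm hk i hi0 (by omega) (a 0),
        nf_single m k hm hk 1 h10 (by omega) (a 0)]
      exact G_m_eq m k hm hk i 1 (by omega) (by rw [val1 k hk]; omega) (a 0)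
    · -- a i = 0, a 1 ≠ 0
      have hz : ∀ j, j ≠ 0 → j ≠ 1 → a j = 0 := fun j hj hj1 => by
        by_cases h1 : j = i
        · exact h1 ▸ hai
        · exact hex j hj h1 hj1
      have hL : nf m k hm hk (a + Finsupp.single i m) = 0 := by
        refine nf_eq_zero_of_two m k hm hk (show (1 : Fin (k+1)) ≠ i from fun h => hi1 h.symm)
          h10 hi0 ?_ ?_
        · rw [apply_add_single, if_neg hi1]
          omega
        · rw [apply_add_single, if_pos rfl]
          omega
      have hR : nf m k hm hk (a + Finsupp.single 1 m) = 0 := by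
        rw [shift_eq' k a 1 h10 hz m, nf_single m k hm hk 1 h10 (by omega) (a 0)]
        exact G_eq_zero m k hm hk 1 (by omega)
      rw [hL, hR]
    · -- a i ≠ 0, a 1 = 0
      have hz : ∀ j, j ≠ 0 → j ≠ i → a j = 0 := fun j hj hji => by
        by_cases h2 : j = 1
        · exact h2 ▸ ha1
        · exact hex j hj hji h2
      have hL : nf m k hm hk (a + Finsupp.single i m) = 0 := by
        rw [shift_eq' k a i hi0 hz m, nf_single m k hm hk i hi0 (by omega) (a 0)]
        exact G_eq_zero m k hm hk i (by omega)
      have hR : nf m k hm hk (a + Finsupp.single 1 m) = 0 := by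
        refine nf_eq_zero_of_two m k hm hk (show i ≠ (1 : Fin (k+1)) from hi1) hi0 h10 ?_ ?_
        · rw [apply_add_single, if_neg (fun h : (1 : Fin (k+1)) = i => hi1 h.symm)]
          omega
        · rw [apply_add_single, if_pos rfl]
          omega
      rw [hL, hR]
    · have hL : nf m k hm hk (a + Finsupp.single i m) = 0 := by
        refine nf_eq_zero_of_two m k hm hk (show (1 : Fin (k+1)) ≠ i from fun h => hi1 h.symm)
          h10 hi0 ?_ ?_
        · rw [apply_add_single, if_neg hi1]
          omega
        · rw [apply_add_single, if_pos rfl]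
          omega
      have hR : nf m k hm hk (a + Finsupp.single 1 m) = 0 := by
        refine nf_eq_zero_of_two m k hm hk (show i ≠ (1 : Fin (k+1)) from hi1) hi0 h10 ?_ ?_
        · rw [apply_add_single, if_neg (fun h : (1 : Fin (k+1)) = i => hi1 h.symm)]
          omega
        · rw [apply_add_single, if_pos rfl]
          omega
      rw [hL, hR]

lemma nf_relIV (a : Fin (k + 1) →₀ ℕ) :
    nf m k hm hk (a + Finsupp.single 0 m)
      = ((-1 : ℤ) ^ m * ((k : ℤ) - 1)) • nf m k hm hk (a + Finsupp.single 1 m) := by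
  have h10 : (1 : Fin (k + 1)) ≠ 0 := one_ne_zero' k hk
  by_cases hex : ∃ j, j ≠ 0 ∧ a j ≠ 0
  · obtain ⟨j, hj0, hja⟩ := hex
    have hL : nf m k hm hk (a + Finsupp.single 0 m) = 0 := by
      by_cases hex2 : ∃ j', j' ≠ 0 ∧ j' ≠ j ∧ a j' ≠ 0
      · obtain ⟨j', hj'0, hj'j, hj'a⟩ := hex2
        refine nf_eq_zero_of_two m k hm hk (show j' ≠ j from hj'j) hj'0 hj0 ?_ ?_
        · rw [apply_add_single, if_neg (fun h : (0 : Fin (k + 1)) = j' => hj'0 h.symm)]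
          omega
        · rw [apply_add_single, if_neg (fun h : (0 : Fin (k + 1)) = j => hj0 h.symm)]
          omega
      · push_neg at hex2
        rw [shift_eq0 k a j hj0 (fun j' h1 h2 => hex2 j' h1 h2) m,
          nf_single m k hm hk j hj0 hja (a 0 + m)]
        exact G_eq_zero m k hm hk j (by omega)
    have hR : nf m k hm hk (a + Finsupp.single 1 m) = 0 := by
      by_cases hj1 : j = 1
      · subst hj1
        by_cases hex2 : ∃ j', j' ≠ 0 ∧ j' ≠ (1 : Fin (k + 1)) ∧ a j' ≠ 0
        · obtain ⟨j', hj'0, hj'j, hj'a⟩ := hex2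
          refine nf_eq_zero_of_two m k hm hk hj'j hj'0 h10 ?_ ?_
          · rw [apply_add_single, if_neg (fun h : (1 : Fin (k + 1)) = j' => hj'j h.symm)]
            omega
          · rw [apply_add_single, if_pos rfl]
            omega
        · push_neg at hex2
          rw [shift_eq' k a 1 h10 (fun j' h1 h2 => hex2 j' h1 h2) m,
            nf_single m k hm hk 1 h10 (by omega) (a 0)]
          exact G_eq_zero m k hm hk 1 (by omega)
      · refine nf_eq_zero_of_two m k hm hk (show j ≠ (1 : Fin (k + 1)) from hj1) hj0 h10 ?_ ?_
        · rw [apply_add_single, if_neg (fun h : (1 : Fin (k + 1)) = j => hj1 h.symm)]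
          omega
        · rw [apply_add_single, if_pos rfl]
          omega
    rw [hL, hR, smul_zero]
  · push_neg at hex
    have hd0 : a + Finsupp.single 0 m = Finsupp.single (0 : Fin (k + 1)) (a 0 + m) := by
      have := shift_eq0 k a 1 h10 (fun j h1 _ => hex j h1) m
      rw [hex 1 h10, Finsupp.single_zero, add_zero] at this
      exact this
    have hd1 : a + Finsupp.single 1 m
        = Finsupp.single 0 (a 0) + Finsupp.single (1 : Fin (k + 1)) m := by
      have := shift_eq' k a 1 h10 (fun j h1 _ => hex j h1) m
      rw [hex 1 h10] at this
      simpa using this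
    rw [hd0, hd1, nf_beta m k hm hk (a 0 + m), nf_single m k hm hk 1 h10 (by omega) (a 0)]
    by_cases hb : a 0 = 0
    · rw [hb]
      have hL : elb m k hm hk (0 + m)
          = ((-1 : ℤ) ^ m * ((k : ℤ) - 1)) • Finsupp.single (bm m k hm hk) 1 := by
        unfold elb
        rw [dif_neg (by omega), if_pos (by omega)]
      have hR : G m k hm hk 1 m 0 = Finsupp.single (bm m k hm hk) 1 := by
        unfold G
        rw [if_pos rfl]
        exact el_m m k hm hk 1 (by rw [val1 k hk]; omega)
      rw [hL, hR]
    · rw [elb_eq_zero m k hm hk (by omega)]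
      have hR : G m k hm hk 1 m (a 0) = 0 := by
        unfold G
        rw [if_neg hb]
        exact F_eq_zero m k hm hk 1 (by omega)
      rw [hR, smul_zero]

lemma nf_relV (a : Fin (k + 1) →₀ ℕ) :
    nf m k hm hk (a + Finsupp.single 0 (m + 1)) = 0 := by
  have h10 : (1 : Fin (k + 1)) ≠ 0 := one_ne_zero' k hk
  by_cases hex : ∃ j, j ≠ 0 ∧ a j ≠ 0
  · obtain ⟨j, hj0, hja⟩ := hex
    by_cases hex2 : ∃ j', j' ≠ 0 ∧ j' ≠ j ∧ a j' ≠ 0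
    · obtain ⟨j', hj'0, hj'j, hj'a⟩ := hex2
      refine nf_eq_zero_of_two m k hm hk (show j' ≠ j from hj'j) hj'0 hj0 ?_ ?_
      · rw [apply_add_single, if_neg (fun h : (0 : Fin (k + 1)) = j' => hj'0 h.symm)]
        omega
      · rw [apply_add_single, if_neg (fun h : (0 : Fin (k + 1)) = j => hj0 h.symm)]
        omega
    · push_neg at hex2
      rw [shift_eq0 k a j hj0 (fun j' h1 h2 => hex2 j' h1 h2) (m + 1),
        nf_single m k hm hk j hj0 hja (a 0 + (m + 1))]
      exact G_eq_zero m k hm hk j (by omega)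
  · push_neg at hex
    have hd0 : a + Finsupp.single 0 (m + 1) = Finsupp.single (0 : Fin (k + 1)) (a 0 + (m + 1)) := by
      have := shift_eq0 k a 1 h10 (fun j h1 _ => hex j h1) (m + 1)
      rw [hex 1 h10, Finsupp.single_zero, add_zero] at this
      exact this
    rw [hd0, nf_beta m k hm hk (a 0 + (m + 1)), elb_eq_zero m k hm hk (by omega)]

lemma nf_relVI (a : Fin (k + 1) →₀ ℕ) :
    nf m k hm hk (a + Finsupp.single 1 (m + 1)) = 0 := by
  have h10 : (1 : Fin (k + 1)) ≠ 0 := one_ne_zero' k hk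
  by_cases hex : ∃ j, j ≠ 0 ∧ j ≠ 1 ∧ a j ≠ 0
  · obtain ⟨j, hj0, hj1, hja⟩ := hex
    refine nf_eq_zero_of_two m k hm hk (show j ≠ (1 : Fin (k + 1)) from hj1) hj0 h10 ?_ ?_
    · rw [apply_add_single, if_neg (fun h : (1 : Fin (k + 1)) = j => hj1 h.symm)]
      omega
    · rw [apply_add_single, if_pos rfl]
      omega
  · push_neg at hex
    rw [shift_eq' k a 1 h10 hex (m + 1), nf_single m k hm hk 1 h10 (by omega) (a 0)]
    exact G_eq_zero m k hm hk 1 (by omega)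

lemma nf_basisElt (p : Idx m k) :
    nf m k hm hk (Finsupp.single p.1.1 p.1.2) = Finsupp.single p 1 := by
  obtain ⟨⟨i, j⟩, hp⟩ := p
  rcases hp with ⟨h0, hj⟩ | ⟨h1, hj1, hjm⟩ | ⟨h2, hj1, hjm⟩
  · simp only at h0 hj ⊢
    subst h0
    rw [nf_beta m k hm hk j]
    unfold elb
    rw [dif_pos hj]
    rfl
  · simp only at h1 hj1 hjm ⊢
    have hi0 : i ≠ 0 := Fin.ne_of_val_ne (by rw [Fin.val_zero]; omega)
    have hns : Finsupp.single i j
        = Finsupp.single (0 : Fin (k + 1)) 0 + Finsupp.single i j := by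
      rw [Finsupp.single_zero, zero_add]
    rw [hns, nf_single m k hm hk i hi0 (by omega) 0]
    unfold G
    rw [if_pos rfl]
    unfold el
    rw [dif_neg (by omega), dif_neg (by omega)]
    by_cases hj : j ≤ m - 1
    · rw [dif_pos hj]
      rfl
    · have hjm' : j = m := by omega
      rw [dif_neg hj, dif_pos hjm']
      have hfin : (⟨1, by omega⟩ : Fin (k + 1)) = i := Fin.val_injective (by simp [h1])
      refine congrArg (fun q : Idx m k => Finsupp.single q (1 : ℤ)) (Subtype.ext ?_)
      show ((⟨1, by omega⟩ : Fin (k + 1)), m) = (i, j)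
      rw [hfin, hjm']
  · simp only at h2 hj1 hjm ⊢
    have hi0 : i ≠ 0 := Fin.ne_of_val_ne (by rw [Fin.val_zero]; omega)
    have hns : Finsupp.single i j
        = Finsupp.single (0 : Fin (k + 1)) 0 + Finsupp.single i j := by
      rw [Finsupp.single_zero, zero_add]
    rw [hns, nf_single m k hm hk i hi0 (by omega) 0]
    unfold G
    rw [if_pos rfl]
    unfold el
    rw [dif_neg (by omega), dif_neg (by omega), dif_pos hjm]
    rfl

def genSet : Set (MvPolynomial (Fin (k + 1)) ℤ) :=
  {f | ∃ i j : Fin (k + 1), 1 ≤ (i : ℕ) ∧ (i : ℕ) < (j : ℕ) ∧ f = X i * X j} ∪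
  {f | ∃ i : Fin (k + 1), 1 ≤ (i : ℕ) ∧ f = X i * X 0 + X i ^ 2 * X 0 + X i ^ 2} ∪
  {f | ∃ i : Fin (k + 1), 2 ≤ (i : ℕ) ∧ f = X i ^ m - X 1 ^ m} ∪
  {X 0 ^ m - C ((-1) ^ m * ((k : ℤ) - 1)) * X 1 ^ m} ∪
  {X 0 ^ (m + 1)} ∪ {X 1 ^ (m + 1)}

noncomputable def phi : MvPolynomial (Fin (k + 1)) ℤ →ₗ[ℤ] (Idx m k →₀ ℤ) :=
  (basisMonomials (Fin (k + 1)) ℤ).constr ℤ (nf m k hm hk)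

lemma basisMon_eq (a : Fin (k + 1) →₀ ℕ) :
    (basisMonomials (Fin (k + 1)) ℤ) a = monomial a 1 := by
  rw [coe_basisMonomials]

lemma phi_monomial (a : Fin (k + 1) →₀ ℕ) :
    phi m k hm hk (monomial a 1) = nf m k hm hk a := by
  rw [← basisMon_eq]
  exact (basisMonomials (Fin (k + 1)) ℤ).constr_basis ℤ (nf m k hm hk) a

lemma phi_monomial' (a : Fin (k + 1) →₀ ℕ) (c : ℤ) :
    phi m k hm hk (monomial a c) = c • nf m k hm hk a := by
  have h : (monomial a c : MvPolynomial (Fin (k + 1)) ℤ) = c • monomial a 1 := by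
    rw [MvPolynomial.smul_monomial, smul_eq_mul, mul_one]
  rw [h, map_smul, phi_monomial]

lemma val_ne0 (i : Fin (k + 1)) (h : i ≠ 0) : 1 ≤ (i : ℕ) :=
  Nat.one_le_iff_ne_zero.2 fun hv => h (Fin.val_injective (by rw [hv, Fin.val_zero]))

lemma ne0_of_val (i : Fin (k + 1)) (h : 1 ≤ (i : ℕ)) : i ≠ 0 :=
  Fin.ne_of_val_ne (by rw [Fin.val_zero]; omega)

lemma mon_mul_Xpow (a : Fin (k + 1) →₀ ℕ) (i : Fin (k + 1)) (e : ℕ) :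
    (monomial a 1 : MvPolynomial (Fin (k + 1)) ℤ) * X i ^ e
      = monomial (a + Finsupp.single i e) 1 := by
  rw [X_pow_eq_monomial, monomial_mul, mul_one]

lemma phi_mul_gen (g : MvPolynomial (Fin (k + 1)) ℤ) (hg : g ∈ genSet m k)
    (p : MvPolynomial (Fin (k + 1)) ℤ) : phi m k hm hk (p * g) = 0 := by
  suffices h : ∀ a : Fin (k + 1) →₀ ℕ, phi m k hm hk (monomial a 1 * g) = 0 by
    have hcomp : (phi m k hm hk).comp (LinearMap.mulRight ℤ g) = 0 := by
      apply Module.Basis.ext (basisMonomials (Fin (k + 1)) ℤ)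
      intro a
      rw [LinearMap.comp_apply, LinearMap.mulRight_apply, basisMon_eq, h a,
        LinearMap.zero_apply]
    have := LinearMap.congr_fun hcomp p
    rwa [LinearMap.comp_apply, LinearMap.mulRight_apply, LinearMap.zero_apply] at this
  intro a
  simp only [genSet, Set.mem_union, Set.mem_setOf_eq, Set.mem_singleton_iff] at hg
  rcases hg with (((((⟨i, j, hi, hij, rfl⟩ | ⟨i, hi, rfl⟩) | ⟨i, hi, rfl⟩) | rfl) | rfl) | rfl)
  · -- X i * X j
    have hij' : i ≠ j := Fin.ne_of_val_ne (by omega)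
    have hexp : (monomial a 1 : MvPolynomial (Fin (k + 1)) ℤ) * (X i * X j)
        = monomial (a + Finsupp.single i 1 + Finsupp.single j 1) 1 := by
      have h1 : (monomial a 1 : MvPolynomial (Fin (k + 1)) ℤ) * (X i * X j)
          = monomial a 1 * X i ^ 1 * X j ^ 1 := by ring
      rw [h1, mon_mul_Xpow, mon_mul_Xpow]
    rw [hexp, phi_monomial]
    exact nf_relI m k hm hk a i j (ne0_of_val k i hi) (ne0_of_val k j (by omega)) hij'
  · -- relation (ii)
    have hexp : (monomial a 1 : MvPolynomial (Fin (k + 1)) ℤ)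
          * (X i * X 0 + X i ^ 2 * X 0 + X i ^ 2)
        = monomial (a + Finsupp.single i 1 + Finsupp.single 0 1) 1
          + monomial (a + Finsupp.single i 2 + Finsupp.single 0 1) 1
          + monomial (a + Finsupp.single i 2) 1 := by
      have h1 : (monomial a 1 : MvPolynomial (Fin (k + 1)) ℤ)
            * (X i * X 0 + X i ^ 2 * X 0 + X i ^ 2)
          = monomial a 1 * X i ^ 1 * X 0 ^ 1 + monomial a 1 * X i ^ 2 * X 0 ^ 1
            + monomial a 1 * X i ^ 2 := by ring
      rw [h1, mon_mul_Xpow, mon_mul_Xpow, mon_mul_Xpow, mon_mul_Xpow]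
    rw [hexp, map_add, map_add, phi_monomial, phi_monomial, phi_monomial]
    exact nf_relII m k hm hk a i (ne0_of_val k i hi)
  · -- relation (iii)
    have hexp : (monomial a 1 : MvPolynomial (Fin (k + 1)) ℤ) * (X i ^ m - X 1 ^ m)
        = monomial (a + Finsupp.single i m) 1 - monomial (a + Finsupp.single 1 m) 1 := by
      rw [mul_sub, mon_mul_Xpow, mon_mul_Xpow]
    rw [hexp, map_sub, phi_monomial, phi_monomial, nf_relIII m k hm hk a i hi, sub_self]
  · -- relation (iv)
    have hexp : (monomial a 1 : MvPolynomial (Fin (k + 1)) ℤ)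
          * (X 0 ^ m - C ((-1) ^ m * ((k : ℤ) - 1)) * X 1 ^ m)
        = monomial (a + Finsupp.single 0 m) 1
          - monomial (a + Finsupp.single 1 m) ((-1) ^ m * ((k : ℤ) - 1)) := by
      rw [mul_sub, mon_mul_Xpow]
      congr 1
      have h1 : (monomial a 1 : MvPolynomial (Fin (k + 1)) ℤ)
            * (C ((-1) ^ m * ((k : ℤ) - 1)) * X 1 ^ m)
          = C ((-1) ^ m * ((k : ℤ) - 1)) * (monomial a 1 * X 1 ^ m) := by ring
      rw [h1, mon_mul_Xpow, C_mul_monomial, mul_one]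
    rw [hexp, map_sub, phi_monomial, phi_monomial', nf_relIV m k hm hk a, sub_self]
  · rw [mon_mul_Xpow, phi_monomial]
    exact nf_relV m k hm hk a
  · rw [mon_mul_Xpow, phi_monomial]
    exact nf_relVI m k hm hk a

lemma phi_ker {x : MvPolynomial (Fin (k + 1)) ℤ} (hx : x ∈ Ideal.span (genSet m k)) :
    phi m k hm hk x = 0 := by
  have key : ∀ y ∈ Ideal.span (genSet m k), ∀ p, phi m k hm hk (p * y) = 0 := by
    intro y hy
    refine Submodule.span_induction (fun g hg p => phi_mul_gen m k hm hk g hg p)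
      (fun p => by rw [mul_zero, map_zero])
      (fun x y _ _ ihx ihy p => by rw [mul_add, map_add, ihx, ihy, add_zero])
      (fun c x _ ih p => by
        rw [smul_eq_mul, show p * (c * x) = (p * c) * x by ring]
        exact ih (p * c)) hy
  have h := key x hx 1
  rwa [one_mul] at h

end Stmt13

set_option maxHeartbeats 4000000 in
open Stmt13 in
/-- Proposition 2.5 / Theorem 2.7: the K-theory ring `K(N_{n,k})` of the polygon
space with genetic code `{{n,k}}`, where `m = n-3`.  Variables: `X 0 = β`,
`X i = αᵢ` for `1 ≤ i ≤ k`.  The quotient `B` of `ℤ[α₁,…,α_k,β]` by the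
relations `αᵢαⱼ = 0` (`i ≠ j`), `αᵢβ + αᵢ²β + αᵢ² = 0`, `αᵢ^m = α₁^m`,
`β^m = (-1)^m (k-1) α₁^m`, `β^{m+1} = 0 = α₁^{m+1}` is free abelian with basis
`{1} ∪ {α₁^j : 1 ≤ j ≤ m} ∪ {αᵢ^j : 2 ≤ i ≤ k, 1 ≤ j ≤ m-1} ∪ {β^j : 1 ≤ j ≤ m-1}`. -/
theorem stmt_13 (m k : ℕ) (hm : 2 ≤ m) (hk : 1 ≤ k)
    (I : Ideal (MvPolynomial (Fin (k + 1)) ℤ))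
    (hI : I = Ideal.span
      ({f | ∃ i j : Fin (k + 1), 1 ≤ (i : ℕ) ∧ (i : ℕ) < (j : ℕ) ∧ f = X i * X j} ∪
       {f | ∃ i : Fin (k + 1), 1 ≤ (i : ℕ) ∧
          f = X i * X 0 + X i ^ 2 * X 0 + X i ^ 2} ∪
       {f | ∃ i : Fin (k + 1), 2 ≤ (i : ℕ) ∧ f = X i ^ m - X 1 ^ m} ∪
       {X 0 ^ m - C ((-1) ^ m * ((k : ℤ) - 1)) * X 1 ^ m} ∪
       {X 0 ^ (m + 1)} ∪ {X 1 ^ (m + 1)})) :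
    ∃ b : Module.Basis
        {p : Fin (k + 1) × ℕ //
          (p.1 = 0 ∧ p.2 ≤ m - 1) ∨
          ((p.1 : ℕ) = 1 ∧ 1 ≤ p.2 ∧ p.2 ≤ m) ∨
          (2 ≤ (p.1 : ℕ) ∧ 1 ≤ p.2 ∧ p.2 ≤ m - 1)} ℤ
        (MvPolynomial (Fin (k + 1)) ℤ ⧸ I),
      ∀ p, b p = Ideal.Quotient.mk I (X p.1.1) ^ p.1.2 := by
  have hI' : I = Ideal.span (genSet m k) := hI
  set v : Idx m k → (MvPolynomial (Fin (k + 1)) ℤ ⧸ I) :=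
    fun p => Ideal.Quotient.mk I (X p.1.1) ^ p.1.2 with hv
  set mkq := Ideal.Quotient.mk I with hmkq
  set Sp := Submodule.span ℤ (Set.range v) with hSp
  -- relations in the quotient
  have hgen : ∀ g ∈ genSet m k, mkq g = 0 := fun g hg => by
    rw [hmkq, Ideal.Quotient.eq_zero_iff_mem, hI']
    exact Ideal.subset_span hg
  have hr1 : ∀ i j : Fin (k + 1), 1 ≤ (i : ℕ) → (i : ℕ) < (j : ℕ) → mkq (X i * X j) = 0 :=
    fun i j hi hij => hgen _ (Or.inl (Or.inl (Or.inl (Or.inl (Or.inl ⟨i, j, hi, hij, rfl⟩)))))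
  have hr2 : ∀ i : Fin (k + 1), 1 ≤ (i : ℕ) →
      mkq (X i * X 0 + X i ^ 2 * X 0 + X i ^ 2) = 0 :=
    fun i hi => hgen _ (Or.inl (Or.inl (Or.inl (Or.inl (Or.inr ⟨i, hi, rfl⟩)))))
  have hr3 : ∀ i : Fin (k + 1), 2 ≤ (i : ℕ) → mkq (X i ^ m) = mkq (X 1 ^ m) := by
    intro i hi
    have hmem3 : (X i ^ m - X 1 ^ m : MvPolynomial (Fin (k + 1)) ℤ)
        ∈ {f : MvPolynomial (Fin (k + 1)) ℤ |
            ∃ i : Fin (k + 1), 2 ≤ (i : ℕ) ∧ f = X i ^ m - X 1 ^ m} := ⟨i, hi, rfl⟩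
    have := hgen _ (Or.inl (Or.inl (Or.inl (Or.inr hmem3))))
    rwa [map_sub, sub_eq_zero] at this
  have hmkl : ∀ (c : ℤ) (y : MvPolynomial (Fin (k + 1)) ℤ),
      mkq (c • y) = c • mkq y := fun c y =>
    ((Ideal.Quotient.mk I).toAddMonoidHom.toIntLinearMap).map_smul c y
  have hr4 : mkq (X 0 ^ m) = ((-1 : ℤ) ^ m * ((k : ℤ) - 1)) • mkq (X 1 ^ m) := by
    have hmem4 : (X 0 ^ m - C ((-1) ^ m * ((k : ℤ) - 1)) * X 1 ^ m : MvPolynomial (Fin (k + 1)) ℤ)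
        ∈ ({X 0 ^ m - C ((-1) ^ m * ((k : ℤ) - 1)) * X 1 ^ m} :
            Set (MvPolynomial (Fin (k + 1)) ℤ)) := rfl
    have := hgen _ (Or.inl (Or.inl (Or.inr hmem4)))
    rw [map_sub, sub_eq_zero] at this
    rw [this, C_mul', hmkl]
  have hr5 : mkq (X 0 ^ (m + 1)) = 0 := hgen _ (Or.inl (Or.inr rfl))
  have hr6 : mkq (X 1 ^ (m + 1)) = 0 := hgen _ (Or.inr rfl)
  have h1fin : (1 : Fin (k + 1)) = ⟨1, by omega⟩ :=
    Fin.val_injective (by rw [val1 k hk])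
  have hXpow : ∀ i : Fin (k + 1), i ≠ 0 → mkq (X i ^ (m + 1)) = 0 := by
    intro i hi
    by_cases h1 : (i : ℕ) = 1
    · have hieq : i = 1 := Fin.val_injective (by rw [val1 k hk, h1])
      rw [hieq]; exact hr6
    · have hi2 : 2 ≤ (i : ℕ) := by have := val_ne0 k i hi; omega
      have hsplit : X (1 : Fin (k + 1)) ^ m
          = (X 1 ^ (m - 1) * X 1 : MvPolynomial (Fin (k + 1)) ℤ) := by
        conv_lhs => rw [show m = m - 1 + 1 by omega]
        rw [pow_succ]
      calc mkq (X i ^ (m + 1)) = mkq (X i * X i ^ m) := by rw [← pow_succ']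
        _ = mkq (X i) * mkq (X i ^ m) := map_mul _ _ _
        _ = mkq (X i) * mkq (X 1 ^ m) := by rw [hr3 i hi2]
        _ = mkq (X i * X 1 ^ m) := (map_mul _ _ _).symm
        _ = mkq ((X 1 * X i) * X 1 ^ (m - 1)) := by
            rw [hsplit, show (X i * (X 1 ^ (m - 1) * X 1) : MvPolynomial (Fin (k + 1)) ℤ)
              = X 1 * X i * X 1 ^ (m - 1) by ring]
        _ = 0 := by
            rw [map_mul, hr1 1 i (by rw [val1 k hk]) (by rw [val1 k hk]; omega), zero_mul]
  have hred : ∀ i : Fin (k + 1), i ≠ 0 → ∀ e' b' : ℕ,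
      mkq (X i ^ (e' + 1) * X 0 ^ (b' + 1))
        = -mkq (X i ^ (e' + 2) * X 0 ^ (b' + 1)) - mkq (X i ^ (e' + 2) * X 0 ^ b') := by
    intro i hi e' b'
    have h0 := hr2 i (val_ne0 k i hi)
    have hexp : ((X i * X 0 + X i ^ 2 * X 0 + X i ^ 2) * (X i ^ e' * X 0 ^ b')
          : MvPolynomial (Fin (k + 1)) ℤ)
        = X i ^ (e' + 1) * X 0 ^ (b' + 1) + X i ^ (e' + 2) * X 0 ^ (b' + 1)
          + X i ^ (e' + 2) * X 0 ^ b' := by ring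
    have hsum : mkq (X i ^ (e' + 1) * X 0 ^ (b' + 1)) + mkq (X i ^ (e' + 2) * X 0 ^ (b' + 1))
        + mkq (X i ^ (e' + 2) * X 0 ^ b') = 0 := by
      rw [← map_add, ← map_add, ← hexp, map_mul, h0, zero_mul]
    linear_combination hsum
  have hmem : ∀ p : Idx m k, mkq (X p.1.1) ^ p.1.2 ∈ Sp :=
    fun p => Submodule.subset_span ⟨p, rfl⟩
  have hbm_mem : mkq (X 1 ^ m) ∈ Sp := by
    rw [map_pow, h1fin]
    exact hmem (bm m k hm hk)
  have hpow : ∀ (i : Fin (k + 1)) (e : ℕ), i ≠ 0 → 1 ≤ e → e ≤ m → mkq (X i ^ e) ∈ Sp := by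
    intro i e hi he1 hem
    by_cases h2 : e ≤ m - 1
    · rw [map_pow]
      exact hmem (bi m k i (fun h => hi (Fin.val_injective (by rw [h, Fin.val_zero])))
        e (by omega) h2)
    · have he : e = m := by omega
      rw [he]
      by_cases h1 : (i : ℕ) = 1
      · have hieq : i = 1 := Fin.val_injective (by rw [val1 k hk, h1])
        rw [hieq]
        exact hbm_mem
      · have hi2 : 2 ≤ (i : ℕ) := by have := val_ne0 k i hi; omega
        rw [hr3 i hi2]
        exact hbm_mem
  have hbeta : ∀ b : ℕ, mkq (X 0 ^ b) ∈ Sp := by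
    intro b
    by_cases hb1 : b ≤ m - 1
    · rw [map_pow]
      exact hmem (b0 m k b hb1)
    · by_cases hbm : b = m
      · rw [hbm, hr4]
        exact Submodule.smul_mem _ _ hbm_mem
      · have hsplit : X (0 : Fin (k + 1)) ^ b
            = (X 0 ^ (m + 1) * X 0 ^ (b - (m + 1)) : MvPolynomial (Fin (k + 1)) ℤ) := by
          rw [← pow_add]
          congr 1
          omega
        rw [hsplit, map_mul, hr5, zero_mul]
        exact Submodule.zero_mem _
  have hmix : ∀ (n : ℕ) (i : Fin (k + 1)) (e b : ℕ), i ≠ 0 → m + 1 ≤ e + n →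
      mkq (X i ^ e * X 0 ^ b) ∈ Sp := by
    intro n
    induction n with
    | zero =>
      intro i e b hi hen
      have hsplit : (X i ^ e * X 0 ^ b : MvPolynomial (Fin (k + 1)) ℤ)
          = X i ^ (m + 1) * (X i ^ (e - (m + 1)) * X 0 ^ b) := by
        rw [← mul_assoc, ← pow_add]
        congr 2
        omega
      rw [hsplit, map_mul, hXpow i hi, zero_mul]
      exact Submodule.zero_mem _
    | succ n ih =>
      intro i e b hi hen
      by_cases he0 : e = 0
      · rw [he0, pow_zero, one_mul]
        exact hbeta b
      · by_cases hem : m + 1 ≤ e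
        · have hsplit : (X i ^ e * X 0 ^ b : MvPolynomial (Fin (k + 1)) ℤ)
              = X i ^ (m + 1) * (X i ^ (e - (m + 1)) * X 0 ^ b) := by
            rw [← mul_assoc, ← pow_add]
            congr 2
            omega
          rw [hsplit, map_mul, hXpow i hi, zero_mul]
          exact Submodule.zero_mem _
        · by_cases hb0 : b = 0
          · rw [hb0, pow_zero, mul_one]
            exact hpow i e hi (by omega) (by omega)
          · obtain ⟨e', rfl⟩ : ∃ e', e = e' + 1 := ⟨e - 1, by omega⟩
            obtain ⟨b', rfl⟩ : ∃ b', b = b' + 1 := ⟨b - 1, by omega⟩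
            rw [hred i hi e' b']
            exact Submodule.sub_mem _
              (Submodule.neg_mem _ (ih i (e' + 2) (b' + 1) hi (by omega)))
              (ih i (e' + 2) b' hi (by omega))
  have hmono : ∀ a : Fin (k + 1) →₀ ℕ, mkq (monomial a 1) ∈ Sp := by
    intro a
    by_cases htwo : ∃ i j : Fin (k + 1), i ≠ 0 ∧ j ≠ 0 ∧ (i : ℕ) < (j : ℕ) ∧ a i ≠ 0 ∧ a j ≠ 0
    · obtain ⟨i, j, hi, hj, hij, hai, haj⟩ := htwo
      have hij' : i ≠ j := Fin.ne_of_val_ne (by omega)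
      have hfac : (monomial a 1 : MvPolynomial (Fin (k + 1)) ℤ)
          = (X i * X j) * monomial (a - Finsupp.single i 1 - Finsupp.single j 1) 1 := by
        have hXi : (X i : MvPolynomial (Fin (k + 1)) ℤ) = monomial (Finsupp.single i 1) 1 := by
          rw [← X_pow_eq_monomial, pow_one]
        have hXj : (X j : MvPolynomial (Fin (k + 1)) ℤ) = monomial (Finsupp.single j 1) 1 := by
          rw [← X_pow_eq_monomial, pow_one]
        rw [hXi, hXj, monomial_mul, monomial_mul, one_mul, one_mul]
        have hfs : Finsupp.single i 1 + Finsupp.single j 1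
            + (a - Finsupp.single i 1 - Finsupp.single j 1) = a := by
          ext l
          simp only [Finsupp.add_apply, Finsupp.tsub_apply, Finsupp.single_apply]
          by_cases h1 : i = l
          · by_cases h2 : j = l
            · exact absurd (h1.trans h2.symm) hij'
            · rw [if_pos h1, if_neg h2]
              subst h1
              omega
          · by_cases h2 : j = l
            · rw [if_neg h1, if_pos h2]
              subst h2
              omega
            · rw [if_neg h1, if_neg h2]
              omega
        rw [hfs]
      rw [hfac, map_mul, hr1 i j (val_ne0 k i hi) hij, zero_mul]
      exact Submodule.zero_mem _
    · push_neg at htwo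
      by_cases hone : ∃ i, i ≠ 0 ∧ a i ≠ 0
      · obtain ⟨i, hi, hai⟩ := hone
        have hz : ∀ j, j ≠ 0 → j ≠ i → a j = 0 := by
          intro j hj hji
          by_cases hlt : (i : ℕ) < (j : ℕ)
          · exact htwo i j hi hj hlt hai
          · have hne : (i : ℕ) ≠ (j : ℕ) := fun h => hji (Fin.val_injective h).symm
            have hlt' : (j : ℕ) < (i : ℕ) := by omega
            by_contra haj
            exact hai (htwo j i hj hi hlt' haj)
        have ha := decomp k a i hi hz
        have hfs : a = Finsupp.single i (a i) + Finsupp.single 0 (a 0) := by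
          conv_lhs => rw [ha]
          exact add_comm _ _
        have hmono_eq : (monomial a 1 : MvPolynomial (Fin (k + 1)) ℤ)
            = X i ^ (a i) * X 0 ^ (a 0) := by
          rw [X_pow_eq_monomial, X_pow_eq_monomial, monomial_mul, one_mul]
          conv_lhs => rw [hfs]
        rw [hmono_eq]
        exact hmix (m + 1) i (a i) (a 0) hi (by omega)
      · push_neg at hone
        have ha := decomp0 k a hone
        have hmono_eq : (monomial a 1 : MvPolynomial (Fin (k + 1)) ℤ) = X 0 ^ (a 0) := by
          rw [X_pow_eq_monomial]
          conv_lhs => rw [ha]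
        rw [hmono_eq]
        exact hbeta (a 0)
  have hsp : ⊤ ≤ Sp := by
    intro x _
    obtain ⟨p, rfl⟩ := Ideal.Quotient.mk_surjective x
    rw [show (Ideal.Quotient.mk I) p = mkq p from rfl, MvPolynomial.as_sum p, map_sum]
    refine Submodule.sum_mem _ fun a ha => ?_
    have : (monomial a (coeff a p) : MvPolynomial (Fin (k + 1)) ℤ)
        = (coeff a p) • monomial a 1 := by
      rw [MvPolynomial.smul_monomial, smul_eq_mul, mul_one]
    rw [this, hmkl]
    exact Submodule.smul_mem _ _ (hmono a)
  have hli : LinearIndependent ℤ v := by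
    rw [linearIndependent_iff']
    intro s g hsum p hp
    have hP : (∑ q ∈ s, g q • (X q.1.1 ^ q.1.2 : MvPolynomial (Fin (k + 1)) ℤ)) ∈ I := by
      rw [← Ideal.Quotient.eq_zero_iff_mem]
      calc (Ideal.Quotient.mk I) (∑ q ∈ s, g q • (X q.1.1 ^ q.1.2 : MvPolynomial (Fin (k + 1)) ℤ))
          = ∑ q ∈ s, g q • v q := by
            rw [map_sum]
            exact Finset.sum_congr rfl fun q _ => by rw [hmkl, map_pow]
        _ = 0 := hsum
    have hphi := phi_ker m k hm hk (hI' ▸ hP)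
    rw [map_sum] at hphi
    have hterm : ∀ q ∈ s, phi m k hm hk (g q • (X q.1.1 ^ q.1.2 : MvPolynomial (Fin (k + 1)) ℤ))
        = g q • Finsupp.single q 1 := by
      intro q _
      rw [map_smul]
      congr 1
      rw [X_pow_eq_monomial, phi_monomial, nf_basisElt]
    rw [Finset.sum_congr rfl hterm] at hphi
    have happ := DFunLike.congr_fun hphi p
    rw [Finsupp.finset_sum_apply] at happ
    simp only [Finsupp.smul_apply, Finsupp.single_apply, Finsupp.coe_zero, Pi.zero_apply] at happ
    rw [Finset.sum_eq_single p (fun q _ hqp => by rw [if_neg hqp, smul_zero])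
      (fun hps => absurd hp hps)] at happ
    simpa using happ
  exact ⟨Module.Basis.mk hli hsp, fun p => by rw [Module.Basis.mk_apply]⟩
end

section
/- Let n ≥ 4 and set m = n−3. Let ℓ = (ℓ₁,…,ℓₙ) be a generic n-tuple of positive real numbers with ℓ₁ ≤ ⋯ ≤ ℓₙ, and let Δ be the set of subsets S ⊆ {1,…,n−1} such that Σ_{i∈S∪{n}} ℓᵢ < Σ_{i∉S∪{n}} ℓᵢ (the subgees). Assume ∅ ∈ Δ and that some singleton belongs to Δ; let k be the largest i with {i} ∈ Δ, and let s be the maximal size of an element of Δ (so every element of Δ is a subset of {1,…,k}, and s ≤ m). Let B be the quotient of ℤ[α₁,…,α_k, β] by the ideal generated by: (i) α_iβ + α_i²β + α_i² for 1 ≤ i ≤ k; (ii) Π_{i∈T} α_i for every subset T ⊆ {1,…,k} with T ∉ Δ; and (iii) all monomials of total degree m−s+1 in α₁,…,α_k, β. Then B is a free abelian group with basis {β^i · Π_{j∈S} α_j : S ∈ Δ, i ≥ 0, i + |S| ≤ m−s}. -/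
open MvPolynomial
open Fin.NatCast
set_option synthInstance.maxHeartbeats 1000000
set_option maxHeartbeats 1000000

namespace Stmt16

/-- `Fel x M = ∑_{j=1}^{M} (-1)^j x^j`. -/
def Fel {A : Type*} [CommRing A] (x : A) (M : ℕ) : A :=
  ∑ j ∈ Finset.range M, (-1 : A) ^ (j + 1) * x ^ (j + 1)

lemma key_id {A : Type*} [CommRing A] (x : A) (M : ℕ) :
    x + Fel x M * (1 + x) = (-1 : A) ^ M * x ^ (M + 1) := by
  induction M with
  | zero => simp [Fel]
  | succ M ih =>
    rw [Fel, Finset.sum_range_succ, ← Fel]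
    linear_combination ih

lemma Fel_eq_X_mul (M : ℕ) :
    Fel (Polynomial.X : Polynomial ℤ) M =
      Polynomial.X * ∑ j ∈ Finset.range M, (-1 : Polynomial ℤ) ^ (j + 1) * Polynomial.X ^ j := by
  rw [Fel, Finset.mul_sum]
  exact Finset.sum_congr rfl fun j _ => by ring

lemma coeff_X_pow_mul_Fel_pow {M : ℕ} (a e c : ℕ) (h : c < a + e) :
    Polynomial.coeff (Polynomial.X ^ a * Fel (Polynomial.X : Polynomial ℤ) M ^ e) c = 0 := by
  rw [Fel_eq_X_mul, mul_pow, ← mul_assoc, ← pow_add, mul_comm,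
    Polynomial.coeff_mul_X_pow', if_neg (by omega)]

variable {k : ℕ}

/-- the set of α-indices (as naturals) occurring in an exponent vector -/
def eset (d : Fin (k + 1) →₀ ℕ) : Finset ℕ :=
  ((Finset.univ.erase (0 : Fin (k + 1))).filter fun i => d i ≠ 0).image Fin.val

/-- the "excess" of an exponent vector -/
def exc (d : Fin (k + 1) →₀ ℕ) : ℕ :=
  ∑ i ∈ Finset.univ.erase (0 : Fin (k + 1)), (d i - 1)

noncomputable def mu (M : ℕ) (S₀ : Finset ℕ) (c₀ : ℕ) (d : Fin (k + 1) →₀ ℕ) : ℤ :=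
  if eset d = S₀ then
    Polynomial.coeff (Polynomial.X ^ (d 0) * Fel (Polynomial.X : Polynomial ℤ) M ^ exc d) c₀
  else 0

noncomputable def lam (M : ℕ) (S₀ : Finset ℕ) (c₀ : ℕ) :
    MvPolynomial (Fin (k + 1)) ℤ →ₗ[ℤ] ℤ :=
  (basisMonomials (Fin (k + 1)) ℤ).constr ℤ (mu M S₀ c₀)

lemma lam_monomial (M : ℕ) (S₀ : Finset ℕ) (c₀ : ℕ) (d : Fin (k + 1) →₀ ℕ) (a : ℤ) :
    lam M S₀ c₀ (monomial d a) = a * mu M S₀ c₀ d := by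
  have h1 : (monomial d a : MvPolynomial (Fin (k+1)) ℤ) = a • monomial d 1 := by
    rw [smul_monomial, smul_eq_mul, mul_one]
  rw [h1, map_smul, smul_eq_mul]
  congr 1
  have h2 : (monomial d 1 : MvPolynomial (Fin (k+1)) ℤ) = basisMonomials (Fin (k+1)) ℤ d := by
    rw [coe_basisMonomials]
  rw [h2, lam, Module.Basis.constr_basis]

lemma eset_add_single_zero (d : Fin (k+1) →₀ ℕ) (c : ℕ) :
    eset (d + Finsupp.single 0 c) = eset d := by
  unfold eset
  congr 1
  apply Finset.filter_congr
  intro i hi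
  have h0 : i ≠ 0 := Finset.ne_of_mem_erase hi
  simp [Finsupp.single_apply, Ne.symm h0]

lemma exc_add_single_zero (d : Fin (k+1) →₀ ℕ) (c : ℕ) :
    exc (d + Finsupp.single 0 c) = exc d := by
  unfold exc
  apply Finset.sum_congr rfl
  intro i hi
  have h0 : i ≠ 0 := Finset.ne_of_mem_erase hi
  simp [Finsupp.single_apply, Ne.symm h0]

lemma eset_add_single (d : Fin (k+1) →₀ ℕ) (i : Fin (k+1)) (hi : i ≠ 0) :
    eset (d + Finsupp.single i 1) = insert i.val (eset d) := by
  unfold eset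
  ext x
  simp only [Finset.mem_image, Finset.mem_filter, Finset.mem_erase, Finset.mem_univ,
    Finset.mem_insert, Finsupp.add_apply, Finsupp.single_apply, and_true, true_and]
  constructor
  · rintro ⟨j, ⟨hj0, hj⟩, rfl⟩
    by_cases hji : j = i
    · subst hji; left; rfl
    · right; refine ⟨j, ⟨hj0, ?_⟩, rfl⟩
      simpa [hji, Ne.symm hji] using hj
  · rintro (rfl | ⟨j, ⟨hj0, hj⟩, rfl⟩)
    · exact ⟨i, ⟨hi, by simp⟩, rfl⟩
    · exact ⟨j, ⟨hj0, by omega⟩, rfl⟩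

lemma exc_add_single (d : Fin (k+1) →₀ ℕ) (i : Fin (k+1)) (hi : i ≠ 0) (hd : d i ≠ 0) :
    exc (d + Finsupp.single i 1) = exc d + 1 := by
  unfold exc
  have h1 : ∀ j ∈ Finset.univ.erase (0 : Fin (k+1)),
      ((d + Finsupp.single i 1 : Fin (k+1) →₀ ℕ)) j - 1 = (d j - 1) + (if j = i then 1 else 0) := by
    intro j hj
    rcases eq_or_ne j i with rfl | hji
    · simp only [Finsupp.add_apply, Finsupp.single_apply, if_pos rfl]
      omega
    · simp [Finsupp.single_apply, Ne.symm hji, hji]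
  rw [Finset.sum_congr rfl h1, Finset.sum_add_distrib, Finset.sum_ite_eq' _ i (fun _ => 1),
    if_pos (Finset.mem_erase.2 ⟨hi, Finset.mem_univ i⟩)]

lemma card_eset (d : Fin (k+1) →₀ ℕ) :
    (eset d).card = ((Finset.univ.erase (0 : Fin (k+1))).filter fun i => d i ≠ 0).card :=
  Finset.card_image_of_injective _ Fin.val_injective

lemma deg_eq (d : Fin (k+1) →₀ ℕ) :
    (∑ i, d i) = d 0 + exc d + (eset d).card := by
  rw [card_eset]
  have h0 : (0 : Fin (k+1)) ∈ (Finset.univ : Finset (Fin (k+1))) := Finset.mem_univ _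
  rw [← Finset.sum_erase_add _ _ h0]
  unfold exc
  have h2 : ∑ i ∈ Finset.univ.erase (0 : Fin (k+1)), d i
      = (∑ i ∈ Finset.univ.erase (0 : Fin (k+1)), (d i - 1))
        + ((Finset.univ.erase (0 : Fin (k+1))).filter fun i => d i ≠ 0).card := by
    rw [Finset.card_filter, ← Finset.sum_add_distrib]
    apply Finset.sum_congr rfl
    intro i _
    by_cases h : d i = 0
    · simp [h]
    · rw [if_pos h]
      omega
  omega

lemma mu_eq_zero_of_deg (M : ℕ) (S₀ : Finset ℕ) (c₀ : ℕ) (hc : c₀ + S₀.card ≤ M)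
    (d : Fin (k+1) →₀ ℕ) (hd : M + 1 ≤ ∑ i, d i) : mu M S₀ c₀ d = 0 := by
  unfold mu
  split_ifs with h
  · apply coeff_X_pow_mul_Fel_pow
    have h2 := deg_eq d
    rw [h] at h2
    omega
  · rfl


lemma X_as_monomial (i : Fin (k+1)) :
    (X i : MvPolynomial (Fin (k+1)) ℤ) = monomial (Finsupp.single i 1) 1 := by
  rw [← X_pow_eq_monomial, pow_one]

lemma lam_mul_gen1 (M : ℕ) (S₀ : Finset ℕ) (c₀ : ℕ) (hc : c₀ + S₀.card ≤ M)
    (d : Fin (k+1) →₀ ℕ) (i : Fin (k+1)) (hi : i ≠ 0) :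
    lam M S₀ c₀ (monomial d 1 * (X i * X 0 + X i ^ 2 * X 0 + X i ^ 2)) = 0 := by
  have e1 : monomial d (1:ℤ) * (X i * X (0 : Fin (k+1)))
      = monomial (d + Finsupp.single i 1 + Finsupp.single 0 1) 1 := by
    rw [X_as_monomial i, X_as_monomial 0, ← mul_assoc, monomial_mul, monomial_mul]
    norm_num
  have hs2 : (Finsupp.single i 2 : Fin (k+1) →₀ ℕ)
      = Finsupp.single i 1 + Finsupp.single i 1 := by rw [← Finsupp.single_add]
  have e2 : monomial d (1:ℤ) * (X i ^ 2 * X (0 : Fin (k+1)))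
      = monomial (d + Finsupp.single i 1 + Finsupp.single i 1 + Finsupp.single 0 1) 1 := by
    rw [X_pow_eq_monomial, X_as_monomial 0, ← mul_assoc, monomial_mul, monomial_mul, hs2]
    have hexp : d + (Finsupp.single i 1 + Finsupp.single i 1) + Finsupp.single 0 1
        = d + Finsupp.single i 1 + Finsupp.single i 1 + Finsupp.single 0 1 := by abel
    rw [hexp]
    norm_num
  have e3 : monomial d (1:ℤ) * (X i ^ 2 : MvPolynomial (Fin (k+1)) ℤ)
      = monomial (d + Finsupp.single i 1 + Finsupp.single i 1) 1 := by
    rw [X_pow_eq_monomial, monomial_mul, hs2]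
    have hexp : d + (Finsupp.single i 1 + Finsupp.single i 1)
        = d + Finsupp.single i 1 + Finsupp.single i 1 := by abel
    rw [hexp]
    norm_num
  rw [mul_add, mul_add, e1, e2, e3, map_add, map_add, lam_monomial, lam_monomial, lam_monomial,
    one_mul, one_mul, one_mul]
  set d1 := d + Finsupp.single i 1 with hd1
  have hd1i : d1 i ≠ 0 := by
    simp [hd1, Finsupp.single_apply]
  have hd10 : d1 0 = d 0 := by
    simp [hd1, Finsupp.single_apply, hi]
  have hes1 : eset (d1 + Finsupp.single 0 1) = eset d1 := eset_add_single_zero _ _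
  have hes3 : eset (d1 + Finsupp.single i 1) = eset d1 := by
    rw [eset_add_single _ _ hi, eset_add_single _ _ hi, Finset.insert_idem]
  have hes2 : eset (d1 + Finsupp.single i 1 + Finsupp.single 0 1) = eset d1 := by
    rw [eset_add_single_zero, hes3]
  have hex1 : exc (d1 + Finsupp.single 0 1) = exc d1 := exc_add_single_zero _ _
  have hex3 : exc (d1 + Finsupp.single i 1) = exc d1 + 1 := exc_add_single _ _ hi hd1i
  have hex2 : exc (d1 + Finsupp.single i 1 + Finsupp.single 0 1) = exc d1 + 1 := by
    rw [exc_add_single_zero, hex3]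
  have hv1 : ((d1 + Finsupp.single 0 1 : Fin (k+1) →₀ ℕ)) 0 = d 0 + 1 := by simp [hd10]
  have hv2 : ((d1 + Finsupp.single i 1 + Finsupp.single 0 1 : Fin (k+1) →₀ ℕ)) 0 = d 0 + 1 := by
    simp [Finsupp.single_apply, hi, hd10]
  have hv3 : ((d1 + Finsupp.single i 1 : Fin (k+1) →₀ ℕ)) 0 = d 0 := by
    simp [Finsupp.single_apply, hi, hd10]
  unfold mu
  rw [hes1, hes2, hes3, hex1, hex2, hex3, hv1, hv2, hv3]
  by_cases h : eset d1 = S₀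
  · rw [if_pos h, if_pos h, if_pos h]
    rw [← Polynomial.coeff_add, ← Polynomial.coeff_add]
    have hP : Polynomial.X ^ (d 0 + 1) * Fel (Polynomial.X : Polynomial ℤ) M ^ exc d1
          + Polynomial.X ^ (d 0 + 1) * Fel (Polynomial.X : Polynomial ℤ) M ^ (exc d1 + 1)
          + Polynomial.X ^ (d 0) * Fel (Polynomial.X : Polynomial ℤ) M ^ (exc d1 + 1)
        = Polynomial.C ((-1:ℤ)^M)
          * (Polynomial.X ^ (d 0 + M + 1) * Fel (Polynomial.X : Polynomial ℤ) M ^ exc d1) := by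
      have hC : (Polynomial.C ((-1:ℤ)^M) : Polynomial ℤ) = (-1 : Polynomial ℤ) ^ M := by
        rw [map_pow, map_neg, map_one]
      rw [hC]
      linear_combination (Polynomial.X ^ (d 0) * Fel (Polynomial.X : Polynomial ℤ) M ^ exc d1)
        * key_id (Polynomial.X : Polynomial ℤ) M
    rw [hP, Polynomial.coeff_C_mul, coeff_X_pow_mul_Fel_pow _ _ _ (by omega), mul_zero]
  · rw [if_neg h, if_neg h, if_neg h]
    ring


lemma prod_monomial {α : Type*} [DecidableEq α] (s : Finset α) (g : α → (Fin (k+1) →₀ ℕ)) :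
    ∏ i ∈ s, (monomial (g i) 1 : MvPolynomial (Fin (k+1)) ℤ)
      = monomial (∑ i ∈ s, g i) 1 := by
  induction s using Finset.induction_on with
  | empty => simp
  | @insert a s hni ih =>
    rw [Finset.prod_insert hni, ih, monomial_mul, one_mul, Finset.sum_insert hni]

/-- natural number in `[1,k]` cast to `Fin (k+1)` keeps its value -/
lemma val_cast_of_le {x : ℕ} (h1 : 1 ≤ x) (h2 : x ≤ k) :
    ((x : Fin (k+1)) : ℕ) = x ∧ (x : Fin (k+1)) ≠ 0 := by
  have hlt : x < k + 1 := by omega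
  have hv : ((x : Fin (k+1)) : ℕ) = x := by
    rw [Fin.val_natCast, Nat.mod_eq_of_lt hlt]
  refine ⟨hv, ?_⟩
  intro h0
  rw [h0] at hv
  simp at hv
  omega

lemma lam_mul_gen2 (M : ℕ) (S₀ : Finset ℕ) (c₀ : ℕ)
    (d : Fin (k+1) →₀ ℕ) (T : Finset ℕ) (hT : T ⊆ Finset.Icc 1 k) (hnot : ¬ T ⊆ S₀) :
    lam M S₀ c₀ (monomial d 1 * ∏ i ∈ T, X ((i : Fin (k+1)))) = 0 := by
  classical
  have hprod : (∏ i ∈ T, X ((i : Fin (k+1))) : MvPolynomial (Fin (k+1)) ℤ)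
      = monomial (∑ i ∈ T, Finsupp.single ((i : Fin (k+1))) 1) 1 := by
    rw [← prod_monomial]
    exact Finset.prod_congr rfl fun i _ => X_as_monomial _
  set DT := ∑ i ∈ T, Finsupp.single ((i : Fin (k+1))) (1:ℕ) with hDT
  rw [hprod, monomial_mul, one_mul, lam_monomial, one_mul]
  unfold mu
  rw [if_neg]
  intro hes
  apply hnot
  intro x hx
  obtain ⟨hx1, hx2⟩ := Finset.mem_Icc.1 (hT hx)
  obtain ⟨hval, hne⟩ := val_cast_of_le hx1 hx2
  have hDTx : DT ((x : Fin (k+1))) ≠ 0 := by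
    rw [hDT, Finsupp.finset_sum_apply]
    have hterm : ∀ j ∈ T, (0:ℕ) ≤ Finsupp.single ((j : Fin (k+1))) (1:ℕ) ((x : Fin (k+1))) :=
      fun j _ => Nat.zero_le _
    have hone : Finsupp.single ((x : Fin (k+1))) (1:ℕ) ((x : Fin (k+1))) = 1 := by
      simp
    have := Finset.single_le_sum hterm hx
    omega
  have hmem : (x : Fin (k+1)) ∈ (Finset.univ.erase (0 : Fin (k+1))).filter
      (fun j => (d + DT) j ≠ 0) := by
    refine Finset.mem_filter.2 ⟨Finset.mem_erase.2 ⟨hne, Finset.mem_univ _⟩, ?_⟩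
    rw [Finsupp.add_apply]
    omega
  rw [← hes]
  exact Finset.mem_image.2 ⟨_, hmem, hval⟩

lemma lam_mul_gen3 (M : ℕ) (S₀ : Finset ℕ) (c₀ : ℕ) (hc : c₀ + S₀.card ≤ M)
    (d : Fin (k+1) →₀ ℕ) (c : Fin (k+1) → ℕ) (hc1 : ∑ i, c i = M + 1) :
    lam M S₀ c₀ (monomial d 1 * ∏ i, X i ^ c i) = 0 := by
  classical
  have hprod : (∏ i, X i ^ c i : MvPolynomial (Fin (k+1)) ℤ)
      = monomial (∑ i, Finsupp.single i (c i)) 1 := by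
    rw [← prod_monomial]
    exact Finset.prod_congr rfl fun i _ => X_pow_eq_monomial
  rw [hprod, monomial_mul, one_mul, lam_monomial, one_mul]
  apply mu_eq_zero_of_deg M S₀ c₀ hc
  have hsum : ∑ j, ((d + ∑ i, Finsupp.single i (c i) : Fin (k+1) →₀ ℕ)) j
      = (∑ j, d j) + ∑ j, ((∑ i, Finsupp.single i (c i) : Fin (k+1) →₀ ℕ)) j := by
    rw [← Finset.sum_add_distrib]
    exact Finset.sum_congr rfl fun j _ => Finsupp.add_apply _ _ _
  have hsum2 : ∑ j, ((∑ i, Finsupp.single i (c i) : Fin (k+1) →₀ ℕ)) j = M + 1 := by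
    rw [← hc1]
    apply Finset.sum_congr rfl
    intro j _
    rw [Finsupp.finset_sum_apply]
    rw [Finset.sum_eq_single j (fun b _ hbj => Finsupp.single_eq_of_ne' hbj) (by simp)]
    simp
  rw [hsum, hsum2]
  omega


/-- the generating set of the ideal, with `M = m - s` -/
def gens (k : ℕ) (Δ : Set (Finset ℕ)) (M : ℕ) : Set (MvPolynomial (Fin (k+1)) ℤ) :=
  ({f | ∃ i : Fin (k + 1), 1 ≤ (i : ℕ) ∧ f = X i * X 0 + X i ^ 2 * X 0 + X i ^ 2} ∪
   {f | ∃ T : Finset ℕ, T ⊆ Finset.Icc 1 k ∧ T ∉ Δ ∧ f = ∏ i ∈ T, X ((i : Fin (k + 1)))} ∪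
   {f | ∃ d : Fin (k + 1) → ℕ, (∑ i, d i) = M + 1 ∧ f = ∏ i, X i ^ d i})

lemma lam_mul_eq_zero_of_monomial (M : ℕ) (S₀ : Finset ℕ) (c₀ : ℕ)
    (x : MvPolynomial (Fin (k+1)) ℤ)
    (h : ∀ d : Fin (k+1) →₀ ℕ, lam M S₀ c₀ (monomial d 1 * x) = 0)
    (q : MvPolynomial (Fin (k+1)) ℤ) : lam M S₀ c₀ (q * x) = 0 := by
  have hzero : (lam (k := k) M S₀ c₀).comp (LinearMap.mulRight ℤ x) = 0 := by
    apply Module.Basis.ext (basisMonomials (Fin (k+1)) ℤ)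
    intro d
    simp only [LinearMap.comp_apply, LinearMap.mulRight_apply, coe_basisMonomials,
      LinearMap.zero_apply]
    exact h d
  simpa using LinearMap.congr_fun hzero q

lemma lam_eq_zero_of_mem (Δ : Set (Finset ℕ)) (M : ℕ) (S₀ : Finset ℕ) (c₀ : ℕ)
    (hc : c₀ + S₀.card ≤ M)
    (hdown : ∀ T : Finset ℕ, T ⊆ Finset.Icc 1 k → T ∉ Δ → ¬ T ⊆ S₀)
    {x : MvPolynomial (Fin (k+1)) ℤ} (hx : x ∈ Ideal.span (gens k Δ M)) :
    lam M S₀ c₀ x = 0 := by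
  have main : ∀ q, lam M S₀ c₀ (q * x) = 0 := by
    refine Submodule.span_induction
      (p := fun y _ => ∀ q, lam M S₀ c₀ (q * y) = 0) ?_ ?_ ?_ ?_ hx
    · rintro y hy q
      rcases hy with (hy | hy) | hy
      · obtain ⟨i, hi1, rfl⟩ := hy
        refine lam_mul_eq_zero_of_monomial M S₀ c₀ _ (fun d => ?_) q
        refine lam_mul_gen1 M S₀ c₀ hc d i ?_
        intro h0
        rw [h0] at hi1
        simp at hi1
      · obtain ⟨T, hT, hTΔ, rfl⟩ := hy
        exact lam_mul_eq_zero_of_monomial M S₀ c₀ _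
          (fun d => lam_mul_gen2 M S₀ c₀ d T hT (hdown T hT hTΔ)) q
      · obtain ⟨c, hc1, rfl⟩ := hy
        exact lam_mul_eq_zero_of_monomial M S₀ c₀ _
          (fun d => lam_mul_gen3 M S₀ c₀ hc d c hc1) q
    · intro q
      rw [mul_zero, map_zero]
    · intro y z _ _ hy hz q
      rw [mul_add, map_add, hy q, hz q, add_zero]
    · intro a y _ hy q
      rw [smul_eq_mul, ← mul_assoc, hy (q * a)]
  simpa using main 1

lemma DS_apply (S : Finset ℕ) (hS : S ⊆ Finset.Icc 1 k) (c : ℕ) (j : Fin (k+1)) :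
    ((Finsupp.single 0 c + ∑ i ∈ S, Finsupp.single ((i : Fin (k+1))) 1 : Fin (k+1) →₀ ℕ)) j
      = if j = 0 then c else if j.val ∈ S then 1 else 0 := by
  classical
  rw [Finsupp.add_apply, Finsupp.finset_sum_apply]
  have hterm : ∀ i ∈ S, (Finsupp.single ((i : Fin (k+1))) (1:ℕ)) j
      = if i = j.val then 1 else 0 := by
    intro i hiS
    obtain ⟨h1, h2⟩ := Finset.mem_Icc.1 (hS hiS)
    obtain ⟨hval, hne⟩ := val_cast_of_le h1 h2
    have hiff : ((i : Fin (k+1)) = j) ↔ (i = j.val) := by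
      constructor
      · intro h; rw [← h, hval]
      · intro h; rw [h, Fin.cast_val_eq_self]
    simp only [Finsupp.single_apply]
    split_ifs with ha hb hb
    · rfl
    · exact absurd (hiff.1 ha) hb
    · exact absurd (hiff.2 hb) ha
    · rfl
  rw [Finset.sum_congr rfl hterm, Finset.sum_ite_eq' S j.val (fun _ => 1)]
  rcases eq_or_ne j 0 with rfl | hj
  · have h0 : (0 : ℕ) ∉ S := by
      intro h
      have := Finset.mem_Icc.1 (hS h)
      omega
    simp [h0]
  · rw [Finsupp.single_apply, if_neg (by exact fun h => hj h.symm), if_neg hj, zero_add]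

lemma eset_DS (S : Finset ℕ) (hS : S ⊆ Finset.Icc 1 k) (c : ℕ) :
    eset (Finsupp.single 0 c + ∑ i ∈ S, Finsupp.single ((i : Fin (k+1))) 1) = S := by
  classical
  unfold eset
  ext x
  simp only [Finset.mem_image, Finset.mem_filter, Finset.mem_erase, Finset.mem_univ, true_and,
    and_true]
  constructor
  · rintro ⟨j, ⟨hj0, hj⟩, rfl⟩
    rw [DS_apply S hS c j, if_neg hj0] at hj
    by_cases hmem : j.val ∈ S
    · exact hmem
    · rw [if_neg hmem] at hj; exact absurd rfl hj
  · intro hx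
    obtain ⟨h1, h2⟩ := Finset.mem_Icc.1 (hS hx)
    obtain ⟨hval, hne⟩ := val_cast_of_le h1 h2
    refine ⟨(x : Fin (k+1)), ⟨hne, ?_⟩, hval⟩
    rw [DS_apply S hS c _, if_neg hne, hval, if_pos hx]
    omega

lemma exc_DS (S : Finset ℕ) (hS : S ⊆ Finset.Icc 1 k) (c : ℕ) :
    exc (Finsupp.single 0 c + ∑ i ∈ S, Finsupp.single ((i : Fin (k+1))) 1) = 0 := by
  unfold exc
  apply Finset.sum_eq_zero
  intro j hj
  have hj0 : j ≠ 0 := Finset.ne_of_mem_erase hj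
  rw [DS_apply S hS c j, if_neg hj0]
  split_ifs <;> rfl

lemma DS_zero (S : Finset ℕ) (hS : S ⊆ Finset.Icc 1 k) (c : ℕ) :
    ((Finsupp.single 0 c + ∑ i ∈ S, Finsupp.single ((i : Fin (k+1))) 1 : Fin (k+1) →₀ ℕ)) 0
      = c := by
  rw [DS_apply S hS c 0, if_pos rfl]

lemma X0_pow_mul_prod (S : Finset ℕ) (c : ℕ) :
    (X 0 ^ c * ∏ i ∈ S, X ((i : Fin (k+1))) : MvPolynomial (Fin (k+1)) ℤ)
      = monomial (Finsupp.single 0 c + ∑ i ∈ S, Finsupp.single ((i : Fin (k+1))) 1) 1 := by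
  classical
  have hprod : (∏ i ∈ S, X ((i : Fin (k+1))) : MvPolynomial (Fin (k+1)) ℤ)
      = monomial (∑ i ∈ S, Finsupp.single ((i : Fin (k+1))) 1) 1 := by
    rw [← prod_monomial]
    exact Finset.prod_congr rfl fun i _ => X_as_monomial _
  rw [hprod, X_pow_eq_monomial, monomial_mul, one_mul]

lemma lam_delta (M : ℕ) (S₀ : Finset ℕ) (c₀ : ℕ) (S : Finset ℕ)
    (hS : S ⊆ Finset.Icc 1 k) (c : ℕ) :
    lam M S₀ c₀ (X 0 ^ c * ∏ i ∈ S, X ((i : Fin (k+1))))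
      = if S = S₀ ∧ c = c₀ then 1 else 0 := by
  rw [X0_pow_mul_prod, lam_monomial, one_mul]
  unfold mu
  rw [eset_DS S hS c, exc_DS S hS c, DS_zero S hS c, pow_zero, mul_one,
    Polynomial.coeff_X_pow]
  by_cases h1 : S = S₀ <;> by_cases h2 : c = c₀ <;>
    simp [h1, h2, eq_comm (a := c₀) (b := c)]


lemma exists_sub_sum {ι : Type*} [Fintype ι] (f : ι → ℕ) (t : ℕ) (ht : t ≤ ∑ i, f i) :
    ∃ c : ι → ℕ, (∀ i, c i ≤ f i) ∧ ∑ i, c i = t := by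
  classical
  induction t with
  | zero => exact ⟨fun _ => 0, fun i => Nat.zero_le _, by simp⟩
  | succ t ih =>
    obtain ⟨c, hle, hsum⟩ := ih (by omega)
    have hlt : ∑ i, c i < ∑ i, f i := by omega
    have hex : ∃ i, c i < f i := by
      by_contra hco
      push_neg at hco
      exact absurd (Finset.sum_le_sum fun i _ => hco i) (not_le.2 hlt)
    obtain ⟨i, hi⟩ := hex
    refine ⟨Function.update c i (c i + 1), fun j => ?_, ?_⟩
    · rcases eq_or_ne j i with rfl | hji
      · rw [Function.update_self]; omega
      · rw [Function.update_of_ne hji]; exact hle j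
    · rw [Finset.sum_update_of_mem (Finset.mem_univ i)]
      have h2 : ∑ x, c x = c i + ∑ x ∈ Finset.univ \ {i}, c x :=
        Finset.sum_eq_add_sum_sdiff_singleton_of_mem (Finset.mem_univ i) c
      omega

lemma monomial_mem_of_deg (Δ : Set (Finset ℕ)) (M : ℕ) (d : Fin (k+1) →₀ ℕ) (a : ℤ)
    (hd : M + 1 ≤ ∑ i, d i) : monomial d a ∈ Ideal.span (gens k Δ M) := by
  classical
  obtain ⟨c, hle, hsum⟩ := exists_sub_sum (fun i => d i) (M+1) hd
  set cf : Fin (k+1) →₀ ℕ := Finsupp.equivFunOnFinite.symm c with hcf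
  have hcfa : ∀ i, cf i = c i := fun i => rfl
  have hprod : (∏ i, X i ^ c i : MvPolynomial (Fin (k+1)) ℤ) = monomial cf 1 := by
    have : (∏ i, X i ^ c i : MvPolynomial (Fin (k+1)) ℤ)
        = monomial (∑ i, Finsupp.single i (c i)) 1 := by
      rw [← prod_monomial]
      exact Finset.prod_congr rfl fun i _ => X_pow_eq_monomial
    have hF : (∑ i, Finsupp.single i (c i) : Fin (k+1) →₀ ℕ) = cf := by
      ext j
      rw [Finsupp.finset_sum_apply,
        Finset.sum_eq_single j (fun b _ hbj => Finsupp.single_eq_of_ne' hbj) (by simp)]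
      simp [hcfa]
    rw [this, hF]
  have hmem : (∏ i, X i ^ c i : MvPolynomial (Fin (k+1)) ℤ) ∈ Ideal.span (gens k Δ M) := by
    apply Ideal.subset_span
    right
    exact ⟨c, hsum, rfl⟩
  have hsplit : monomial d a = monomial (d - cf) a * ∏ i, X i ^ c i := by
    have hd2 : d - cf + cf = d := by
      ext j
      rw [Finsupp.add_apply, Finsupp.tsub_apply, hcfa]
      have := hle j
      omega
    rw [hprod, monomial_mul, mul_one, hd2]
  rw [hsplit]
  exact Ideal.mul_mem_left _ _ hmem

lemma X0_pow_mem (Δ : Set (Finset ℕ)) (M : ℕ) :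
    (X 0 ^ (M+1) : MvPolynomial (Fin (k+1)) ℤ) ∈ Ideal.span (gens k Δ M) := by
  rw [X_pow_eq_monomial]
  apply monomial_mem_of_deg
  rw [Finset.sum_eq_single 0 (fun b _ hbj => Finsupp.single_eq_of_ne' (Ne.symm hbj)) (by simp)]
  simp

lemma sq_mem (Δ : Set (Finset ℕ)) (M : ℕ) (i : Fin (k+1)) (hi : i ≠ 0) :
    (X i ^ 2 - X i * Fel (X 0 : MvPolynomial (Fin (k+1)) ℤ) M) ∈ Ideal.span (gens k Δ M) := by
  set r : MvPolynomial (Fin (k+1)) ℤ :=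
    X i ^ 2 - X i * Fel (X 0 : MvPolynomial (Fin (k+1)) ℤ) M with hr
  have hgmem : (X i * X 0 + X i ^ 2 * X 0 + X i ^ 2 : MvPolynomial (Fin (k+1)) ℤ)
      ∈ Ideal.span (gens k Δ M) := by
    apply Ideal.subset_span
    left; left
    refine ⟨i, ?_, rfl⟩
    have : i.val ≠ 0 := fun h => hi (Fin.ext h)
    omega
  have h1 : r * (1 + X 0) ∈ Ideal.span (gens k Δ M) := by
    have hid : r * (1 + X 0)
        = (X i * X 0 + X i ^ 2 * X 0 + X i ^ 2)
          + ((-1)^(M+1) * X i) * X 0 ^ (M+1) := by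
      rw [hr]
      linear_combination (-(X i : MvPolynomial (Fin (k+1)) ℤ))
        * key_id (X 0 : MvPolynomial (Fin (k+1)) ℤ) M
    rw [hid]
    exact add_mem hgmem (Ideal.mul_mem_left _ _ (X0_pow_mem Δ M))
  have h2 : r * (-(X 0 : MvPolynomial (Fin (k+1)) ℤ))^(M+1) ∈ Ideal.span (gens k Δ M) := by
    have hid : r * (-(X 0 : MvPolynomial (Fin (k+1)) ℤ))^(M+1)
        = (r * (-1)^(M+1)) * X 0 ^ (M+1) := by
      rw [neg_pow]
      ring
    rw [hid]
    exact Ideal.mul_mem_left _ _ (X0_pow_mem Δ M)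
  have hgeom : (∑ t ∈ Finset.range (M+1), (-(X 0 : MvPolynomial (Fin (k+1)) ℤ))^t)
      * (-(X 0 : MvPolynomial (Fin (k+1)) ℤ) - 1)
      = (-(X 0 : MvPolynomial (Fin (k+1)) ℤ))^(M+1) - 1 := geom_sum_mul _ _
  have hfinal : r = (r * (1 + X 0))
      * (∑ t ∈ Finset.range (M+1), (-(X 0 : MvPolynomial (Fin (k+1)) ℤ))^t)
      + r * (-(X 0 : MvPolynomial (Fin (k+1)) ℤ))^(M+1) := by
    linear_combination r * hgeom
  rw [hfinal]
  exact add_mem (Ideal.mul_mem_right _ _ h1) h2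


lemma mk_monomial_eq (Δ : Set (Finset ℕ)) (M : ℕ) (d : Fin (k+1) →₀ ℕ) (i : Fin (k+1))
    (hi : i ≠ 0) (hd2 : 2 ≤ d i) :
    Ideal.Quotient.mk (Ideal.span (gens k Δ M)) (monomial d 1)
      = ∑ j ∈ Finset.range M, ((-1:ℤ)^(j+1)) •
          Ideal.Quotient.mk (Ideal.span (gens k Δ M))
            (monomial (d - Finsupp.single i 2 + Finsupp.single i 1 + Finsupp.single 0 (j+1)) 1) := by
  have hdd : d - Finsupp.single i 2 + Finsupp.single i 2 = d := by
    ext x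
    simp only [Finsupp.add_apply, Finsupp.tsub_apply, Finsupp.single_apply]
    split_ifs with h
    · subst h; omega
    · omega
  have e0 : monomial d (1:ℤ) = monomial (d - Finsupp.single i 2) 1 * X i ^ 2 := by
    rw [X_pow_eq_monomial, monomial_mul, mul_one, hdd]
  have hmkeq : Ideal.Quotient.mk (Ideal.span (gens k Δ M)) (monomial d 1)
      = Ideal.Quotient.mk (Ideal.span (gens k Δ M))
          (monomial (d - Finsupp.single i 2) 1 * (X i * Fel (X 0) M)) := by
    rw [e0]
    rw [map_mul, map_mul]
    congr 1
    rw [Ideal.Quotient.mk_eq_mk_iff_sub_mem]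
    exact sq_mem Δ M i hi
  rw [hmkeq]
  have hexp : monomial (d - Finsupp.single i 2) (1:ℤ) * (X i * Fel (X 0) M)
      = ∑ j ∈ Finset.range M, ((-1:ℤ)^(j+1)) •
          monomial (d - Finsupp.single i 2 + Finsupp.single i 1 + Finsupp.single 0 (j+1)) 1 := by
    rw [Fel, Finset.mul_sum, Finset.mul_sum]
    apply Finset.sum_congr rfl
    intro j _
    have hmono : monomial (d - Finsupp.single i 2) (1:ℤ) * (X i * X 0 ^ (j+1))
        = monomial (d - Finsupp.single i 2 + Finsupp.single i 1 + Finsupp.single 0 (j+1)) 1 := by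
      rw [X_as_monomial, X_pow_eq_monomial, ← mul_assoc, monomial_mul, monomial_mul]
      norm_num
    have hC : (C ((-1:ℤ)^(j+1)) : MvPolynomial (Fin (k+1)) ℤ) = (-1)^(j+1) := by
      rw [map_pow, map_neg, map_one]
    rw [← hmono, MvPolynomial.smul_eq_C_mul, hC]
    ring
  rw [hexp, map_sum]
  apply Finset.sum_congr rfl
  intro j _
  exact (Ideal.Quotient.mk (Ideal.span (gens k Δ M))).toAddMonoidHom.map_zsmul _ _

lemma exc_pos (d : Fin (k+1) →₀ ℕ) (i : Fin (k+1)) (hi : i ≠ 0) (hd2 : 2 ≤ d i) :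
    1 ≤ exc d := by
  unfold exc
  have hmem : i ∈ Finset.univ.erase (0 : Fin (k+1)) :=
    Finset.mem_erase.2 ⟨hi, Finset.mem_univ i⟩
  have hle : d i - 1 ≤ ∑ j ∈ Finset.univ.erase (0 : Fin (k+1)), (d j - 1) :=
    Finset.single_le_sum (f := fun j => d j - 1) (fun j _ => Nat.zero_le _) hmem
  omega

lemma exc_red (d : Fin (k+1) →₀ ℕ) (i : Fin (k+1)) (hi : i ≠ 0) (hd2 : 2 ≤ d i) (j : ℕ) :
    exc (d - Finsupp.single i 2 + Finsupp.single i 1 + Finsupp.single 0 (j+1)) + 1 = exc d := by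
  rw [exc_add_single_zero]
  have h1 : ((d - Finsupp.single i 2 + Finsupp.single i 1 : Fin (k+1) →₀ ℕ)) i ≠ 0 := by
    rw [Finsupp.add_apply, Finsupp.tsub_apply]
    simp only [Finsupp.single_apply]
    split_ifs with h
    · omega
    · simp at h
  have h2 := exc_add_single (d - Finsupp.single i 2 + Finsupp.single i 1) i hi h1
  have heq : d - Finsupp.single i 2 + Finsupp.single i 1 + Finsupp.single i 1 = d := by
    ext x
    simp only [Finsupp.add_apply, Finsupp.tsub_apply, Finsupp.single_apply]
    split_ifs with h
    · subst h; omega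
    · omega
  rw [heq] at h2
  omega

lemma eset_subset_Icc (d : Fin (k+1) →₀ ℕ) : eset d ⊆ Finset.Icc 1 k := by
  intro x hx
  obtain ⟨j, hj, rfl⟩ := Finset.mem_image.1 hx
  obtain ⟨hj0, -⟩ := Finset.mem_erase.1 (Finset.mem_filter.1 hj).1
  have h1 : j.val ≠ 0 := fun h => hj0 (Fin.ext h)
  have h2 : j.val < k + 1 := j.isLt
  exact Finset.mem_Icc.2 ⟨by omega, by omega⟩

lemma monomial_eq_prod_form (d : Fin (k+1) →₀ ℕ) (hle : ∀ j : Fin (k+1), j ≠ 0 → d j ≤ 1) :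
    monomial d (1:ℤ) = X 0 ^ (d 0) * ∏ x ∈ eset d, X ((x : Fin (k+1))) := by
  have hD : (Finsupp.single 0 (d 0)
      + ∑ x ∈ eset d, Finsupp.single ((x : Fin (k+1))) 1 : Fin (k+1) →₀ ℕ) = d := by
    ext j
    rw [DS_apply (eset d) (eset_subset_Icc d) (d 0) j]
    rcases eq_or_ne j 0 with rfl | hj
    · rw [if_pos rfl]
    · rw [if_neg hj]
      have hiff : j.val ∈ eset d ↔ d j ≠ 0 := by
        unfold eset
        simp only [Finset.mem_image, Finset.mem_filter, Finset.mem_erase, Finset.mem_univ,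
          true_and, and_true]
        constructor
        · rintro ⟨j', ⟨hj'0, hj'⟩, hval⟩
          rwa [Fin.val_injective hval] at hj'
        · intro hd
          exact ⟨j, ⟨hj, hd⟩, rfl⟩
      have := hle j hj
      by_cases hdj : d j = 0
      · rw [if_neg (by rw [hiff]; exact fun h => h hdj), hdj]
      · rw [if_pos (hiff.2 hdj)]
        omega
  rw [X0_pow_mul_prod, hD]


lemma mk_zsmul (J : Ideal (MvPolynomial (Fin (k+1)) ℤ)) (a : ℤ) (w : MvPolynomial (Fin (k+1)) ℤ) :
    Ideal.Quotient.mk J (a • w) = a • Ideal.Quotient.mk J w :=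
  (Ideal.Quotient.mk J).toAddMonoidHom.map_zsmul a w

lemma span_range_v (Δ : Set (Finset ℕ)) (M : ℕ)
    (hΔIcc : ∀ S : Finset ℕ, S ∈ Δ → S ⊆ Finset.Icc 1 k)
    (d : Fin (k+1) →₀ ℕ) :
    Ideal.Quotient.mk (Ideal.span (gens k Δ M)) (monomial d 1) ∈
      Submodule.span ℤ (Set.range
        (fun p : {p : Finset ℕ × ℕ // p.1 ∈ Δ ∧ p.2 + p.1.card ≤ M} =>
          Ideal.Quotient.mk (Ideal.span (gens k Δ M))
            (X 0 ^ p.1.2 * ∏ x ∈ p.1.1, X ((x : Fin (k+1)))))) := by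
  classical
  set W := Submodule.span ℤ (Set.range
        (fun p : {p : Finset ℕ × ℕ // p.1 ∈ Δ ∧ p.2 + p.1.card ≤ M} =>
          Ideal.Quotient.mk (Ideal.span (gens k Δ M))
            (X 0 ^ p.1.2 * ∏ x ∈ p.1.1, X ((x : Fin (k+1)))))) with hW
  suffices H : ∀ e : ℕ, ∀ d : Fin (k+1) →₀ ℕ, exc d = e →
      Ideal.Quotient.mk (Ideal.span (gens k Δ M)) (monomial d 1) ∈ W by
    exact H (exc d) d rfl
  intro e
  induction e using Nat.strong_induction_on with
  | _ e ih =>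
    intro d hde
    by_cases hcase : ∃ i : Fin (k+1), i ≠ 0 ∧ 2 ≤ d i
    · obtain ⟨i, hi, hd2⟩ := hcase
      rw [mk_monomial_eq Δ M d i hi hd2]
      apply Submodule.sum_mem
      intro j _
      apply Submodule.smul_mem
      have hpos := exc_pos d i hi hd2
      have hred := exc_red d i hi hd2 j
      exact ih (exc (d - Finsupp.single i 2 + Finsupp.single i 1 + Finsupp.single 0 (j+1)))
        (by omega) _ rfl
    · push_neg at hcase
      have hle : ∀ j : Fin (k+1), j ≠ 0 → d j ≤ 1 := fun j hj => by
        have := hcase j hj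
        omega
      by_cases hΔm : eset d ∈ Δ
      · by_cases hdeg : d 0 + (eset d).card ≤ M
        · rw [monomial_eq_prod_form d hle]
          exact Submodule.subset_span ⟨⟨(eset d, d 0), hΔm, hdeg⟩, rfl⟩
        · have hz : Ideal.Quotient.mk (Ideal.span (gens k Δ M)) (monomial d 1) = 0 := by
            rw [Ideal.Quotient.eq_zero_iff_mem]
            apply monomial_mem_of_deg
            have hsum := deg_eq d
            have hexc0 : exc d = 0 := by
              unfold exc
              apply Finset.sum_eq_zero
              intro j hj
              have := hle j (Finset.ne_of_mem_erase hj)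
              omega
            omega
          rw [hz]
          exact Submodule.zero_mem W
      · have hz : Ideal.Quotient.mk (Ideal.span (gens k Δ M)) (monomial d 1) = 0 := by
          rw [Ideal.Quotient.eq_zero_iff_mem, monomial_eq_prod_form d hle]
          apply Ideal.mul_mem_left
          apply Ideal.subset_span
          left; right
          exact ⟨eset d, eset_subset_Icc d, hΔm, rfl⟩
        rw [hz]
        exact Submodule.zero_mem W

end Stmt16

open Stmt16

/-- Theorem 3.1: for a generic sorted length vector `ℓ` with subgee set `Δ`,
largest singleton subgee `{k}` and maximal subgee size `s`, the quotient of
`K(N(ℓ)) = ℤ[α₁,…,α_k,β]/(αᵢβ + αᵢ²β + αᵢ², ∏_{i∈T}αᵢ for T not a subgee)`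
by all `(m-s+1)`-fold products of the generators is free abelian with basis
`{β^i ∏_{j∈S} α_j : S ∈ Δ, i + |S| ≤ m - s}`, where `m = n-3`.
Variables: `X 0 = β`, `X i = αᵢ` for `1 ≤ i ≤ k`. -/
theorem stmt_16 (n m k s : ℕ) (hn : 4 ≤ n) (hm : m = n - 3)
    (ℓ : ℕ → ℝ)
    (hpos : ∀ i, 1 ≤ i → i ≤ n → 0 < ℓ i)
    (hmono : ∀ i j, 1 ≤ i → i ≤ j → j ≤ n → ℓ i ≤ ℓ j)
    (hgen : ∀ S ⊆ Finset.Icc 1 n, ∑ i ∈ S, ℓ i ≠ ∑ i ∈ Finset.Icc 1 n \ S, ℓ i)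
    (Δ : Set (Finset ℕ))
    (hΔ : Δ = {S | S ⊆ Finset.Icc 1 (n - 1) ∧
        ∑ i ∈ insert n S, ℓ i < ∑ i ∈ Finset.Icc 1 n \ insert n S, ℓ i})
    (hempty : ∅ ∈ Δ)
    (hk1 : {k} ∈ Δ) (hk2 : ∀ i, ({i} : Finset ℕ) ∈ Δ → i ≤ k)
    (hs1 : ∃ S ∈ Δ, S.card = s) (hs2 : ∀ S ∈ Δ, S.card ≤ s)
    (I : Ideal (MvPolynomial (Fin (k + 1)) ℤ))
    (hI : I = Ideal.span
      ({f | ∃ i : Fin (k + 1), 1 ≤ (i : ℕ) ∧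
          f = X i * X 0 + X i ^ 2 * X 0 + X i ^ 2} ∪
       {f | ∃ T : Finset ℕ, T ⊆ Finset.Icc 1 k ∧ T ∉ Δ ∧
          f = ∏ i ∈ T, X (i : Fin (k + 1))} ∪
       {f | ∃ d : Fin (k + 1) → ℕ, (∑ i, d i) = m - s + 1 ∧ f = ∏ i, X i ^ d i})) :
    ∃ b : Module.Basis {p : Finset ℕ × ℕ // p.1 ∈ Δ ∧ p.2 + p.1.card ≤ m - s} ℤ
        (MvPolynomial (Fin (k + 1)) ℤ ⧸ I),
      ∀ p, b p = Ideal.Quotient.mk I (X 0) ^ p.1.2 *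
        ∏ i ∈ p.1.1, Ideal.Quotient.mk I (X (i : Fin (k + 1))) := by
  classical
  have hIg : I = Ideal.span (gens k Δ (m - s)) := by rw [hI]; rfl
  clear hI
  subst hIg
  -- Δ is downward closed
  have hdown : ∀ S ∈ Δ, ∀ T ⊆ S, T ∈ Δ := by
    intro S hS T hTS
    rw [hΔ] at hS ⊢
    obtain ⟨hSIcc, hSsum⟩ := hS
    refine ⟨hTS.trans hSIcc, ?_⟩
    have hposIcc : ∀ i ∈ Finset.Icc 1 n, (0:ℝ) ≤ ℓ i := fun i hi =>
      le_of_lt (hpos i (Finset.mem_Icc.1 hi).1 (Finset.mem_Icc.1 hi).2)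
    have hsubn : ∀ U : Finset ℕ, U ⊆ Finset.Icc 1 (n-1) →
        insert n U ⊆ Finset.Icc 1 n := by
      intro U hU
      apply Finset.insert_subset (Finset.mem_Icc.2 ⟨by omega, le_refl n⟩)
      exact hU.trans (Finset.Icc_subset_Icc (le_refl 1) (by omega))
    have h1 : ∑ i ∈ insert n T, ℓ i ≤ ∑ i ∈ insert n S, ℓ i :=
      Finset.sum_le_sum_of_subset_of_nonneg (Finset.insert_subset_insert _ hTS)
        (fun i hi _ => hposIcc i (hsubn S hSIcc hi))
    have h2 : ∑ i ∈ Finset.Icc 1 n \ insert n S, ℓ i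
        ≤ ∑ i ∈ Finset.Icc 1 n \ insert n T, ℓ i :=
      Finset.sum_le_sum_of_subset_of_nonneg
        (Finset.sdiff_subset_sdiff (Finset.Subset.refl _) (Finset.insert_subset_insert _ hTS))
        (fun i hi _ => hposIcc i (Finset.mem_sdiff.1 hi).1)
    linarith
  -- every subgee is contained in [1, k]
  have hΔIcc : ∀ S : Finset ℕ, S ∈ Δ → S ⊆ Finset.Icc 1 k := by
    intro S hS x hx
    have hx1 : ({x} : Finset ℕ) ∈ Δ := hdown S hS {x} (Finset.singleton_subset_iff.2 hx)
    have hxk := hk2 x hx1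
    have hx1n : 1 ≤ x := by
      rw [hΔ] at hS
      exact (Finset.mem_Icc.1 (hS.1 hx)).1
    exact Finset.mem_Icc.2 ⟨hx1n, hxk⟩
  set v : {p : Finset ℕ × ℕ // p.1 ∈ Δ ∧ p.2 + p.1.card ≤ m - s} →
      (MvPolynomial (Fin (k + 1)) ℤ ⧸ Ideal.span (gens k Δ (m - s))) := fun p =>
    Ideal.Quotient.mk (Ideal.span (gens k Δ (m - s))) (X 0) ^ p.1.2 *
      ∏ i ∈ p.1.1, Ideal.Quotient.mk (Ideal.span (gens k Δ (m - s)))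
        (X ((i : Fin (k + 1)))) with hv
  have hvmk : ∀ p, v p = Ideal.Quotient.mk (Ideal.span (gens k Δ (m - s)))
      (X 0 ^ p.1.2 * ∏ x ∈ p.1.1, X ((x : Fin (k + 1)))) := by
    intro p
    rw [hv, map_mul, map_pow, map_prod]
  -- linear independence
  have hli : LinearIndependent ℤ v := by
    rw [linearIndependent_iff]
    intro l hl
    set P : MvPolynomial (Fin (k+1)) ℤ :=
      ∑ p ∈ l.support, l p • (X 0 ^ p.1.2 * ∏ x ∈ p.1.1, X ((x : Fin (k+1)))) with hP
    have hmkP : Ideal.Quotient.mk (Ideal.span (gens k Δ (m - s))) P = 0 := by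
      rw [hP, map_sum, ← hl, Finsupp.linearCombination_apply, Finsupp.sum]
      apply Finset.sum_congr rfl
      intro p _
      rw [mk_zsmul, hvmk p]
    have hPmem : P ∈ Ideal.span (gens k Δ (m - s)) := Ideal.Quotient.eq_zero_iff_mem.1 hmkP
    ext q₀
    have hdown' : ∀ T : Finset ℕ, T ⊆ Finset.Icc 1 k → T ∉ Δ → ¬ T ⊆ q₀.1.1 :=
      fun T _ hTΔ hsub => hTΔ (hdown q₀.1.1 q₀.2.1 T hsub)
    have hlam := lam_eq_zero_of_mem Δ (m - s) q₀.1.1 q₀.1.2 q₀.2.2 hdown' hPmem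
    rw [hP, map_sum] at hlam
    have hsum : ∑ p ∈ l.support,
        (lam (m - s) q₀.1.1 q₀.1.2) (l p • (X 0 ^ p.1.2 * ∏ x ∈ p.1.1, X ((x : Fin (k+1)))))
        = l q₀ := by
      rw [Finset.sum_eq_single q₀]
      · rw [LinearMap.map_smul, lam_delta _ _ _ _ (hΔIcc _ q₀.2.1) _,
          if_pos ⟨rfl, rfl⟩, smul_eq_mul, mul_one]
      · intro p _ hpq
        rw [LinearMap.map_smul, lam_delta _ _ _ _ (hΔIcc _ p.2.1) _]
        have hne : ¬(p.1.1 = q₀.1.1 ∧ p.1.2 = q₀.1.2) := by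
          rintro ⟨h1, h2⟩
          exact hpq (Subtype.ext (Prod.ext h1 h2))
        rw [if_neg hne, smul_zero]
      · intro hq
        rw [Finsupp.notMem_support_iff.1 hq, zero_smul, map_zero]
    rw [hsum] at hlam
    simpa using hlam
  -- spanning
  have hspan : ⊤ ≤ Submodule.span ℤ (Set.range v) := by
    have key : ∀ d : Fin (k+1) →₀ ℕ,
        Ideal.Quotient.mk (Ideal.span (gens k Δ (m - s))) (monomial d 1)
          ∈ Submodule.span ℤ (Set.range v) := by
      intro d
      have h := span_range_v Δ (m - s) hΔIcc d
      refine Submodule.span_mono ?_ h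
      rintro y ⟨p, rfl⟩
      exact ⟨p, hvmk p⟩
    intro x _
    obtain ⟨p, rfl⟩ := Ideal.Quotient.mk_surjective x
    rw [← MvPolynomial.support_sum_monomial_coeff p, map_sum]
    apply Submodule.sum_mem
    intro d _
    have hmono2 : (monomial d (coeff d p) : MvPolynomial (Fin (k+1)) ℤ)
        = (coeff d p) • monomial d 1 := by
      rw [smul_monomial, smul_eq_mul, mul_one]
    rw [hmono2, mk_zsmul]
    exact Submodule.smul_mem _ _ (key d)
  exact ⟨Module.Basis.mk hli hspan, fun p => by rw [Module.Basis.mk_apply]⟩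
end

section
/- For every integer m ≥ 1, Σ_{j=0}^{⌊(m−1)/2⌋} C(2m−2−2j, m−1−2j) ≡ C(2m, m−1) (mod 2); in particular, if m is even then Σ_{j=0}^{⌊(m−1)/2⌋} C(2m−2−2j, m−1−2j) is even. (The left side is the coefficient of x^{m−1} in the power series (1−x²)^{−1}(1−x)^{−m}.) -/
lemma aux18 : ∀ (k a : ℕ),
    (∑ j ∈ Finset.range (k / 2 + 1), (a + (k - 2 * j)).choose (k - 2 * j))
      ≡ (a + 2 + k).choose k [MOD 2]
  | 0, a => by simp [Nat.ModEq]
  | 1, a => by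
      simp only [Nat.ModEq, Finset.range_one, Finset.sum_singleton]
      norm_num [Nat.choose_one_right]
      omega
  | (k + 2), a => by
      have ih := aux18 k a
      rw [show (k + 2) / 2 + 1 = (k / 2 + 1) + 1 from by omega, Finset.sum_range_succ']
      have hre : ∀ j, (a + (k + 2 - 2 * (j + 1))).choose (k + 2 - 2 * (j + 1))
          = (a + (k - 2 * j)).choose (k - 2 * j) := by
        intro j; congr 1 <;> omega
      simp only [hre]
      have h1 : (a + k + 3 + 1).choose (k + 1 + 1)
          = (a + k + 3).choose (k + 1) + (a + k + 3).choose (k + 1 + 1) :=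
        Nat.choose_succ_succ _ _
      have h2 : (a + k + 2 + 1).choose (k + 1)
          = (a + k + 2).choose k + (a + k + 2).choose (k + 1) :=
        Nat.choose_succ_succ _ _
      have h3 : (a + k + 2 + 1).choose (k + 1 + 1)
          = (a + k + 2).choose (k + 1) + (a + k + 2).choose (k + 1 + 1) :=
        Nat.choose_succ_succ _ _
      have e1 : a + k + 3 + 1 = a + 2 + (k + 2) := by ring
      have e2 : a + k + 2 + 1 = a + k + 3 := by ring
      have e3 : k + 1 + 1 = k + 2 := by ring
      have e4 : a + (k + 2 - 2 * 0) = a + k + 2 := by omega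
      have e5 : k + 2 - 2 * 0 = k + 2 := by omega
      have e6 : a + 2 + k = a + k + 2 := by ring
      rw [e1, e3] at h1
      rw [e2, e3] at h3
      rw [e2] at h2
      rw [e4, e5]
      rw [e6] at ih
      simp only [Nat.ModEq] at ih ⊢
      omega

/-- The congruence from Section 5: the coefficient of `x^(m-1)` in
`(1-x²)⁻¹(1-x)⁻ᵐ`, namely `∑_j C(2m-2-2j, m-1-2j)`, is congruent mod 2 to
`C(2m, m-1)`; in particular it is even when `m` is even. -/
theorem stmt_18 (m : ℕ) (hm : 1 ≤ m) :
    (∑ j ∈ Finset.range ((m - 1) / 2 + 1),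
        (2 * m - 2 - 2 * j).choose (m - 1 - 2 * j)) ≡ (2 * m).choose (m - 1) [MOD 2] ∧
      (Even m →
        Even (∑ j ∈ Finset.range ((m - 1) / 2 + 1),
          (2 * m - 2 - 2 * j).choose (m - 1 - 2 * j))) := by
  have key := aux18 (m - 1) (m - 1)
  have hsum : (∑ j ∈ Finset.range ((m - 1) / 2 + 1),
      (2 * m - 2 - 2 * j).choose (m - 1 - 2 * j))
      = ∑ j ∈ Finset.range ((m - 1) / 2 + 1),
        ((m - 1) + ((m - 1) - 2 * j)).choose ((m - 1) - 2 * j) := by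
    apply Finset.sum_congr rfl
    intro j hj
    simp only [Finset.mem_range] at hj
    congr 1 <;> omega
  have htop : (m - 1) + 2 + (m - 1) = 2 * m := by omega
  rw [htop] at key
  rw [hsum]
  refine ⟨key, fun hme => ?_⟩
  have hrec := Nat.choose_succ_right_eq (2 * m) (m - 1)
  rw [show m - 1 + 1 = m from by omega, show 2 * m - (m - 1) = m + 1 from by omega] at hrec
  have heven : Even ((2 * m).choose (m - 1)) := by
    have h1 : Even ((2 * m).choose m * m) := hme.mul_left _
    rw [hrec] at h1
    rcases Nat.even_mul.mp h1 with h | h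
    · exact h
    · exfalso; rw [Nat.even_iff] at h hme; omega
  simp only [Nat.ModEq] at key
  rw [Nat.even_iff] at heven ⊢
  omega
end
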